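/- arXiv:1410.4944 — 4 statements merged into one kernel-verified Lean document; each statement's English description precedes it below -/
import Mathlib

section
/- In the directed half-plane lattice first-passage percolation with i.i.d. nonnegative edge weights with non-atomic distribution and finite mean 1: for fixed even M, let m_k^{(M)} be the minimum over all directed top-to-bottom paths σ of length k inside the width-M directed cylinder C^l_{M,k} of the total weight λ(σ) = Σ_{e∈σ} ω(e). Then almost surely lim_{k→∞} m_k^{(M)}/k = 1. -/
open MeasureTheory ProbabilityTheory Filter
open scoped ENNReal NNReal

/-- Edges of the directed half-plane lattice `Ĥ`, indexed by their lower
endpoint `v` together with a Boolean which is `true` when the upper endpoint is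
`v + (1,1)` and `false` when it is `v + (-1,1)`; the edge points downwards. -/
abbrev DirHPEdge := (ℤ × ℤ) × Bool

/-- Total weight of the directed path which visits the vertex `(p j, j)` on
level `j` for `0 ≤ j ≤ k`, descending from level `k` to level `0`. -/
def dirWt (W : DirHPEdge → ℝ) (p : ℕ → ℤ) (k : ℕ) : ℝ :=
  ∑ j ∈ Finset.range k, W ((p j, (j : ℤ)), decide (p (j + 1) = p j + 1))

/-- The minimal weight `m_k^{(M)}` over all directed top-to-bottom paths of
length `k` inside the width-`M` cylinder `C^l_{M,k}` (vertices `(2i+j, j)`,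
`-M ≤ 2i ≤ M`, `0 ≤ j ≤ k`). -/
noncomputable def cylMin (W : DirHPEdge → ℝ) (M k : ℕ) : ℝ :=
  sInf {r : ℝ | ∃ p : ℕ → ℤ, Even (p 0) ∧
    (∀ j ≤ k, -(M : ℤ) ≤ p j - (j : ℤ) ∧ p j - (j : ℤ) ≤ (M : ℤ)) ∧
    (∀ j < k, p (j + 1) = p j + 1 ∨ p (j + 1) = p j - 1) ∧
    r = dirWt W p k}

set_option linter.unusedSectionVars false
set_option maxHeartbeats 1000000

namespace CylAux


/-- Canonical path determined by a start `a` and the set `T` of left-step times. -/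
def qp (a : ℤ) (T : Finset ℕ) (j : ℕ) : ℤ := a + j - 2 * ((T.filter (fun i => i < j)).card : ℤ)

lemma qp_zero (a : ℤ) (T : Finset ℕ) : qp a T 0 = a := by simp [qp]

lemma filter_lt_succ (T : Finset ℕ) (j : ℕ) :
    T.filter (fun i => i < j + 1) =
      if j ∈ T then insert j (T.filter (fun i => i < j)) else T.filter (fun i => i < j) := by
  split_ifs with hj
  · ext x
    simp only [Finset.mem_filter, Finset.mem_insert, Nat.lt_succ_iff_lt_or_eq]
    constructor
    · rintro ⟨hx, h | h⟩
      · exact Or.inr ⟨hx, h⟩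
      · exact Or.inl h
    · rintro (rfl | ⟨hx, h⟩)
      · exact ⟨hj, Or.inr rfl⟩
      · exact ⟨hx, Or.inl h⟩
  · ext x
    simp only [Finset.mem_filter, Nat.lt_succ_iff_lt_or_eq]
    constructor
    · rintro ⟨hx, h | rfl⟩
      · exact ⟨hx, h⟩
      · exact absurd hx hj
    · rintro ⟨hx, h⟩
      exact ⟨hx, Or.inl h⟩

lemma qp_succ_of_mem {T : Finset ℕ} {j : ℕ} (a : ℤ) (hj : j ∈ T) :
    qp a T (j + 1) = qp a T j - 1 := by
  have hnot : j ∉ T.filter (fun i => i < j) := by simp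
  simp only [qp, filter_lt_succ, if_pos hj, Finset.card_insert_of_notMem hnot]
  push_cast
  ring

lemma qp_succ_of_not_mem {T : Finset ℕ} {j : ℕ} (a : ℤ) (hj : j ∉ T) :
    qp a T (j + 1) = qp a T j + 1 := by
  simp only [qp, filter_lt_succ, if_neg hj]
  push_cast
  ring

variable {k : ℕ} {p : ℕ → ℤ}

/-- The set of left-step times of a path. -/
def lsteps (p : ℕ → ℤ) (k : ℕ) : Finset ℕ :=
  (Finset.range k).filter fun i => p (i + 1) = p i - 1

lemma eq_qp (hstep : ∀ j < k, p (j + 1) = p j + 1 ∨ p (j + 1) = p j - 1) :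
    ∀ j ≤ k, p j = qp (p 0) (lsteps p k) j := by
  intro j
  induction j with
  | zero => intro _; simp [qp]
  | succ j ih =>
    intro hj
    have hjk : j < k := Nat.lt_of_succ_le hj
    have ihj := ih hjk.le
    rcases hstep j hjk with h | h
    · have hnot : j ∉ lsteps p k := by
        simp only [lsteps, Finset.mem_filter, Finset.mem_range]
        rintro ⟨-, h'⟩
        omega
      rw [h, qp_succ_of_not_mem _ hnot, ← ihj]
    · have hmem : j ∈ lsteps p k := by
        simp only [lsteps, Finset.mem_filter, Finset.mem_range]
        exact ⟨hjk, h⟩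
      rw [h, qp_succ_of_mem _ hmem, ← ihj]

lemma dirWt_eq_qp (W : DirHPEdge → ℝ)
    (hstep : ∀ j < k, p (j + 1) = p j + 1 ∨ p (j + 1) = p j - 1) :
    dirWt W p k = dirWt W (qp (p 0) (lsteps p k)) k := by
  refine Finset.sum_congr rfl fun j hj => ?_
  have hjk := Finset.mem_range.1 hj
  rw [eq_qp hstep j hjk.le, eq_qp hstep (j + 1) hjk]

/-- Index set parametrizing all candidate paths. -/
noncomputable def idx (M k : ℕ) : Finset (ℤ × Finset ℕ) :=
  (Finset.Icc (-(M : ℤ)) M) ×ˢ ((Finset.range k).powerset.filter fun T => T.card ≤ M)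

lemma mem_idx {M : ℕ} (hbd : ∀ j ≤ k, -(M : ℤ) ≤ p j - (j : ℤ) ∧ p j - (j : ℤ) ≤ (M : ℤ))
    (hstep : ∀ j < k, p (j + 1) = p j + 1 ∨ p (j + 1) = p j - 1) :
    (p 0, lsteps p k) ∈ idx M k := by
  have h0 := hbd 0 (Nat.zero_le k)
  simp only [Nat.cast_zero, sub_zero] at h0
  have hsub : lsteps p k ⊆ Finset.range k := Finset.filter_subset _ _
  have hfil : (lsteps p k).filter (fun i => i < k) = lsteps p k :=
    Finset.filter_true_of_mem fun x hx => Finset.mem_range.1 (hsub hx)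
  have hk := hbd k le_rfl
  have hpk : p k = qp (p 0) (lsteps p k) k := eq_qp hstep k le_rfl
  rw [hpk] at hk
  simp only [qp, hfil] at hk
  have hcard : ((lsteps p k).card : ℤ) ≤ M := by omega
  simp only [idx, Finset.mem_product, Finset.mem_Icc, Finset.mem_filter, Finset.mem_powerset]
  exact ⟨⟨h0.1, h0.2⟩, hsub, by exact_mod_cast hcard⟩

lemma card_idx (M k : ℕ) : (idx M k).card ≤ ((2 * M + 1) * (M + 1)) * (k + 1) ^ M := by
  have h1 : (Finset.Icc (-(M : ℤ)) M).card = 2 * M + 1 := by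
    rw [Int.card_Icc]
    omega
  have h2 : ((Finset.range k).powerset.filter fun T => T.card ≤ M).card ≤ (M + 1) * (k + 1) ^ M := by
    have hsub : ((Finset.range k).powerset.filter fun T => T.card ≤ M) ⊆
        (Finset.range (M + 1)).biUnion fun i => (Finset.range k).powersetCard i := by
      intro T hT
      simp only [Finset.mem_filter, Finset.mem_powerset] at hT
      simp only [Finset.mem_biUnion, Finset.mem_range, Finset.mem_powersetCard]
      exact ⟨T.card, Nat.lt_succ_of_le hT.2, hT.1, rfl⟩
    calc ((Finset.range k).powerset.filter fun T => T.card ≤ M).card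
        ≤ ((Finset.range (M + 1)).biUnion fun i => (Finset.range k).powersetCard i).card :=
          Finset.card_le_card hsub
      _ ≤ ∑ i ∈ Finset.range (M + 1), ((Finset.range k).powersetCard i).card :=
          Finset.card_biUnion_le
      _ ≤ ∑ _i ∈ Finset.range (M + 1), (k + 1) ^ M := by
          refine Finset.sum_le_sum fun i hi => ?_
          rw [Finset.card_powersetCard, Finset.card_range]
          calc k.choose i ≤ k ^ i := Nat.choose_le_pow k i
            _ ≤ (k + 1) ^ i := Nat.pow_le_pow_left (Nat.le_succ k) i
            _ ≤ (k + 1) ^ M := Nat.pow_le_pow_right (Nat.succ_le_succ (Nat.zero_le k))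
                (Nat.lt_succ_iff.1 (Finset.mem_range.1 hi))
      _ = (M + 1) * (k + 1) ^ M := by rw [Finset.sum_const, Finset.card_range, smul_eq_mul]
  calc (idx M k).card = (2 * M + 1) * ((Finset.range k).powerset.filter fun T => T.card ≤ M).card := by
        rw [idx, Finset.card_product, h1]
    _ ≤ (2 * M + 1) * ((M + 1) * (k + 1) ^ M) := Nat.mul_le_mul_left _ h2
    _ = ((2 * M + 1) * (M + 1)) * (k + 1) ^ M := by ring



lemma exp_le_aux {t A x : ℝ} (ht : 0 < t) (hA : 0 < A) (hx : 0 ≤ x) :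
    Real.exp (-(t * x)) ≤ 1 - (1 - Real.exp (-(t * A))) / A * min x A := by
  rcases le_or_gt x A with h | h
  · rw [min_eq_left h]
    have hb0 : 0 ≤ x / A := div_nonneg hx hA.le
    have ha0 : 0 ≤ 1 - x / A := by
      rw [sub_nonneg]
      exact div_le_one_of_le₀ h hA.le
    have hcvx := convexOn_exp.2 (Set.mem_univ (0 : ℝ)) (Set.mem_univ (-(t * A)))
      ha0 hb0 (by ring)
    have h1 : (1 - x / A) • (0 : ℝ) + (x / A) • (-(t * A)) = -(t * x) := by
      simp only [smul_eq_mul]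
      field_simp
      ring
    rw [h1] at hcvx
    calc Real.exp (-(t * x)) ≤ (1 - x / A) • Real.exp 0 + (x / A) • Real.exp (-(t * A)) := hcvx
      _ = 1 - (1 - Real.exp (-(t * A))) / A * x := by
          rw [Real.exp_zero]
          simp only [smul_eq_mul]
          field_simp
          ring
  · rw [min_eq_right h.le]
    have h2 : 1 - (1 - Real.exp (-(t * A))) / A * A = Real.exp (-(t * A)) := by
      field_simp
      ring
    rw [h2]
    apply Real.exp_le_exp.2
    nlinarith

lemma exists_rate (μ : Measure ℝ) [IsProbabilityMeasure μ] (hsupp : μ (Set.Iio 0) = 0)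
    (hmean : ∫ x, x ∂μ = 1) {ε : ℝ} (hε : 0 < ε) (hε1 : ε ≤ 1) :
    ∃ t : ℝ, 0 < t ∧ Real.exp (t * (1 - ε)) * (∫ x, Real.exp (-(t * x)) ∂μ) < 1 := by
  have hae : ∀ᵐ x ∂μ, 0 ≤ x := by
    rw [ae_iff]
    convert hsupp using 2
    ext x
    simp [not_le]
  have hint_id : Integrable (fun x => x) μ := by
    by_contra h
    rw [integral_undef h] at hmean
    norm_num at hmean
  have hminint : ∀ A : ℝ, Integrable (fun x => min x A) μ := by
    intro A
    refine (hint_id.abs.add (integrable_const |A|)).mono'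
      ((measurable_id.min measurable_const).aestronglyMeasurable) (ae_of_all _ fun x => ?_)
    simp only [Pi.add_apply]
    rw [Real.norm_eq_abs]
    rcases le_total x A with h | h
    · rw [min_eq_left h]
      linarith [abs_nonneg A]
    · rw [min_eq_right h]
      linarith [abs_nonneg x]
  have htend : Tendsto (fun n : ℕ => ∫ x, min x (n : ℝ) ∂μ) atTop (nhds 1) := by
    rw [← hmean]
    apply integral_tendsto_of_tendsto_of_monotone (fun n => hminint n) hint_id
    · refine ae_of_all _ fun x n m hnm => ?_
      exact min_le_min le_rfl (by exact_mod_cast hnm)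
    · refine ae_of_all _ fun x => ?_
      refine tendsto_const_nhds.congr' ?_
      filter_upwards [eventually_ge_atTop ⌈x⌉₊] with n hn
      rw [min_eq_left]
      exact (Nat.le_ceil x).trans (by exact_mod_cast hn)
  obtain ⟨n, hn⟩ := (htend.eventually (eventually_gt_nhds (show 1 - ε / 4 < 1 by linarith))).exists
  set A : ℝ := max (n : ℝ) 1 with hAdef
  have hA : 0 < A := lt_of_lt_of_le one_pos (le_max_right _ _)
  have hFA : 1 - ε / 4 < ∫ x, min x A ∂μ := by
    refine hn.trans_le (integral_mono (hminint _) (hminint _) fun x => ?_)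
    exact min_le_min le_rfl (le_max_left _ _)
  set t : ℝ := ε / (4 * A) with htdef
  have ht : 0 < t := div_pos hε (by linarith)
  have htA : t * A = ε / 4 := by
    rw [htdef, div_mul_eq_mul_div, mul_div_mul_right _ _ hA.ne']
  refine ⟨t, ht, ?_⟩
  set c0 : ℝ := (1 - Real.exp (-(t * A))) / A with hc0def
  have hintexp : Integrable (fun x => Real.exp (-(t * x))) μ := by
    refine (integrable_const 1).mono'
      ((measurable_id.const_mul t).neg.exp.aestronglyMeasurable) ?_
    filter_upwards [hae] with x hx
    rw [Real.norm_eq_abs, abs_of_pos (Real.exp_pos _)]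
    exact Real.exp_le_one_iff.2 (by nlinarith)
  have hkey : ∫ x, Real.exp (-(t * x)) ∂μ ≤ 1 - c0 * ∫ x, min x A ∂μ := by
    have hmono : ∫ x, Real.exp (-(t * x)) ∂μ ≤ ∫ x, (1 - c0 * min x A) ∂μ := by
      refine integral_mono_ae hintexp ((integrable_const 1).sub ((hminint A).const_mul c0)) ?_
      filter_upwards [hae] with x hx
      exact exp_le_aux ht hA hx
    rwa [integral_sub (integrable_const 1) ((hminint A).const_mul c0), integral_const,
      probReal_univ, one_smul, integral_const_mul] at hmono
  -- c0 ≥ t (1 - ε/4)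
  have he2 : 1 - t * A ≤ Real.exp (-(t * A)) := by
    have := Real.add_one_le_exp (-(t * A))
    linarith
  have he1 : Real.exp (-(t * A)) * (t * A) ≤ 1 - Real.exp (-(t * A)) := by
    set s := t * A
    set E := Real.exp s with hE
    have hEpos : 0 < E := Real.exp_pos s
    have hs1 : s + 1 ≤ E := by
      have := Real.add_one_le_exp s
      linarith
    rw [Real.exp_neg]
    have hprod : E⁻¹ * (E - (s + 1)) = 1 - (E⁻¹ * s + E⁻¹) := by
      rw [mul_sub, inv_mul_cancel₀ hEpos.ne']
      ring
    have hnn : 0 ≤ E⁻¹ * (E - (s + 1)) :=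
      mul_nonneg (inv_nonneg.2 hEpos.le) (by linarith)
    rw [hprod] at hnn
    linarith
  have hc0 : t * (1 - ε / 4) ≤ c0 := by
    have hexpge : 1 - ε / 4 ≤ Real.exp (-(t * A)) := by
      rw [← htA]
      exact he2
    rw [hc0def, le_div_iff₀ hA]
    calc t * (1 - ε / 4) * A ≤ t * Real.exp (-(t * A)) * A := by
          have : t * (1 - ε / 4) ≤ t * Real.exp (-(t * A)) :=
            mul_le_mul_of_nonneg_left hexpge ht.le
          nlinarith
      _ = Real.exp (-(t * A)) * (t * A) := by ring
      _ ≤ 1 - Real.exp (-(t * A)) := he1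
  have hc0nn : 0 ≤ c0 := le_trans (by nlinarith) hc0
  have hFnn : (0 : ℝ) ≤ 1 - ε / 4 := by linarith
  have hmul : t * (1 - ε / 4) * (1 - ε / 4) ≤ c0 * ∫ x, min x A ∂μ :=
    mul_le_mul hc0 hFA.le hFnn hc0nn
  have hg : ∫ x, Real.exp (-(t * x)) ∂μ ≤ 1 - t * (1 - ε / 2) := by
    nlinarith [hkey, hmul, ht.le, sq_nonneg ε]
  have hlt : 1 - t * (1 - ε / 2) < Real.exp (-(t * (1 - ε))) := by
    have h3 := Real.add_one_le_exp (-(t * (1 - ε)))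
    have h4 : t * (1 - ε) < t * (1 - ε / 2) := by
      apply mul_lt_mul_of_pos_left (by linarith) ht
    linarith
  calc Real.exp (t * (1 - ε)) * ∫ x, Real.exp (-(t * x)) ∂μ
      ≤ Real.exp (t * (1 - ε)) * (1 - t * (1 - ε / 2)) :=
        mul_le_mul_of_nonneg_left hg (Real.exp_pos _).le
    _ < Real.exp (t * (1 - ε)) * Real.exp (-(t * (1 - ε))) :=
        (mul_lt_mul_iff_right₀ (Real.exp_pos _)).2 hlt
    _ = 1 := by rw [← Real.exp_add]; simp

lemma summable_aux {r : ℝ} (h0 : 0 ≤ r) (h1 : r < 1) (C M : ℕ) :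
    Summable (fun k : ℕ => ((C * (k + 1) ^ M : ℕ) : ℝ) * r ^ k) := by
  have hgeom : ∀ i : ℕ, Summable (fun k : ℕ => (k : ℝ) ^ i * r ^ k) := fun i =>
    summable_pow_mul_geometric_of_norm_lt_one i (by rwa [Real.norm_eq_abs, abs_of_nonneg h0])
  have h2 : Summable (fun k : ℕ =>
      ∑ i ∈ Finset.range (M + 1), (M.choose i : ℝ) * ((k : ℝ) ^ i * r ^ k)) :=
    summable_sum fun i _ => (hgeom i).mul_left _
  have h3 : Summable (fun k : ℕ => ((k : ℝ) + 1) ^ M * r ^ k) := by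
    refine h2.congr fun k => ?_
    rw [add_pow]
    rw [Finset.sum_mul]
    refine Finset.sum_congr rfl fun i _ => ?_
    rw [one_pow]
    ring
  exact (h3.mul_left (C : ℝ)).congr fun k => by push_cast; ring



lemma iIndepFun_precomp {Ω ι κ : Type*} [MeasurableSpace Ω] {P : Measure Ω}
    {f : ι → Ω → ℝ} (h : iIndepFun f P) {g : κ → ι}
    (hg : Function.Injective g) :
    iIndepFun (fun j => f (g j)) P := by
  classical
  rw [iIndepFun_iff_measure_inter_preimage_eq_mul] at h ⊢
  intro S sets hsets
  set sets' : ι → Set ℝ := fun i => ⋂ j ∈ S.filter (fun j => g j = i), sets j with hsets'def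
  have hSf : ∀ j ∈ S, S.filter (fun j' => g j' = g j) = {j} := by
    intro j hj
    ext j'
    simp only [Finset.mem_filter, Finset.mem_singleton]
    constructor
    · rintro ⟨_, hgj⟩; exact hg hgj
    · rintro rfl; exact ⟨hj, rfl⟩
  have hS : ∀ j ∈ S, sets' (g j) = sets j := by
    intro j hj
    rw [hsets'def]
    simp only [hSf j hj]
    simp
  have hmeas' : ∀ i ∈ S.image g, MeasurableSet (sets' i) := by
    intro i _
    refine MeasurableSet.biInter (S.filter (fun j => g j = i)).countable_toSet fun j hj => ?_
    exact hsets j (Finset.mem_of_mem_filter j hj)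
  have h1 := h (S.image g) hmeas'
  have hiInter : (⋂ i ∈ S.image g, f i ⁻¹' sets' i) = ⋂ j ∈ S, f (g j) ⁻¹' sets j := by
    ext ω
    simp only [Set.mem_iInter, Finset.mem_image]
    constructor
    · intro hω j hj
      have := hω (g j) ⟨j, hj, rfl⟩
      rwa [hS j hj] at this
    · rintro hω i ⟨j, hj, rfl⟩
      rw [hS j hj]
      exact hω j hj
  have hprod : ∏ i ∈ S.image g, P (f i ⁻¹' sets' i) = ∏ j ∈ S, P (f (g j) ⁻¹' sets j) := by
    rw [Finset.prod_image (fun x _ y _ hxy => hg hxy)]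
    exact Finset.prod_congr rfl fun j hj => by rw [hS j hj]
  rw [← hiInter, h1, hprod]

variable {Ω : Type*} [MeasureSpace Ω] [IsProbabilityMeasure (ℙ : Measure Ω)]
  {μ : Measure ℝ} [IsProbabilityMeasure μ]
  {W : DirHPEdge → Ω → ℝ}

lemma mgf_W (hmeas : ∀ e, Measurable (W e)) (hdist : ∀ e, Measure.map (W e) ℙ = μ)
    (e : DirHPEdge) (s : ℝ) : mgf (W e) ℙ s = ∫ x, Real.exp (s * x) ∂μ := by
  rw [← hdist e, mgf]
  have hsm : Measurable fun x : ℝ => Real.exp (s * x) := by fun_prop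
  exact (integral_map (hmeas e).aemeasurable hsm.aestronglyMeasurable).symm

lemma W_nonneg (hmeas : ∀ e, Measurable (W e)) (hdist : ∀ e, Measure.map (W e) ℙ = μ)
    (hsupp : μ (Set.Iio 0) = 0) (e : DirHPEdge) : ∀ᵐ ω ∂ℙ, 0 ≤ W e ω := by
  have h : ℙ (W e ⁻¹' Set.Iio 0) = 0 := by
    rw [← Measure.map_apply (hmeas e) measurableSet_Iio, hdist e]
    exact hsupp
  rw [ae_iff]
  convert h using 2
  ext ω
  simp [not_le]

/-- Chernoff bound for the weight of a fixed deterministic path. -/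
lemma chernoff (hmeas : ∀ e, Measurable (W e))
    (hindep : iIndepFun W ℙ)
    (hdist : ∀ e, Measure.map (W e) ℙ = μ) (hsupp : μ (Set.Iio 0) = 0)
    (q : ℕ → ℤ) (k : ℕ) {t : ℝ} (ht : 0 < t) (c : ℝ) :
    ℙ {ω | dirWt (fun e => W e ω) q k ≤ c} ≤
      ENNReal.ofReal (Real.exp (t * c) * (∫ x, Real.exp (-(t * x)) ∂μ) ^ k) := by
  set E : ℕ → DirHPEdge := fun j => ((q j, (j : ℤ)), decide (q (j + 1) = q j + 1)) with hEdef
  have hEinj : Function.Injective E := by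
    intro i j hij
    have := congrArg (fun e => e.1.2) hij
    simpa [hEdef] using this
  set Y : ℕ → Ω → ℝ := fun j => W (E j) with hYdef
  have hYindep : iIndepFun Y ℙ := iIndepFun_precomp hindep hEinj
  have hYmeas : ∀ j, Measurable (Y j) := fun j => hmeas _
  set X : Ω → ℝ := fun ω => ∑ j ∈ Finset.range k, Y j ω with hXdef
  have hXfun : X = ∑ j ∈ Finset.range k, Y j := by
    funext ω
    rw [Finset.sum_apply]
  have hXeq : ∀ ω, X ω = dirWt (fun e => W e ω) q k := fun ω => rfl
  have hXmeas : Measurable X := Finset.measurable_sum _ fun j _ => hYmeas j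
  have hXnn : ∀ᵐ ω ∂ℙ, 0 ≤ X ω := by
    have hball : ∀ᵐ ω ∂ℙ, ∀ j ∈ Finset.range k, 0 ≤ Y j ω :=
      (ae_ball_iff (Finset.range k).countable_toSet).2
        fun j _ => W_nonneg hmeas hdist hsupp (E j)
    filter_upwards [hball] with ω hω
    exact Finset.sum_nonneg hω
  have hint : Integrable (fun ω => Real.exp (-t * X ω)) ℙ := by
    refine (integrable_const 1).mono'
      ((hXmeas.const_mul (-t)).exp.aestronglyMeasurable) ?_
    filter_upwards [hXnn] with ω hω
    rw [Real.norm_eq_abs, abs_of_pos (Real.exp_pos _)]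
    exact Real.exp_le_one_iff.2 (by nlinarith)
  have hcher := measure_le_le_exp_mul_mgf (X := X) (μ := ℙ) c (neg_nonpos.2 ht.le) hint
  have hmgf : mgf X ℙ (-t) = (∫ x, Real.exp (-(t * x)) ∂μ) ^ k := by
    rw [hXfun, hYindep.mgf_sum hYmeas]
    have : ∀ j, mgf (Y j) ℙ (-t) = ∫ x, Real.exp (-(t * x)) ∂μ := by
      intro j
      rw [mgf_W hmeas hdist]
      congr 1
      ext x
      ring_nf
    rw [Finset.prod_congr rfl fun j _ => this j, Finset.prod_const, Finset.card_range]
  rw [hmgf, neg_neg] at hcher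
  have hseteq : {ω | dirWt (fun e => W e ω) q k ≤ c} = {ω | X ω ≤ c} := by
    ext ω
    rw [Set.mem_setOf_eq, Set.mem_setOf_eq, hXeq]
  rw [hseteq]
  calc ℙ {ω | X ω ≤ c} = ENNReal.ofReal ((ℙ {ω | X ω ≤ c}).toReal) := by
        rw [ENNReal.ofReal_toReal (measure_ne_top _ _)]
    _ ≤ ENNReal.ofReal (Real.exp (t * c) * (∫ x, Real.exp (-(t * x)) ∂μ) ^ k) :=
        ENNReal.ofReal_le_ofReal hcher


/-- Almost surely, eventually every admissible path in the width-`M` cylinder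
of height `k` has weight at least `(1 - ε) k`. -/
lemma lower_aux {Ω : Type*} [MeasureSpace Ω] [IsProbabilityMeasure (ℙ : Measure Ω)]
    {μ : Measure ℝ} [IsProbabilityMeasure μ]
    (hsupp : μ (Set.Iio 0) = 0) (hmean : ∫ x, x ∂μ = 1)
    {W : DirHPEdge → Ω → ℝ} (hmeas : ∀ e, Measurable (W e))
    (hindep : iIndepFun W ℙ)
    (hdist : ∀ e, Measure.map (W e) ℙ = μ)
    (M : ℕ) {ε : ℝ} (hε : 0 < ε) (hε1 : ε ≤ 1) :
    ∀ᵐ ω ∂ℙ, ∀ᶠ k in atTop, ∀ p : ℕ → ℤ,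
      (∀ j ≤ k, -(M : ℤ) ≤ p j - (j : ℤ) ∧ p j - (j : ℤ) ≤ (M : ℤ)) →
      (∀ j < k, p (j + 1) = p j + 1 ∨ p (j + 1) = p j - 1) →
      (1 - ε) * k ≤ dirWt (fun e => W e ω) p k := by
  obtain ⟨t, ht, hrlt⟩ := exists_rate μ hsupp hmean hε hε1
  set g : ℝ := ∫ x, Real.exp (-(t * x)) ∂μ with hgdef
  have hgnn : 0 ≤ g := integral_nonneg fun x => (Real.exp_pos _).le
  set r : ℝ := Real.exp (t * (1 - ε)) * g with hrdef
  have hr0 : 0 ≤ r := mul_nonneg (Real.exp_pos _).le hgnn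
  set bad : ℕ → Set Ω := fun k => ⋃ i ∈ idx M k,
    {ω | dirWt (fun e => W e ω) (qp i.1 i.2) k ≤ (1 - ε) * k} with hbaddef
  have hbadk : ∀ k, ℙ (bad k) ≤
      ((((2 * M + 1) * (M + 1)) * (k + 1) ^ M : ℕ) : ℝ≥0∞) * ENNReal.ofReal (r ^ k) := by
    intro k
    calc ℙ (bad k)
        ≤ ∑ i ∈ idx M k, ℙ {ω | dirWt (fun e => W e ω) (qp i.1 i.2) k ≤ (1 - ε) * k} :=
          measure_biUnion_finset_le _ _
      _ ≤ ∑ _i ∈ idx M k, ENNReal.ofReal (r ^ k) := by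
          refine Finset.sum_le_sum fun i _ => ?_
          refine (chernoff hmeas hindep hdist hsupp (qp i.1 i.2) k ht ((1 - ε) * k)).trans ?_
          apply ENNReal.ofReal_le_ofReal
          rw [hrdef, mul_pow, ← Real.exp_nat_mul]
          have heq : t * ((1 - ε) * (k : ℝ)) = (k : ℝ) * (t * (1 - ε)) := by ring
          rw [heq]
      _ = ((idx M k).card : ℝ≥0∞) * ENNReal.ofReal (r ^ k) := by
          rw [Finset.sum_const, nsmul_eq_mul]
      _ ≤ _ := by
          gcongr
          exact_mod_cast card_idx M k
  have hsum : (∑' k, ℙ (bad k)) ≠ ⊤ := by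
    have hsm : Summable (fun k : ℕ => ((((2 * M + 1) * (M + 1)) * (k + 1) ^ M : ℕ) : ℝ) * r ^ k) :=
      summable_aux hr0 hrlt ((2 * M + 1) * (M + 1)) M
    have hbound : ∀ k, ℙ (bad k) ≤
        ENNReal.ofReal (((((2 * M + 1) * (M + 1)) * (k + 1) ^ M : ℕ) : ℝ) * r ^ k) := by
      intro k
      refine (hbadk k).trans_eq ?_
      rw [ENNReal.ofReal_mul (by positivity), ENNReal.ofReal_natCast]
    refine ne_top_of_le_ne_top ?_ (ENNReal.tsum_le_tsum hbound)
    rw [← ENNReal.ofReal_tsum_of_nonneg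
      (fun k => mul_nonneg (by positivity) (pow_nonneg hr0 k)) hsm]
    exact ENNReal.ofReal_ne_top
  filter_upwards [ae_eventually_notMem hsum] with ω hω
  filter_upwards [hω] with k hk p hbd hstep
  by_contra hcon
  push_neg at hcon
  apply hk
  rw [hbaddef]
  refine Set.mem_iUnion₂.2 ⟨(p 0, lsteps p k), mem_idx hbd hstep, ?_⟩
  rw [Set.mem_setOf_eq]
  have := dirWt_eq_qp (fun e => W e ω) hstep
  rw [← this]
  exact hcon.le

end CylAux

open CylAux in
/-- Lemma 3.6: in directed half-plane first-passage percolation with i.i.d.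
nonnegative non-atomic edge weights of mean `1`, for every fixed even width `M`
the minimal cylinder passage time satisfies `m_k^{(M)} / k → 1` almost surely. -/
theorem cylinder_passage_time_limit
    {Ω : Type*} [MeasureSpace Ω] [IsProbabilityMeasure (ℙ : Measure Ω)]
    (μ : Measure ℝ) [IsProbabilityMeasure μ]
    (hatom : ∀ a : ℝ, μ {a} = 0)
    (hsupp : μ (Set.Iio 0) = 0)
    (hmean : ∫ t, t ∂μ = 1)
    (W : DirHPEdge → Ω → ℝ) (hmeas : ∀ e, Measurable (W e))
    (hindep : iIndepFun W ℙ)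
    (hdist : ∀ e, Measure.map (W e) ℙ = μ)
    (M : ℕ) (hM : Even M) (hMpos : 0 < M) :
    ∀ᵐ ω ∂ℙ, Tendsto (fun k : ℕ => cylMin (fun e => W e ω) M k / k)
      atTop (nhds 1) := by
  classical
  -- integrability of the weights
  have hint_id : Integrable (fun x : ℝ => x) μ := by
    by_contra h
    rw [integral_undef h] at hmean
    norm_num at hmean
  have hintW : ∀ e, Integrable (W e) ℙ := by
    intro e
    have h := integrable_map_measure (μ := ℙ) (f := W e) (g := fun x : ℝ => x)
      measurable_id.aestronglyMeasurable (hmeas e).aemeasurable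
    rw [hdist e] at h
    exact h.1 hint_id
  have hEW : ∀ e, ∫ ω, W e ω ∂ℙ = 1 := by
    intro e
    have h := integral_map (μ := ℙ) (φ := W e) (f := fun x : ℝ => x)
      (hmeas e).aemeasurable measurable_id.aestronglyMeasurable
    rw [hdist e, hmean] at h
    exact h.symm
  -- the diagonal path
  set X : ℕ → Ω → ℝ := fun j ω => W (((j : ℤ), (j : ℤ)), true) ω with hXdef
  have hdiagEq : ∀ (W' : DirHPEdge → ℝ) (k : ℕ),
      dirWt W' (fun j => (j : ℤ)) k = ∑ j ∈ Finset.range k, W' (((j : ℤ), (j : ℤ)), true) := by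
    intro W' k
    refine Finset.sum_congr rfl fun j _ => ?_
    have hq : ((j + 1 : ℕ) : ℤ) = (j : ℤ) + 1 := by push_cast; ring
    rw [decide_eq_true hq]
  have hpair : Pairwise (Function.onFun (IndepFun · · ℙ) X) := by
    intro i j hij
    refine hindep.indepFun fun h => hij ?_
    have h2 : ((i : ℤ)) = (j : ℤ) := by
      simpa using congrArg (fun e : DirHPEdge => e.1.1) h
    exact_mod_cast h2
  have hident : ∀ i, IdentDistrib (X i) (X 0) ℙ ℙ := fun i =>
    ⟨(hmeas _).aemeasurable, (hmeas _).aemeasurable, by rw [hdist, hdist]⟩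
  have hslln := strong_law_ae (μ := ℙ) X (hintW _) hpair hident
  rw [hEW] at hslln
  -- nonnegativity of all weights
  have hnn : ∀ᵐ ω ∂ℙ, ∀ e : DirHPEdge, 0 ≤ W e ω :=
    ae_all_iff.2 fun e => W_nonneg hmeas hdist hsupp e
  -- lower bound events
  have hlow : ∀ᵐ ω ∂ℙ, ∀ n : ℕ, ∀ᶠ k in atTop, ∀ p : ℕ → ℤ,
      (∀ j ≤ k, -(M : ℤ) ≤ p j - (j : ℤ) ∧ p j - (j : ℤ) ≤ (M : ℤ)) →
      (∀ j < k, p (j + 1) = p j + 1 ∨ p (j + 1) = p j - 1) →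
      (1 - 1 / (n + 1)) * k ≤ dirWt (fun e => W e ω) p k := by
    refine ae_all_iff.2 fun n => ?_
    refine lower_aux hsupp hmean hmeas hindep hdist M ?_ ?_
    · positivity
    · rw [div_le_one (by positivity)]
      linarith [Nat.cast_nonneg (α := ℝ) n]
  filter_upwards [hslln, hnn, hlow] with ω hUB hNN hLB
  have hUB' : Tendsto (fun k : ℕ => (∑ j ∈ Finset.range k, X j ω) / k) atTop (nhds 1) := by
    refine hUB.congr fun n => ?_
    rw [smul_eq_mul, inv_mul_eq_div]
  set S : ℕ → Set ℝ := fun k => {r : ℝ | ∃ p : ℕ → ℤ, Even (p 0) ∧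
    (∀ j ≤ k, -(M : ℤ) ≤ p j - (j : ℤ) ∧ p j - (j : ℤ) ≤ (M : ℤ)) ∧
    (∀ j < k, p (j + 1) = p j + 1 ∨ p (j + 1) = p j - 1) ∧
    r = dirWt (fun e => W e ω) p k} with hSdef
  have hcyl : ∀ k, cylMin (fun e => W e ω) M k = sInf (S k) := fun k => rfl
  have hdiagmem : ∀ k, dirWt (fun e => W e ω) (fun j => (j : ℤ)) k ∈ S k := by
    intro k
    refine ⟨fun j => (j : ℤ), by simp, fun j _ => ?_, fun j _ => Or.inl (by push_cast; ring), rfl⟩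
    constructor
    · simp
    · simp
  have hlb0 : ∀ k, ∀ r ∈ S k, (0 : ℝ) ≤ r := by
    rintro k r ⟨p, -, -, -, rfl⟩
    exact Finset.sum_nonneg fun j _ => hNN _
  have hbdd : ∀ k, BddBelow (S k) := fun k => ⟨0, fun r hr => hlb0 k r hr⟩
  have hub : ∀ k, cylMin (fun e => W e ω) M k ≤ ∑ j ∈ Finset.range k, X j ω := by
    intro k
    rw [hcyl]
    calc sInf (S k) ≤ dirWt (fun e => W e ω) (fun j => (j : ℤ)) k :=
          csInf_le (hbdd k) (hdiagmem k)
      _ = ∑ j ∈ Finset.range k, X j ω := hdiagEq _ k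
  rw [tendsto_order]
  constructor
  · intro a ha
    obtain ⟨n, hn⟩ := exists_nat_one_div_lt (show (0 : ℝ) < 1 - a by linarith)
    filter_upwards [hLB n, eventually_ge_atTop 1] with k hk hk1
    have hkpos : (0 : ℝ) < k := by exact_mod_cast hk1
    have hmk : (1 - 1 / (n + 1 : ℝ)) * k ≤ cylMin (fun e => W e ω) M k := by
      rw [hcyl]
      refine le_csInf ⟨_, hdiagmem k⟩ ?_
      rintro r ⟨p, -, hbd, hstep, rfl⟩
      exact hk p hbd hstep
    have : a < 1 - 1 / (n + 1 : ℝ) := by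
      push_cast at hn ⊢
      linarith
    refine this.trans_le ?_
    rw [le_div_iff₀ hkpos]
    exact hmk
  · intro a ha
    filter_upwards [hUB'.eventually (eventually_lt_nhds ha), eventually_ge_atTop 1]
      with k hk hk1
    have hkpos : (0 : ℝ) < k := by exact_mod_cast hk1
    refine lt_of_le_of_lt ?_ hk
    gcongr
    exact hub k
end

section
/- In the directed model on Ĝ = G × Z₊ (G a Cayley graph), the sequence m_n = E[d̂_ω((x,n), G)] of expected directed passage times from level n to the base is strictly increasing in n along any increment k for which a directed path from (x, n+k) to (x, n) exists; moreover, for every ε > 0 and every such k there exists K > 0, independent of n and x, with P[d̂_ω((x, n+k), G) − d̂_ω((x,n), G) < −K] ≤ ε. -/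
open MeasureTheory ProbabilityTheory
open scoped ENNReal

/-- Directed adjacency on `G × ℕ`: an edge points from `(y, n+1)` down to
`(x, n)` whenever `x` and `y` are neighbours in the Cayley graph of `(G, S)`. -/
def adjD {G : Type*} [Group G] (S : Finset G) (u v : G × ℕ) : Prop :=
  u.2 = v.2 + 1 ∧ u.1⁻¹ * v.1 ∈ S

/-- Weight of a directed path with `n` steps. -/
def wtD {G : Type*} (W : (G × ℕ) × (G × ℕ) → ℝ) (p : ℕ → G × ℕ) (n : ℕ) : ℝ :=
  ∑ j ∈ Finset.range n, W (p j, p (j + 1))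

/-- Directed passage time `d̂_ω(u, G)` from `u` to the base level `G × {0}`. -/
noncomputable def dD {G : Type*} [Group G] (S : Finset G)
    (W : (G × ℕ) × (G × ℕ) → ℝ) (u : G × ℕ) : ℝ :=
  sInf {r : ℝ | ∃ (n : ℕ) (p : ℕ → G × ℕ), p 0 = u ∧ (p n).2 = 0 ∧
    (∀ j < n, adjD S (p j) (p (j + 1))) ∧ r = wtD W p n}

namespace VG

/-! ### Combinatorial infrastructure -/

variable {G : Type*} [Group G]

/-- extend a tuple of `S`-steps to a `ℕ`-indexed step function -/
def stp {S : Finset G} {L : ℕ} (t : Fin L → {g : G // g ∈ S}) (j : ℕ) : G :=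
  if h : j < L then (t ⟨j, h⟩ : G) else 1

lemma stp_mem {S : Finset G} {L : ℕ} (t : Fin L → {g : G // g ∈ S}) {j : ℕ} (hj : j < L) :
    stp t j ∈ S := by simp only [stp, dif_pos hj]; exact (t ⟨j, hj⟩).2

def pos (x : G) (s : ℕ → G) (j : ℕ) : G := x * ((List.range j).map s).prod

def cpath (x : G) (L : ℕ) (s : ℕ → G) (j : ℕ) : G × ℕ := (pos x s j, L - j)

lemma pos_zero (x : G) (s : ℕ → G) : pos x s 0 = x := by simp [pos]

lemma pos_succ (x : G) (s : ℕ → G) (j : ℕ) :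
    pos x s (j + 1) = pos x s j * s j := by
  simp [pos, List.range_succ, mul_assoc]

lemma pos_congr (x : G) {s s' : ℕ → G} {L : ℕ} (h : ∀ i < L, s i = s' i)
    {j : ℕ} (hj : j ≤ L) : pos x s j = pos x s' j := by
  unfold pos
  congr 2
  refine List.map_congr_left fun i hi => h i ?_
  exact lt_of_lt_of_le (List.mem_range.1 hi) hj

lemma pos_add (x : G) (s : ℕ → G) (m j : ℕ) :
    pos x s (m + j) = pos (pos x s m) (fun i => s (m + i)) j := by
  induction j with
  | zero => simp [pos]
  | succ i ih => rw [← Nat.add_assoc, pos_succ, ih, pos_succ]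

/-- weight of the canonical path of step function `s` from `(x, L)` -/
def pwt (W : (G × ℕ) × (G × ℕ) → ℝ) (x : G) (L : ℕ) (s : ℕ → G) : ℝ :=
  wtD W (cpath x L s) L

lemma pwt_eq_sum (W : (G × ℕ) × (G × ℕ) → ℝ) (x : G) (L : ℕ) (s : ℕ → G) :
    pwt W x L s = ∑ j ∈ Finset.range L, W (cpath x L s j, cpath x L s (j + 1)) := rfl

lemma adjD_cpath (S : Finset G) (x : G) (L : ℕ) (s : ℕ → G)
    (hs : ∀ i < L, s i ∈ S) {j : ℕ} (hj : j < L) :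
    adjD S (cpath x L s j) (cpath x L s (j + 1)) := by
  constructor
  · simp only [cpath]; omega
  · simp only [cpath, pos_succ]
    have : (pos x s j)⁻¹ * (pos x s j * s j) = s j := by group
    rw [this]; exact hs j hj

/-- the set of path weights from `(x, L)` equals the range of `pwt` over tuples -/
lemma pathset_eq (S : Finset G) (W : (G × ℕ) × (G × ℕ) → ℝ) (x : G) (L : ℕ) :
    {r : ℝ | ∃ (n : ℕ) (p : ℕ → G × ℕ), p 0 = (x, L) ∧ (p n).2 = 0 ∧
      (∀ j < n, adjD S (p j) (p (j + 1))) ∧ r = wtD W p n} =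
    Set.range (fun t : Fin L → {g : G // g ∈ S} => pwt W x L (stp t)) := by
  ext r
  constructor
  · rintro ⟨n, p, h0, hend, hadj, rfl⟩
    have hlev : ∀ j ≤ n, (p j).2 + j = L := by
      intro j hj
      induction j with
      | zero => simp [h0]
      | succ i ih =>
        have h1 := (hadj i (by omega)).1
        have h2 := ih (by omega)
        omega
    have hnL : n = L := by have := hlev n le_rfl; omega
    subst hnL
    set t : Fin n → {g : G // g ∈ S} :=
      fun j => ⟨(p j).1⁻¹ * (p (j+1)).1, (hadj j j.2).2⟩ with ht
    refine ⟨t, ?_⟩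
    have hpos : ∀ j, j ≤ n → p j = cpath x n (stp t) j := by
      intro j hj
      induction j with
      | zero => rw [h0]; simp [cpath, pos_zero]
      | succ i ih =>
        have hi : i < n := by omega
        have hih := ih (by omega)
        have hstp : stp t i = (p i).1⁻¹ * (p (i+1)).1 := by
          simp [stp, hi, ht]
        have hfst : (p (i+1)).1 = pos x (stp t) (i+1) := by
          rw [pos_succ, hstp]
          have h1 : (p i).1 = pos x (stp t) i := congrArg Prod.fst hih
          rw [← h1]; group
        have hsnd : (p (i+1)).2 = n - (i+1) := by
          have := hlev (i+1) hj; omega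
        exact Prod.ext hfst hsnd
    symm
    show wtD W p n = (fun t : Fin n → {g : G // g ∈ S} => pwt W x n (stp t)) t
    simp only
    rw [pwt_eq_sum, wtD]
    refine Finset.sum_congr rfl fun j hj => ?_
    have hj' := Finset.mem_range.1 hj
    rw [hpos j (le_of_lt hj'), hpos (j+1) (by omega)]
  · rintro ⟨t, rfl⟩
    exact ⟨L, cpath x L (stp t), by simp [cpath, pos_zero], by simp [cpath],
      fun j hj => adjD_cpath S x L _ (fun i hi => stp_mem t hi) hj, rfl⟩

lemma dD_eq (S : Finset G) [Nonempty {g : G // g ∈ S}]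
    (W : (G × ℕ) × (G × ℕ) → ℝ) (x : G) (L : ℕ) :
    dD S W (x, L) = Finset.univ.inf' Finset.univ_nonempty
      (fun t : Fin L → {g : G // g ∈ S} => pwt W x L (stp t)) := by
  rw [dD, pathset_eq, Finset.inf'_eq_csInf_image, Finset.coe_univ, Set.image_univ]

/-- shift an edge up by `k` levels -/
def shiftE (k : ℕ) (e : (G × ℕ) × (G × ℕ)) : (G × ℕ) × (G × ℕ) :=
  ((e.1.1, e.1.2 + k), (e.2.1, e.2.2 + k))

lemma shiftE_adj {S : Finset G} {k : ℕ} {e : (G × ℕ) × (G × ℕ)} (h : adjD S e.1 e.2) :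
    adjD S (shiftE k e).1 (shiftE k e).2 := by
  obtain ⟨h1, h2⟩ := h
  exact ⟨by simp [shiftE]; omega, h2⟩

lemma shiftE_inj (k : ℕ) : Function.Injective (shiftE (G := G) k) := by
  rintro ⟨⟨a, b⟩, ⟨c, d⟩⟩ ⟨⟨a', b'⟩, ⟨c', d'⟩⟩ h
  simp only [shiftE, Prod.mk.injEq] at h
  obtain ⟨⟨rfl, h1⟩, rfl, h2⟩ := h
  refine Prod.ext (Prod.ext rfl ?_) (Prod.ext rfl ?_) <;> simp <;> omega

/-- the `j`-th edge of the canonical path of tuple `t` -/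
def cedge {S : Finset G} (x : G) (L : ℕ) (t : Fin L → {g : G // g ∈ S}) (j : Fin L) :
    (G × ℕ) × (G × ℕ) :=
  (cpath x L (stp t) j, cpath x L (stp t) (j + 1))

lemma cedge_adj {S : Finset G} (x : G) (L : ℕ) (t : Fin L → {g : G // g ∈ S}) (j : Fin L) :
    adjD S (cedge x L t j).1 (cedge x L t j).2 :=
  adjD_cpath S x L _ (fun i hi => stp_mem t hi) j.2

lemma pwt_eq_sum_cedge {S : Finset G} (W : (G × ℕ) × (G × ℕ) → ℝ) (x : G) (L : ℕ)
    (t : Fin L → {g : G // g ∈ S}) :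
    pwt W x L (stp t) = ∑ j : Fin L, W (cedge x L t j) := by
  rw [pwt_eq_sum, ← Fin.sum_univ_eq_sum_range]
  rfl

lemma sum_range_split (f : ℕ → ℝ) (m n : ℕ) :
    ∑ j ∈ Finset.range (m + n), f j
      = (∑ j ∈ Finset.range n, f j) + ∑ j ∈ Finset.range m, f (n + j) := by
  rw [Nat.add_comm m n, Finset.sum_range_add]

/-! ### Measure-theoretic infrastructure -/

lemma measurable_inf' {α : Type*} [MeasurableSpace α] {ι : Type*} (s : Finset ι)
    (hs : s.Nonempty) (f : ι → α → ℝ) (hf : ∀ i, Measurable (f i)) :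
    Measurable (fun ω => s.inf' hs (fun i => f i ω)) := by
  induction hs using Finset.Nonempty.cons_induction with
  | singleton a => simpa using hf a
  | cons a s h hs ih =>
    have heq : (fun ω => (Finset.cons a s h).inf' (Finset.cons_nonempty h) (fun i => f i ω))
        = fun ω => min (f a ω) (s.inf' hs (fun i => f i ω)) := by
      funext ω; rw [Finset.inf'_cons]
    rw [heq]
    exact (hf a).min ih

lemma le_sum_abs {ι : Type*} (s : Finset ι) (f : ι → ℝ) {i : ι} (hi : i ∈ s) :
    |f i| ≤ ∑ j ∈ s, |f j| :=
  Finset.single_le_sum (fun j _ => abs_nonneg (f j)) hi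

variable {Ω : Type*} [MeasureSpace Ω] [IsProbabilityMeasure (ℙ : Measure Ω)]

lemma integrable_inf' {ι : Type*} (s : Finset ι) (hs : s.Nonempty)
    (f : ι → Ω → ℝ) (hf : ∀ i, Measurable (f i)) (hfi : ∀ i, Integrable (f i) ℙ) :
    Integrable (fun ω => s.inf' hs (fun i => f i ω)) ℙ := by
  refine Integrable.mono' (g := fun ω => ∑ j ∈ s, |f j ω|)
    (integrable_finset_sum s (fun j _ => (hfi j).abs))
    (measurable_inf' s hs f hf).aestronglyMeasurable
    (Filter.Eventually.of_forall fun ω => ?_)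
  obtain ⟨i, hi, hieq⟩ := Finset.exists_mem_eq_inf' hs (fun i => f i ω)
  rw [Real.norm_eq_abs, hieq]
  exact le_sum_abs s (fun j => f j ω) hi

variable {S : Finset G} {μ : Measure ℝ} [IsProbabilityMeasure μ]
variable {WD : (G × ℕ) × (G × ℕ) → Ω → ℝ}

lemma map_vec_eq_pi (hWDmeas : ∀ e, Measurable (WD e))
    (hWDindep : iIndepFun
      (fun e : {e : (G × ℕ) × (G × ℕ) // adjD S e.1 e.2} => WD e.val) ℙ)
    (hWDdist : ∀ e : {e : (G × ℕ) × (G × ℕ) // adjD S e.1 e.2},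
      Measure.map (WD e.val) ℙ = μ)
    {N : ℕ} (η : Fin N → {e : (G × ℕ) × (G × ℕ) // adjD S e.1 e.2})
    (hη : Function.Injective η) :
    Measure.map (fun ω => fun i => WD (η i).val ω) ℙ
      = Measure.pi (fun _ : Fin N => μ) := by
  have hmeasvec : Measurable (fun ω => fun i : Fin N => WD (η i).val ω) :=
    measurable_pi_lambda _ (fun i => hWDmeas _)
  symm
  apply Measure.pi_eq
  intro s hs
  rw [Measure.map_apply hmeasvec (MeasurableSet.univ_pi hs)]
  have hpre : (fun ω => fun i : Fin N => WD (η i).val ω) ⁻¹' (Set.pi Set.univ s)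
      = ⋂ i ∈ (Finset.univ : Finset (Fin N)), WD (η i).val ⁻¹' (s i) := by
    ext ω; simp [Set.mem_pi]
  rw [hpre]
  classical
  set sets : {e : (G × ℕ) × (G × ℕ) // adjD S e.1 e.2} → Set ℝ :=
    Function.extend η s (fun _ => Set.univ) with hsets
  have hsetsη : ∀ i, sets (η i) = s i := fun i => hη.extend_apply _ _ i
  have h1 : (⋂ i ∈ (Finset.univ : Finset (Fin N)), WD (η i).val ⁻¹' (s i))
      = ⋂ e ∈ Finset.univ.image η, WD e.val ⁻¹' sets e := by
    rw [Finset.set_biInter_finset_image]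
    exact Set.iInter₂_congr (fun i _ => by rw [hsetsη])
  have h2 := hWDindep.measure_inter_preimage_eq_mul (Finset.univ.image η)
    (sets := sets) (fun e he => by
      obtain ⟨i, _, rfl⟩ := Finset.mem_image.1 he
      rw [hsetsη]; exact hs i)
  rw [h1, h2, Finset.prod_image (fun i _ j _ h => hη h)]
  refine Finset.prod_congr rfl fun i _ => ?_
  rw [hsetsη, ← hWDdist (η i), Measure.map_apply (hWDmeas _) (hs i)]

lemma integral_comp_eq (hWDmeas : ∀ e, Measurable (WD e))
    (hWDindep : iIndepFun
      (fun e : {e : (G × ℕ) × (G × ℕ) // adjD S e.1 e.2} => WD e.val) ℙ)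
    (hWDdist : ∀ e : {e : (G × ℕ) × (G × ℕ) // adjD S e.1 e.2},
      Measure.map (WD e.val) ℙ = μ)
    {N : ℕ} (F : (Fin N → ℝ) → ℝ) (hF : Measurable F)
    (η ζ : Fin N → {e : (G × ℕ) × (G × ℕ) // adjD S e.1 e.2})
    (hη : Function.Injective η) (hζ : Function.Injective ζ) :
    ∫ ω, F (fun i => WD (η i).val ω) ∂ℙ = ∫ ω, F (fun i => WD (ζ i).val ω) ∂ℙ := by
  have hmη : Measurable (fun ω => fun i : Fin N => WD (η i).val ω) :=
    measurable_pi_lambda _ (fun i => hWDmeas _)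
  have hmζ : Measurable (fun ω => fun i : Fin N => WD (ζ i).val ω) :=
    measurable_pi_lambda _ (fun i => hWDmeas _)
  have e1 := integral_map (f := F) hmη.aemeasurable
    (by rw [map_vec_eq_pi hWDmeas hWDindep hWDdist η hη]
        exact hF.aestronglyMeasurable)
  have e2 := integral_map (f := F) hmζ.aemeasurable
    (by rw [map_vec_eq_pi hWDmeas hWDindep hWDdist ζ hζ]
        exact hF.aestronglyMeasurable)
  rw [← e1, ← e2, map_vec_eq_pi hWDmeas hWDindep hWDdist η hη,
    map_vec_eq_pi hWDmeas hWDindep hWDdist ζ hζ]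

/-- vertical shift invariance of the expected passage time -/
lemma integral_dD_shift [Nonempty {g : G // g ∈ S}]
    (hWDmeas : ∀ e, Measurable (WD e))
    (hWDindep : iIndepFun
      (fun e : {e : (G × ℕ) × (G × ℕ) // adjD S e.1 e.2} => WD e.val) ℙ)
    (hWDdist : ∀ e : {e : (G × ℕ) × (G × ℕ) // adjD S e.1 e.2},
      Measure.map (WD e.val) ℙ = μ)
    (x : G) (L k : ℕ) :
    ∫ ω, dD S (fun e => WD (shiftE k e) ω) (x, L) ∂ℙ
      = ∫ ω, dD S (fun e => WD e ω) (x, L) ∂ℙ := by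
  classical
  set Eset : Finset ((G × ℕ) × (G × ℕ)) :=
    (Finset.univ : Finset ((Fin L → {g : G // g ∈ S}) × Fin L)).image
      (fun p => cedge x L p.1 p.2) with hEset
  set N := Eset.card with hN
  set eqv : {e // e ∈ Eset} ≃ Fin N := Eset.equivFin with heqv
  have hmem : ∀ (t : Fin L → {g : G // g ∈ S}) (j : Fin L), cedge x L t j ∈ Eset := by
    intro t j
    exact Finset.mem_image.2 ⟨(t, j), Finset.mem_univ _, rfl⟩
  have hadjE : ∀ e ∈ Eset, adjD S e.1 e.2 := by
    intro e he
    obtain ⟨⟨t, j⟩, _, rfl⟩ := Finset.mem_image.1 he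
    exact cedge_adj x L t j
  set η : Fin N → {e : (G × ℕ) × (G × ℕ) // adjD S e.1 e.2} :=
    fun i => ⟨(eqv.symm i).1, hadjE _ (eqv.symm i).2⟩ with hη
  have hηinj : Function.Injective η := by
    intro i j h
    have hv := congrArg Subtype.val h
    simp only [hη] at hv
    have : (eqv.symm i) = (eqv.symm j) := Subtype.ext hv
    simpa using congrArg eqv this
  set ζ : Fin N → {e : (G × ℕ) × (G × ℕ) // adjD S e.1 e.2} :=
    fun i => ⟨shiftE k (η i).val, shiftE_adj (η i).2⟩ with hζ
  have hζinj : Function.Injective ζ := by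
    intro i j h
    exact hηinj (Subtype.ext (shiftE_inj k (congrArg Subtype.val h)))
  set idx : (Fin L → {g : G // g ∈ S}) → Fin L → Fin N :=
    fun t j => eqv ⟨cedge x L t j, hmem t j⟩ with hidx
  have hkey : ∀ t j, (η (idx t j)).val = cedge x L t j := by
    intro t j
    simp only [hη, hidx, Equiv.symm_apply_apply]
  set F : (Fin N → ℝ) → ℝ :=
    fun v => Finset.univ.inf' Finset.univ_nonempty
      (fun t : Fin L → {g : G // g ∈ S} => ∑ j : Fin L, v (idx t j)) with hF
  have hFmeas : Measurable F := by
    refine measurable_inf' _ _ _ (fun t => ?_)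
    exact Finset.measurable_sum _ (fun j _ => measurable_pi_apply _)
  have hFη : ∀ ω, F (fun i => WD (η i).val ω) = dD S (fun e => WD e ω) (x, L) := by
    intro ω
    rw [dD_eq S (fun e => WD e ω) x L, hF]
    refine Finset.inf'_congr _ rfl (fun t _ => ?_)
    rw [pwt_eq_sum_cedge]
    refine Finset.sum_congr rfl (fun j _ => ?_)
    show WD (η (idx t j)).val ω = WD (cedge x L t j) ω
    rw [hkey]
  have hFζ : ∀ ω, F (fun i => WD (ζ i).val ω)
      = dD S (fun e => WD (shiftE k e) ω) (x, L) := by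
    intro ω
    rw [dD_eq S (fun e => WD (shiftE k e) ω) x L, hF]
    refine Finset.inf'_congr _ rfl (fun t _ => ?_)
    rw [pwt_eq_sum_cedge]
    refine Finset.sum_congr rfl (fun j _ => ?_)
    show WD (ζ (idx t j)).val ω = WD (shiftE k (cedge x L t j)) ω
    rw [hζ]
    simp only
    rw [hkey]
  calc ∫ ω, dD S (fun e => WD (shiftE k e) ω) (x, L) ∂ℙ
      = ∫ ω, F (fun i => WD (ζ i).val ω) ∂ℙ := by
        refine integral_congr_ae (Filter.Eventually.of_forall fun ω => ?_)
        exact (hFζ ω).symm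
    _ = ∫ ω, F (fun i => WD (η i).val ω) ∂ℙ :=
        (integral_comp_eq hWDmeas hWDindep hWDdist F hFmeas η ζ hηinj hζinj).symm
    _ = ∫ ω, dD S (fun e => WD e ω) (x, L) ∂ℙ := by
        refine integral_congr_ae (Filter.Eventually.of_forall fun ω => ?_)
        exact hFη ω


/-! ### Per-edge facts -/

lemma integrable_WD_edge (hWDmeas : ∀ e, Measurable (WD e))
    (hWDdist : ∀ e : {e : (G × ℕ) × (G × ℕ) // adjD S e.1 e.2},
      Measure.map (WD e.val) ℙ = μ)
    (hmean : Integrable id μ) {e : (G × ℕ) × (G × ℕ)} (he : adjD S e.1 e.2) :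
    Integrable (WD e) ℙ := by
  have h : Integrable id (Measure.map (WD e) ℙ) := by
    rw [hWDdist ⟨e, he⟩]; exact hmean
  exact (integrable_map_measure aestronglyMeasurable_id
    (hWDmeas e).aemeasurable).mp h

lemma integral_WD_edge (hWDmeas : ∀ e, Measurable (WD e))
    (hWDdist : ∀ e : {e : (G × ℕ) × (G × ℕ) // adjD S e.1 e.2},
      Measure.map (WD e.val) ℙ = μ)
    {e : (G × ℕ) × (G × ℕ)} (he : adjD S e.1 e.2) :
    ∫ ω, WD e ω ∂ℙ = ∫ x, x ∂μ := by
  have h := integral_map (μ := ℙ) (φ := WD e) (f := fun x : ℝ => x)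
    (hWDmeas e).aemeasurable aestronglyMeasurable_id
  rw [hWDdist ⟨e, he⟩] at h
  exact h.symm

lemma WD_nonneg_ae (hWDmeas : ∀ e, Measurable (WD e))
    (hWDdist : ∀ e : {e : (G × ℕ) × (G × ℕ) // adjD S e.1 e.2},
      Measure.map (WD e.val) ℙ = μ)
    (hsupp : μ (Set.Iio 0) = 0) {e : (G × ℕ) × (G × ℕ)} (he : adjD S e.1 e.2) :
    ∀ᵐ ω ∂ℙ, 0 ≤ WD e ω := by
  rw [ae_iff]
  have h : {ω | ¬ 0 ≤ WD e ω} = WD e ⁻¹' Set.Iio 0 := by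
    ext ω; simp [not_le]
  rw [h, ← Measure.map_apply (hWDmeas e) measurableSet_Iio, hWDdist ⟨e, he⟩]
  exact hsupp

lemma WD_pos_ae (hWDmeas : ∀ e, Measurable (WD e))
    (hWDdist : ∀ e : {e : (G × ℕ) × (G × ℕ) // adjD S e.1 e.2},
      Measure.map (WD e.val) ℙ = μ)
    (hsupp : μ (Set.Iio 0) = 0) (hatom : ∀ a : ℝ, μ {a} = 0)
    {e : (G × ℕ) × (G × ℕ)} (he : adjD S e.1 e.2) :
    ∀ᵐ ω ∂ℙ, 0 < WD e ω := by
  rw [ae_iff]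
  have h : {ω | ¬ 0 < WD e ω} = WD e ⁻¹' Set.Iic 0 := by
    ext ω; simp [not_lt]
  have hIic : μ (Set.Iic (0:ℝ)) = 0 := by
    have hsub : Set.Iic (0:ℝ) ⊆ Set.Iio 0 ∪ {0} := by
      intro y hy
      rcases lt_or_eq_of_le (Set.mem_Iic.1 hy) with h' | h'
      · exact Or.inl h'
      · exact Or.inr (by simp [h'])
    exact measure_mono_null hsub (measure_union_null hsupp (hatom 0))
  rw [h, ← Measure.map_apply (hWDmeas e) measurableSet_Iic, hWDdist ⟨e, he⟩]
  exact hIic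

/-! ### Measurability and integrability of the passage times -/

lemma measurable_pwt_comp (W2 : (G × ℕ) × (G × ℕ) → Ω → ℝ)
    (hW2 : ∀ e, Measurable (W2 e)) (x : G) (L : ℕ) (s : ℕ → G) :
    Measurable (fun ω => pwt (fun e => W2 e ω) x L s) := by
  have h : (fun ω => pwt (fun e => W2 e ω) x L s)
      = fun ω => ∑ j ∈ Finset.range L, W2 (cpath x L s j, cpath x L s (j + 1)) ω :=
    funext fun ω => pwt_eq_sum _ x L s
  rw [h]
  exact Finset.measurable_sum _ (fun j _ => hW2 _)

lemma integrable_pwt_comp (W2 : (G × ℕ) × (G × ℕ) → Ω → ℝ)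
    (hW2int : ∀ e, adjD S e.1 e.2 → Integrable (W2 e) ℙ)
    (x : G) (L : ℕ) (s : ℕ → G) (hs : ∀ i < L, s i ∈ S) :
    Integrable (fun ω => pwt (fun e => W2 e ω) x L s) ℙ := by
  have h : (fun ω => pwt (fun e => W2 e ω) x L s)
      = fun ω => ∑ j ∈ Finset.range L, W2 (cpath x L s j, cpath x L s (j + 1)) ω :=
    funext fun ω => pwt_eq_sum _ x L s
  rw [h]
  exact integrable_finset_sum _ (fun j hj =>
    hW2int _ (adjD_cpath S x L s hs (Finset.mem_range.1 hj)))

lemma measurable_dD_comp [Nonempty {g : G // g ∈ S}]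
    (W2 : (G × ℕ) × (G × ℕ) → Ω → ℝ) (hW2 : ∀ e, Measurable (W2 e)) (x : G) (L : ℕ) :
    Measurable (fun ω => dD S (fun e => W2 e ω) (x, L)) := by
  have h : (fun ω => dD S (fun e => W2 e ω) (x, L))
      = fun ω => Finset.univ.inf' Finset.univ_nonempty
          (fun t : Fin L → {g : G // g ∈ S} => pwt (fun e => W2 e ω) x L (stp t)) :=
    funext fun ω => dD_eq S _ x L
  rw [h]
  exact measurable_inf' _ _ _ (fun t => measurable_pwt_comp W2 hW2 x L (stp t))

lemma integrable_dD_comp [Nonempty {g : G // g ∈ S}]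
    (W2 : (G × ℕ) × (G × ℕ) → Ω → ℝ) (hW2 : ∀ e, Measurable (W2 e))
    (hW2int : ∀ e, adjD S e.1 e.2 → Integrable (W2 e) ℙ) (x : G) (L : ℕ) :
    Integrable (fun ω => dD S (fun e => W2 e ω) (x, L)) ℙ := by
  have h : (fun ω => dD S (fun e => W2 e ω) (x, L))
      = fun ω => Finset.univ.inf' Finset.univ_nonempty
          (fun t : Fin L → {g : G // g ∈ S} => pwt (fun e => W2 e ω) x L (stp t)) :=
    funext fun ω => dD_eq S _ x L
  rw [h]
  exact integrable_inf' _ _ _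
    (fun t => measurable_pwt_comp W2 hW2 x L (stp t))
    (fun t => integrable_pwt_comp W2 hW2int x L (stp t) (fun i hi => stp_mem t hi))


/-! ### Part A: strict monotonicity of expected passage times -/

lemma dD_expected_lt [Nonempty {g : G // g ∈ S}]
    (hWDmeas : ∀ e, Measurable (WD e))
    (hWDindep : iIndepFun
      (fun e : {e : (G × ℕ) × (G × ℕ) // adjD S e.1 e.2} => WD e.val) ℙ)
    (hWDdist : ∀ e : {e : (G × ℕ) × (G × ℕ) // adjD S e.1 e.2},
      Measure.map (WD e.val) ℙ = μ)
    (hatom : ∀ a : ℝ, μ {a} = 0) (hsupp : μ (Set.Iio 0) = 0)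
    (hmean : Integrable id μ)
    (x : G) (n k : ℕ) (hk : 0 < k) :
    ∫ ω, dD S (fun e => WD e ω) (x, n) ∂ℙ
      < ∫ ω, dD S (fun e => WD e ω) (x, n + k) ∂ℙ := by
  classical
  have hint : ∀ e, adjD S e.1 e.2 → Integrable (WD e) ℙ :=
    fun e he => integrable_WD_edge hWDmeas hWDdist hmean he
  have hintS : ∀ e, adjD S e.1 e.2 → Integrable (fun ω => WD (shiftE k e) ω) ℙ :=
    fun e he => hint _ (shiftE_adj he)
  -- the shifted passage time
  set A : Ω → ℝ := fun ω => dD S (fun e => WD (shiftE k e) ω) (x, n) with hA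
  -- the minimum over all length-k tails
  set low : ((Fin n → {g : G // g ∈ S}) × (Fin k → {g : G // g ∈ S})) → Ω → ℝ :=
    fun p ω => pwt (fun e => WD e ω) (pos x (stp p.1) n) k (stp p.2) with hlow
  set tau : Ω → ℝ := fun ω => Finset.univ.inf' Finset.univ_nonempty
    (fun p => low p ω) with htau
  -- pointwise bound
  have hpoint : ∀ ω, A ω + tau ω ≤ dD S (fun e => WD e ω) (x, n + k) := by
    intro ω
    rw [dD_eq S (fun e => WD e ω) x (n + k)]
    refine Finset.le_inf' _ _ (fun u _ => ?_)
    set t0 : Fin n → {g : G // g ∈ S} :=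
      fun j => u (Fin.castLE (Nat.le_add_right n k) j) with ht0
    set v0 : Fin k → {g : G // g ∈ S} := fun j => u ⟨n + (j : ℕ), by omega⟩ with hv0
    have hagree : ∀ i < n, stp u i = stp t0 i := by
      intro i hi
      simp only [stp, dif_pos hi, dif_pos (show i < n + k by omega), ht0]
      rfl
    have hposeq : ∀ j ≤ n, pos x (stp u) j = pos x (stp t0) j :=
      fun j hj => pos_congr x hagree hj
    -- split the weight
    rw [pwt_eq_sum, Finset.sum_range_add]
    have h1 : ∑ j ∈ Finset.range n,
        (fun e => WD e ω) (cpath x (n + k) (stp u) j, cpath x (n + k) (stp u) (j + 1))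
        = pwt (fun e => WD (shiftE k e) ω) x n (stp t0) := by
      rw [pwt_eq_sum]
      refine Finset.sum_congr rfl (fun j hj => ?_)
      have hjn := Finset.mem_range.1 hj
      have hedge : (cpath x (n + k) (stp u) j, cpath x (n + k) (stp u) (j + 1))
          = shiftE k (cpath x n (stp t0) j, cpath x n (stp t0) (j + 1)) := by
        refine Prod.ext (Prod.ext ?_ ?_) (Prod.ext ?_ ?_)
        · exact hposeq j (by omega)
        · show n + k - j = (n - j) + k; omega
        · exact hposeq (j + 1) (by omega)
        · show n + k - (j + 1) = (n - (j + 1)) + k; omega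
      rw [hedge]
    have h2 : ∑ j ∈ Finset.range k,
        (fun e => WD e ω) (cpath x (n + k) (stp u) (n + j), cpath x (n + k) (stp u) (n + j + 1))
        = low (t0, v0) ω := by
      rw [hlow]
      simp only
      rw [pwt_eq_sum]
      refine Finset.sum_congr rfl (fun j hj => ?_)
      have hjk := Finset.mem_range.1 hj
      have hstep : ∀ i < k, stp u (n + i) = stp v0 i := by
        intro i hi
        simp only [stp, dif_pos hi, dif_pos (show n + i < n + k by omega), hv0]
      have hcp : ∀ m, m ≤ k →
          cpath x (n + k) (stp u) (n + m) = cpath (pos x (stp t0) n) k (stp v0) m := by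
        intro m hm
        refine Prod.ext ?_ ?_
        · show pos x (stp u) (n + m) = pos (pos x (stp t0) n) (stp v0) m
          rw [pos_add, hposeq n le_rfl]
          exact pos_congr _ hstep hm
        · show n + k - (n + m) = k - m; omega
      rw [hcp j (by omega)]
      have : n + j + 1 = n + (j + 1) := by omega
      rw [this, hcp (j + 1) (by omega)]
    rw [h1, h2]
    have hA_le : A ω ≤ pwt (fun e => WD (shiftE k e) ω) x n (stp t0) := by
      rw [hA]
      simp only
      rw [dD_eq S (fun e => WD (shiftE k e) ω) x n]
      exact Finset.inf'_le _ (Finset.mem_univ t0)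
    have htau_le : tau ω ≤ low (t0, v0) ω := by
      rw [htau]
      exact Finset.inf'_le _ (Finset.mem_univ (t0, v0))
    linarith
  -- integrability
  have hmeas_low : ∀ p, Measurable (low p) :=
    fun p => measurable_pwt_comp WD hWDmeas _ k (stp p.2)
  have hint_low : ∀ p, Integrable (low p) ℙ :=
    fun p => integrable_pwt_comp WD hint _ k (stp p.2) (fun i hi => stp_mem p.2 hi)
  have htau_meas : Measurable tau := measurable_inf' _ _ _ hmeas_low
  have htau_int : Integrable tau ℙ := integrable_inf' _ _ _ hmeas_low hint_low
  have hA_int : Integrable A ℙ :=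
    integrable_dD_comp (fun e => WD (shiftE k e)) (fun e => hWDmeas _) hintS x n
  have hfull_int : Integrable (fun ω => dD S (fun e => WD e ω) (x, n + k)) ℙ :=
    integrable_dD_comp WD hWDmeas hint x (n + k)
  -- a.e. positivity of tau
  have hlow_pos : ∀ p, ∀ᵐ ω ∂ℙ, 0 < low p ω := by
    intro p
    have hterm : ∀ᵐ ω ∂ℙ, ∀ j : Fin k, 0 < WD (cpath (pos x (stp p.1) n) k (stp p.2) (j : ℕ),
        cpath (pos x (stp p.1) n) k (stp p.2) ((j : ℕ) + 1)) ω :=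
      ae_all_iff.2 (fun j => WD_pos_ae hWDmeas hWDdist hsupp hatom
        (adjD_cpath S _ k (stp p.2) (fun i hi => stp_mem p.2 hi) j.2))
    refine hterm.mono (fun ω h => ?_)
    rw [hlow]
    simp only
    rw [pwt_eq_sum]
    refine Finset.sum_pos (fun j hj => ?_) (by simp [Finset.nonempty_range_iff]; omega)
    exact h ⟨j, Finset.mem_range.1 hj⟩
  have htau_pos_ae : ∀ᵐ ω ∂ℙ, 0 < tau ω := by
    refine (ae_all_iff.2 hlow_pos).mono (fun ω h => ?_)
    obtain ⟨p, _, hp⟩ := Finset.exists_mem_eq_inf' (Finset.univ_nonempty) (fun p => low p ω)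
    rw [htau]
    simp only
    rw [hp]
    exact h p
  have htau_pos : 0 < ∫ ω, tau ω ∂ℙ := by
    rw [integral_pos_iff_support_of_nonneg_ae (htau_pos_ae.mono fun ω h => le_of_lt h) htau_int]
    have hnull : ℙ {ω | ¬ 0 < tau ω} = 0 := ae_iff.1 htau_pos_ae
    have hsub : Set.univ ⊆ {ω | ¬ 0 < tau ω} ∪ Function.support tau := by
      intro ω _
      by_cases h : 0 < tau ω
      · exact Or.inr (ne_of_gt h)
      · exact Or.inl h
    have h1 : (1 : ℝ≥0∞) ≤ ℙ (Function.support tau) := by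
      calc (1 : ℝ≥0∞) = ℙ Set.univ := (measure_univ).symm
        _ ≤ ℙ ({ω | ¬ 0 < tau ω} ∪ Function.support tau) := measure_mono hsub
        _ ≤ ℙ {ω | ¬ 0 < tau ω} + ℙ (Function.support tau) := measure_union_le _ _
        _ = ℙ (Function.support tau) := by rw [hnull, zero_add]
    exact lt_of_lt_of_le (by norm_num) h1
  -- conclude
  have hEA : ∫ ω, A ω ∂ℙ = ∫ ω, dD S (fun e => WD e ω) (x, n) ∂ℙ :=
    integral_dD_shift hWDmeas hWDindep hWDdist x n k
  calc ∫ ω, dD S (fun e => WD e ω) (x, n) ∂ℙ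
      = ∫ ω, A ω ∂ℙ := hEA.symm
    _ < ∫ ω, A ω ∂ℙ + ∫ ω, tau ω ∂ℙ := by linarith
    _ = ∫ ω, (A ω + tau ω) ∂ℙ := (integral_add hA_int htau_int).symm
    _ ≤ ∫ ω, dD S (fun e => WD e ω) (x, n + k) ∂ℙ :=
        integral_mono (hA_int.add htau_int) hfull_int hpoint


/-! ### Part B: the tail bound -/

lemma dD_tail_bound [Nonempty {g : G // g ∈ S}]
    (hWDmeas : ∀ e, Measurable (WD e))
    (hWDdist : ∀ e : {e : (G × ℕ) × (G × ℕ) // adjD S e.1 e.2},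
      Measure.map (WD e.val) ℙ = μ)
    (hsupp : μ (Set.Iio 0) = 0) (hmean : Integrable id μ)
    (x : G) (n k : ℕ) (hk : 0 < k)
    (q : ℕ → G) (hq0 : q 0 = x) (hqk : q k = x)
    (hqs : ∀ j < k, (q j)⁻¹ * q (j + 1) ∈ S)
    (hmono : ∫ ω, dD S (fun e => WD e ω) (x, n) ∂ℙ
      ≤ ∫ ω, dD S (fun e => WD e ω) (x, n + k) ∂ℙ)
    (K : ℝ) (hK : 0 < K) :
    ℙ {ω | dD S (fun e => WD e ω) (x, n + k) - dD S (fun e => WD e ω) (x, n) < -K}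
      ≤ ENNReal.ofReal ((k * ∫ y, y ∂μ) / K) := by
  classical
  have hint : ∀ e, adjD S e.1 e.2 → Integrable (WD e) ℙ :=
    fun e he => integrable_WD_edge hWDmeas hWDdist hmean he
  -- the lifted closed walk edges
  set ledge : ℕ → (G × ℕ) × (G × ℕ) :=
    fun j => ((q j, n + k - j), (q (j + 1), n + k - (j + 1))) with hledge
  have hladj : ∀ j < k, adjD S (ledge j).1 (ledge j).2 := by
    intro j hj
    constructor
    · show n + k - j = n + k - (j + 1) + 1; omega
    · exact hqs j hj
  set lam : Ω → ℝ := fun ω => ∑ j ∈ Finset.range k, WD (ledge j) ω with hlam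
  -- the deterministic upper bound
  have hdet : ∀ ω, dD S (fun e => WD e ω) (x, n + k) ≤ lam ω + dD S (fun e => WD e ω) (x, n) := by
    intro ω
    rw [dD_eq S (fun e => WD e ω) x (n + k), dD_eq S (fun e => WD e ω) x n]
    obtain ⟨t, _, ht⟩ := Finset.exists_mem_eq_inf' (Finset.univ_nonempty)
      (fun t : Fin n → {g : G // g ∈ S} => pwt (fun e => WD e ω) x n (stp t))
    rw [ht]
    set u : Fin (n + k) → {g : G // g ∈ S} :=
      fun j => if h : (j : ℕ) < k then ⟨(q (j : ℕ))⁻¹ * q ((j : ℕ) + 1), hqs _ h⟩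
        else t ⟨(j : ℕ) - k, by omega⟩ with hu
    refine le_trans (Finset.inf'_le _ (Finset.mem_univ u)) ?_
    have hstpu : ∀ i < k, stp u i = (q i)⁻¹ * q (i + 1) := by
      intro i hi
      simp only [stp, dif_pos (show i < n + k by omega), hu, dif_pos hi]
    have hwalkpos : ∀ j ≤ k, pos x (stp u) j = q j := by
      intro j hj
      induction j with
      | zero => rw [pos_zero, hq0]
      | succ i ih =>
        rw [pos_succ, ih (by omega), hstpu i (by omega)]
        group
    have hstpu2 : ∀ i < n, stp u (k + i) = stp t i := by
      intro i hi
      have h1 : ¬ (k + i < k) := by omega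
      have hR : stp t i = (t ⟨i, hi⟩ : G) := by simp [stp, hi]
      have hL : stp u (k + i) = (t ⟨i, hi⟩ : G) := by
        simp only [stp, dif_pos (show k + i < n + k by omega), hu]
        rw [dif_neg (by simpa using h1)]
        exact congrArg (fun z => (t z : G)) (Fin.ext (by simp))
      rw [hL, hR]
    rw [pwt_eq_sum, sum_range_split _ n k]
    have h1 : ∑ j ∈ Finset.range k,
        (fun e => WD e ω) (cpath x (n + k) (stp u) j, cpath x (n + k) (stp u) (j + 1))
        = lam ω := by
      rw [hlam]
      refine Finset.sum_congr rfl (fun j hj => ?_)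
      have hjk := Finset.mem_range.1 hj
      have hedge : (cpath x (n + k) (stp u) j, cpath x (n + k) (stp u) (j + 1)) = ledge j := by
        refine Prod.ext (Prod.ext ?_ rfl) (Prod.ext ?_ rfl)
        · exact hwalkpos j (by omega)
        · exact hwalkpos (j + 1) (by omega)
      rw [hedge]
    have h2 : ∑ j ∈ Finset.range n,
        (fun e => WD e ω) (cpath x (n + k) (stp u) (k + j), cpath x (n + k) (stp u) (k + j + 1))
        = pwt (fun e => WD e ω) x n (stp t) := by
      rw [pwt_eq_sum]
      refine Finset.sum_congr rfl (fun j hj => ?_)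
      have hjn := Finset.mem_range.1 hj
      have hcp : ∀ m, m ≤ n → cpath x (n + k) (stp u) (k + m) = cpath x n (stp t) m := by
        intro m hm
        refine Prod.ext ?_ ?_
        · show pos x (stp u) (k + m) = pos x (stp t) m
          rw [pos_add, hwalkpos k le_rfl, hqk]
          exact pos_congr _ hstpu2 hm
        · show n + k - (k + m) = n - m; omega
      rw [hcp j (by omega)]
      have : k + j + 1 = k + (j + 1) := by omega
      rw [this, hcp (j + 1) (by omega)]
    rw [h1, h2]
  -- integrability and expectations
  have hlam_int : Integrable lam ℙ := by
    rw [hlam]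
    exact integrable_finset_sum _ (fun j hj => hint _ (hladj j (Finset.mem_range.1 hj)))
  have hlam_mean : ∫ ω, lam ω ∂ℙ = k * ∫ y, y ∂μ := by
    rw [hlam, integral_finset_sum _ (fun j hj => hint _ (hladj j (Finset.mem_range.1 hj)))]
    have : ∀ j ∈ Finset.range k, ∫ ω, WD (ledge j) ω ∂ℙ = ∫ y, y ∂μ :=
      fun j hj => integral_WD_edge hWDmeas hWDdist (hladj j (Finset.mem_range.1 hj))
    rw [Finset.sum_congr rfl this, Finset.sum_const, Finset.card_range, nsmul_eq_mul]
  have hlam_nonneg : ∀ᵐ ω ∂ℙ, 0 ≤ lam ω := by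
    have h : ∀ᵐ ω ∂ℙ, ∀ j : Fin k, 0 ≤ WD (ledge (j : ℕ)) ω :=
      ae_all_iff.2 (fun j => WD_nonneg_ae hWDmeas hWDdist hsupp (hladj _ j.2))
    refine h.mono (fun ω hω => ?_)
    rw [hlam]
    exact Finset.sum_nonneg (fun j hj => hω ⟨j, Finset.mem_range.1 hj⟩)
  have hbot_int : Integrable (fun ω => dD S (fun e => WD e ω) (x, n)) ℙ :=
    integrable_dD_comp WD hWDmeas hint x n
  have hfull_int : Integrable (fun ω => dD S (fun e => WD e ω) (x, n + k)) ℙ :=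
    integrable_dD_comp WD hWDmeas hint x (n + k)
  -- Markov
  set g : Ω → ℝ := fun ω => lam ω + dD S (fun e => WD e ω) (x, n)
    - dD S (fun e => WD e ω) (x, n + k) with hg
  have hg_nonneg : ∀ ω, 0 ≤ g ω := fun ω => by
    have := hdet ω; rw [hg]; simp only; linarith
  have hg_int : Integrable g ℙ := (hlam_int.add hbot_int).sub hfull_int
  have hsum_int : Integrable (fun ω => lam ω + dD S (fun e => WD e ω) (x, n)) ℙ :=
    hlam_int.add hbot_int
  have hg_mean : ∫ ω, g ω ∂ℙ ≤ k * ∫ y, y ∂μ := by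
    rw [hg]
    simp only
    rw [integral_sub hsum_int hfull_int, integral_add hlam_int hbot_int, hlam_mean]
    linarith
  have hmarkov := mul_meas_ge_le_integral_of_nonneg
    (Filter.Eventually.of_forall hg_nonneg) hg_int K
  have htoReal : (ℙ {ω | K ≤ g ω}).toReal ≤ (k * ∫ y, y ∂μ) / K := by
    rw [le_div_iff₀ hK]
    calc (ℙ {ω | K ≤ g ω}).toReal * K = K * (ℙ {ω | K ≤ g ω}).toReal := by ring
      _ ≤ ∫ ω, g ω ∂ℙ := hmarkov
      _ ≤ k * ∫ y, y ∂μ := hg_mean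
  have hKg : ℙ {ω | K ≤ g ω} ≤ ENNReal.ofReal ((k * ∫ y, y ∂μ) / K) := by
    rw [← ENNReal.ofReal_toReal (measure_ne_top ℙ {ω | K ≤ g ω})]
    exact ENNReal.ofReal_le_ofReal htoReal
  -- event inclusion
  have hsub : {ω | dD S (fun e => WD e ω) (x, n + k) - dD S (fun e => WD e ω) (x, n) < -K}
      ⊆ {ω | K ≤ g ω} ∪ {ω | lam ω < 0} := by
    intro ω hω
    simp only [Set.mem_setOf_eq] at hω
    by_cases h : 0 ≤ lam ω
    · left
      show K ≤ g ω
      rw [hg]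
      simp only
      linarith
    · right
      exact lt_of_not_ge h
  have hlamnull : ℙ {ω | lam ω < 0} = 0 := by
    have := ae_iff.1 hlam_nonneg
    simpa [not_le] using this
  calc ℙ {ω | dD S (fun e => WD e ω) (x, n + k) - dD S (fun e => WD e ω) (x, n) < -K}
      ≤ ℙ ({ω | K ≤ g ω} ∪ {ω | lam ω < 0}) := measure_mono hsub
    _ ≤ ℙ {ω | K ≤ g ω} + ℙ {ω | lam ω < 0} := measure_union_le _ _
    _ = ℙ {ω | K ≤ g ω} := by rw [hlamnull, add_zero]
    _ ≤ ENNReal.ofReal ((k * ∫ y, y ∂μ) / K) := hKg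

end VG

/-- Lemma 4.1 of "Stationary Eden Model on groups": in the directed model on
`Ĝ = G × ℕ` with i.i.d. non-atomic edge weights of finite mean, for every
increment `k` for which a directed path from `(x, n+k)` to `(x, n)` exists
(i.e. a closed walk of length `k` in `G`), the expected passage times
`m_n = E[d̂_ω((x,n), G)]` are strictly increasing: `m_n < m_{n+k}`; moreover,
for every `ε > 0` there is `K > 0`, independent of `n` and `x`, with
`P[d̂_ω((x,n+k), G) - d̂_ω((x,n), G) < -K] ≤ ε`. -/
theorem directed_passage_time_vertical_growth
    {G : Type*} [Group G] [Countable G] (S : Finset G)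
    (hSsym : ∀ s ∈ S, s⁻¹ ∈ S) (hS1 : (1 : G) ∉ S)
    (hSgen : Subgroup.closure (S : Set G) = ⊤)
    {Ω : Type*} [MeasureSpace Ω] [IsProbabilityMeasure (ℙ : Measure Ω)]
    (μ : Measure ℝ) [IsProbabilityMeasure μ]
    (hatom : ∀ a : ℝ, μ {a} = 0) (hsupp : μ (Set.Iio 0) = 0)
    (hmean : Integrable id μ)
    (WD : (G × ℕ) × (G × ℕ) → Ω → ℝ) (hWDmeas : ∀ e, Measurable (WD e))
    (hWDindep : iIndepFun
      (fun e : {e : (G × ℕ) × (G × ℕ) // adjD S e.1 e.2} => WD e.val) ℙ)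
    (hWDdist : ∀ e : {e : (G × ℕ) × (G × ℕ) // adjD S e.1 e.2},
      Measure.map (WD e.val) ℙ = μ)
    (k : ℕ) (hk : 0 < k)
    (hwalk : ∀ x : G, ∃ q : ℕ → G, q 0 = x ∧ q k = x ∧
      ∀ j < k, (q j)⁻¹ * q (j + 1) ∈ S) :
    (∀ (x : G) (n : ℕ),
      ∫ ω, dD S (fun e => WD e ω) (x, n) ∂ℙ <
        ∫ ω, dD S (fun e => WD e ω) (x, n + k) ∂ℙ) ∧
    (∀ ε : ℝ, 0 < ε → ∃ K : ℝ, 0 < K ∧ ∀ (x : G) (n : ℕ),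
      ℙ {ω | dD S (fun e => WD e ω) (x, n + k) -
          dD S (fun e => WD e ω) (x, n) < -K} ≤ ENNReal.ofReal ε) := by
  obtain ⟨q1, hq10, hq1k, hq1s⟩ := hwalk 1
  have hSne : S.Nonempty := ⟨(q1 0)⁻¹ * q1 1, hq1s 0 hk⟩
  haveI : Nonempty {g : G // g ∈ S} := ⟨⟨hSne.choose, hSne.choose_spec⟩⟩
  have hA : ∀ (x : G) (n : ℕ),
      ∫ ω, dD S (fun e => WD e ω) (x, n) ∂ℙ <
        ∫ ω, dD S (fun e => WD e ω) (x, n + k) ∂ℙ :=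
    fun x n => VG.dD_expected_lt hWDmeas hWDindep hWDdist hatom hsupp hmean x n k hk
  refine ⟨hA, fun ε hε => ?_⟩
  set I : ℝ := ∫ y, y ∂μ with hI
  have hI0 : 0 ≤ I := by
    refine integral_nonneg_of_ae ?_
    change ∀ᵐ y ∂μ, 0 ≤ y
    rw [ae_iff]
    have h : {y : ℝ | ¬ 0 ≤ y} = Set.Iio 0 := by ext y; simp [not_le]
    rw [h]; exact hsupp
  have hkI : 0 ≤ (k : ℝ) * I := by positivity
  set K : ℝ := (k * I) / ε + 1 with hK
  have hKpos : 0 < K := by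
    have h1 : 0 ≤ (k * I) / ε := div_nonneg hkI hε.le
    rw [hK]; linarith
  refine ⟨K, hKpos, fun x n => ?_⟩
  obtain ⟨q, hq0, hqk, hqs⟩ := hwalk x
  refine le_trans (VG.dD_tail_bound hWDmeas hWDdist hsupp hmean x n k hk q hq0 hqk hqs
    (le_of_lt (hA x n)) K hKpos) ?_
  refine ENNReal.ofReal_le_ofReal ?_
  rw [div_le_iff₀ hKpos]
  have hεK : ε * K = k * I + ε := by
    rw [hK, mul_add, mul_one, mul_div_cancel₀ _ (ne_of_gt hε)]
  linarith
end

section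
/- In a vertex-transitive graph G (e.g. a Cayley graph), for every vertex x, every radius R > 0, and every vertex y with d(x,y) ≤ 3R+1, there exists a path in G from y to some vertex in S_R(x) ∪ S_{R+1}(x) of length exactly 2R, where S_r(x) denotes the sphere of radius r around x in the graph metric. -/
open SimpleGraph

private lemma cayley_conn_aux {G : Type*} [Group G]
    (S : Finset G) (h1 : (1 : G) ∉ S)
    (hgen : Subgroup.closure (S : Set G) = ⊤)
    (Γ : SimpleGraph G) (hΓ : ∀ u v : G, Γ.Adj u v ↔ u ≠ v ∧ u⁻¹ * v ∈ S) :
    Γ.Connected := by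
  have htrans : ∀ g u v : G, Γ.Reachable u v → Γ.Reachable (g * u) (g * v) := by
    intro g u v h
    refine h.map (f := ⟨fun a => g * a, ?_⟩)
    intro a b hab
    rw [hΓ] at hab ⊢
    refine ⟨by simpa using hab.1, ?_⟩
    have : (g * a)⁻¹ * (g * b) = a⁻¹ * b := by group
    rw [this]; exact hab.2
  have hreach1 : ∀ g : G, Γ.Reachable 1 g := by
    intro g
    have hg : g ∈ Subgroup.closure (S : Set G) := by rw [hgen]; exact Subgroup.mem_top g
    induction hg using Subgroup.closure_induction with
    | mem s hs =>
      refine Adj.reachable ?_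
      rw [hΓ]
      refine ⟨fun h => h1 (h ▸ hs), by simpa using hs⟩
    | one => exact Reachable.refl 1
    | mul a b ha hb hra hrb =>
      refine hra.trans ?_
      have := htrans a 1 b hrb
      simpa using this
    | inv a ha hra =>
      have := htrans a⁻¹ 1 a hra
      simp only [mul_one, inv_mul_cancel] at this
      exact this.symm
  haveI : Nonempty G := ⟨1⟩
  refine SimpleGraph.Connected.mk ?_
  intro u v
  have := htrans u 1 (u⁻¹ * v) ((hreach1 (u⁻¹ * v)))
  simpa [mul_assoc] using this

private lemma step_down_aux {G : Type*} (Γ : SimpleGraph G) (hc : Γ.Connected)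
    (x u : G) (n : ℕ) (h : Γ.dist x u = n + 1) :
    ∃ v, Γ.Adj u v ∧ Γ.dist x v = n := by
  obtain ⟨p, hp⟩ := (hc u x).exists_walk_length_eq_dist
  rw [dist_comm, h] at hp
  cases p with
  | nil => simp at hp
  | @cons _ v _ hadj q =>
    refine ⟨v, hadj, ?_⟩
    have hq : q.length = n := by simpa using hp
    have h1 : Γ.dist x v ≤ n := by
      have := dist_le q.reverse
      simpa [hq] using this
    have h2 : Γ.dist x u ≤ Γ.dist x v + Γ.dist v u := hc.dist_triangle
    have h3 : Γ.dist v u ≤ 1 := by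
      have := dist_le (Walk.cons hadj.symm Walk.nil)
      simpa using this
    omega

private lemma descend_aux {G : Type*} (Γ : SimpleGraph G) (hc : Γ.Connected)
    (x : G) : ∀ (k n : ℕ) (u : G), Γ.dist x u = n + k →
    ∃ (v : G) (w : Γ.Walk u v), w.length = k ∧ Γ.dist x v = n := by
  intro k
  induction k with
  | zero => exact fun n u h => ⟨u, Walk.nil, rfl, by simpa using h⟩
  | succ k ih =>
    intro n u h
    obtain ⟨v, hadj, hv⟩ := step_down_aux Γ hc x u (n + k) (by omega)
    obtain ⟨z, w, hw, hz⟩ := ih n v hv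
    exact ⟨z, Walk.cons hadj w, by simp [hw], hz⟩

private lemma ball_finite_aux {G : Type*} [Group G]
    (S : Finset G)
    (Γ : SimpleGraph G) (hΓ : ∀ u v : G, Γ.Adj u v ↔ u ≠ v ∧ u⁻¹ * v ∈ S)
    (hc : Γ.Connected) (x : G) :
    ∀ n : ℕ, {z : G | Γ.dist x z ≤ n}.Finite := by
  intro n
  induction n with
  | zero =>
    refine Set.Finite.subset (Set.finite_singleton x) ?_
    intro z hz
    simp only [Set.mem_setOf_eq, Nat.le_zero] at hz
    have := (hc.dist_eq_zero_iff (u := x) (v := z)).mp hz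
    simp [this]
  | succ n ih =>
    refine Set.Finite.subset (ih.union ((ih.image2 (fun a b => a * b)) S.finite_toSet)) ?_
    intro z hz
    simp only [Set.mem_setOf_eq] at hz
    rcases Nat.lt_or_ge (Γ.dist x z) (n + 1) with h | h
    · exact Or.inl (by simpa using Nat.lt_succ_iff.mp h)
    · have hz' : Γ.dist x z = n + 1 := le_antisymm hz h
      obtain ⟨v, hadj, hv⟩ := step_down_aux Γ hc x z n hz'
      refine Or.inr ?_
      have hs : z⁻¹ * v ∈ S := ((hΓ z v).mp hadj).2
      have hs' : v⁻¹ * z ∈ S := by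
        have := ((hΓ v z).mp hadj.symm).2
        exact this
      refine Set.mem_image2.mpr ⟨v, by simpa using hv.le, v⁻¹ * z, hs', by group⟩

private lemma sphere_nonempty_aux {G : Type*} [Group G] [Infinite G]
    (S : Finset G)
    (Γ : SimpleGraph G) (hΓ : ∀ u v : G, Γ.Adj u v ↔ u ≠ v ∧ u⁻¹ * v ∈ S)
    (hc : Γ.Connected) (x : G) (n : ℕ) :
    ∃ z : G, Γ.dist x z = n := by
  obtain ⟨z, hz⟩ := ((ball_finite_aux S Γ hΓ hc x n).infinite_compl).nonempty
  simp only [Set.mem_compl_iff, Set.mem_setOf_eq, not_le] at hz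
  obtain ⟨v, w, _, hv⟩ := descend_aux Γ hc x (Γ.dist x z - n) n z (by omega)
  exact ⟨v, hv⟩

private lemma bounce_aux {G : Type*} (Γ : SimpleGraph G) (hc : Γ.Connected)
    (x u : G) (n : ℕ) (h : Γ.dist x u = n + 1) :
    ∀ j : ℕ, ∃ w : Γ.Walk u u, w.length = 2 * j := by
  obtain ⟨v, hadj, _⟩ := step_down_aux Γ hc x u n h
  intro j
  induction j with
  | zero => exact ⟨Walk.nil, rfl⟩
  | succ j ih =>
    obtain ⟨w, hw⟩ := ih
    exact ⟨Walk.cons hadj (Walk.cons hadj.symm w), by simp [hw]; omega⟩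

private lemma main_aux {G : Type*} [Group G] [Infinite G]
    (S : Finset G)
    (Γ : SimpleGraph G) (hΓ : ∀ u v : G, Γ.Adj u v ↔ u ≠ v ∧ u⁻¹ * v ∈ S)
    (hc : Γ.Connected) (x y : G) (R ℓ : ℕ) (hR : 0 < R)
    (hℓ : ℓ = R ∨ ℓ = R + 1)
    (hpar : (Γ.dist x y + ℓ) % 2 = 0)
    (hd : Γ.dist x y ≤ 3 * R + 1) :
    ∃ (z : G) (w : Γ.Walk y z), w.length = 2 * R ∧ Γ.dist x z = ℓ := by
  set d := Γ.dist x y with hdd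
  have hℓpos : 1 ≤ ℓ := by omega
  rcases le_or_gt ℓ d with hcase | hcase
  · -- descend from y to distance ℓ, then bounce
    obtain ⟨v, w1, hw1, hv⟩ := descend_aux Γ hc x (d - ℓ) ℓ y (by omega)
    obtain ⟨w2, hw2⟩ := bounce_aux Γ hc x v (ℓ - 1) (by omega) ((2 * R - (d - ℓ)) / 2)
    refine ⟨v, w1.append w2, ?_, hv⟩
    rw [Walk.length_append, hw1, hw2]
    rcases hℓ with h | h <;> omega
  · -- go all the way to x, then out to a sphere point, then bounce
    obtain ⟨v, w1, hw1, hv0⟩ := descend_aux Γ hc x d 0 y (by omega)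
    have hvx : v = x := ((hc.dist_eq_zero_iff).mp hv0).symm
    subst hvx
    obtain ⟨z, hz⟩ := sphere_nonempty_aux S Γ hΓ hc v ℓ
    obtain ⟨p, hp⟩ := (hc v z).exists_walk_length_eq_dist
    rw [hz] at hp
    obtain ⟨w3, hw3⟩ := bounce_aux Γ hc v z (ℓ - 1) (by omega) ((2 * R - d - ℓ) / 2)
    refine ⟨z, w1.append (p.append w3), ?_, hz⟩
    rw [Walk.length_append, Walk.length_append, hw1, hp, hw3]
    rcases hℓ with h | h <;> omega

/-- Remark 4.4 ("dead ends") of "Stationary Eden Model on groups": in the Cayley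
graph of an infinite finitely generated group, for every vertex `x`, every
radius `R > 0` and every vertex `y` with `d(x,y) ≤ 3R + 1`, there is a walk of
length exactly `2R` from `y` to some vertex of the sphere `S_R(x) ∪ S_{R+1}(x)`. -/
theorem cayley_reach_sphere_in_2R_steps {G : Type*} [Group G] [Infinite G]
    (S : Finset G) (hsym : ∀ s ∈ S, s⁻¹ ∈ S) (h1 : (1 : G) ∉ S)
    (hgen : Subgroup.closure (S : Set G) = ⊤)
    (Γ : SimpleGraph G) (hΓ : ∀ u v : G, Γ.Adj u v ↔ u ≠ v ∧ u⁻¹ * v ∈ S)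
    (x y : G) (R : ℕ) (hR : 0 < R) (hd : Γ.dist x y ≤ 3 * R + 1) :
    ∃ (z : G) (w : Γ.Walk y z), w.length = 2 * R ∧
      (Γ.dist x z = R ∨ Γ.dist x z = R + 1) := by
  have hc := cayley_conn_aux S h1 hgen Γ hΓ
  by_cases hp : (Γ.dist x y + R) % 2 = 0
  · obtain ⟨z, w, hlen, hz⟩ := main_aux S Γ hΓ hc x y R R hR (Or.inl rfl) hp hd
    exact ⟨z, w, hlen, Or.inl hz⟩
  · obtain ⟨z, w, hlen, hz⟩ := main_aux S Γ hΓ hc x y R (R + 1) hR (Or.inr rfl)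
      (by omega) hd
    exact ⟨z, w, hlen, Or.inr hz⟩
end

section
/- In either the directed or undirected model on G × Z₊, if the n-th level set T^n(x) is nonempty then T^m(x) is nonempty for all 1 ≤ m ≤ n; moreover, almost surely the tree T(x) is infinite if and only if T^n(x) ≠ ∅ for all n ≥ 1. -/
open MeasureTheory ProbabilityTheory
open scoped ENNReal

/-- Undirected adjacency on `G × ℕ`: horizontal Cayley edges on levels `n ≥ 1`
and vertical edges `(x,n) — (x,n+1)`; no edges inside the base level. -/
def adjU {G : Type*} [Group G] (S : Finset G) (u v : G × ℕ) : Prop :=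
  (u.2 = v.2 ∧ 1 ≤ u.2 ∧ u.1⁻¹ * v.1 ∈ S) ∨
    (u.1 = v.1 ∧ (u.2 + 1 = v.2 ∨ v.2 + 1 = u.2))

/-- `e` is an (unordered) edge of the undirected graph `Ḡ`. -/
def IsEdgeU {G : Type*} [Group G] (S : Finset G) (e : Sym2 (G × ℕ)) : Prop :=
  ∃ u v : G × ℕ, e = s(u, v) ∧ adjU S u v

/-- Weight of an undirected path with `n` steps. -/
def wtU {G : Type*} (W : Sym2 (G × ℕ) → ℝ) (p : ℕ → G × ℕ) (n : ℕ) : ℝ :=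
  ∑ j ∈ Finset.range n, W s(p j, p (j + 1))

/-- Undirected passage time `d̄_ω(u, G)` from `u` to the base level `G × {0}`. -/
noncomputable def dU {G : Type*} [Group G] (S : Finset G)
    (W : Sym2 (G × ℕ) → ℝ) (u : G × ℕ) : ℝ :=
  sInf {r : ℝ | ∃ (n : ℕ) (p : ℕ → G × ℕ), p 0 = u ∧ (p n).2 = 0 ∧
    (∀ j < n, adjU S (p j) (p (j + 1))) ∧ r = wtU W p n}

/-- The directed geodesic tree `T̂(x)`: the union of all directed geodesics to
the base which terminate at `(x, 0)`. -/
def TD {G : Type*} [Group G] (S : Finset G)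
    (W : (G × ℕ) × (G × ℕ) → ℝ) (x : G) : Set (G × ℕ) :=
  {u | ∃ (n : ℕ) (p : ℕ → G × ℕ), p 0 = u ∧ p n = (x, 0) ∧
    (∀ j < n, adjD S (p j) (p (j + 1))) ∧ wtD W p n = dD S W u}

/-- The undirected geodesic tree `T̄(x)`: the union of all geodesics to the base
which terminate at `(x, 0)`. -/
def TU {G : Type*} [Group G] (S : Finset G)
    (W : Sym2 (G × ℕ) → ℝ) (x : G) : Set (G × ℕ) :=
  {u | ∃ (n : ℕ) (p : ℕ → G × ℕ), p 0 = u ∧ p n = (x, 0) ∧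
    (∀ j < n, adjU S (p j) (p (j + 1))) ∧ wtU W p n = dU S W u}

/-- Restricted undirected passage time: infimum of path weights over paths from
`u` to the base which stay inside the slab `Λ_L` (levels `0` through `L`). -/
noncomputable def dUslab {G : Type*} [Group G] (S : Finset G)
    (W : Sym2 (G × ℕ) → ℝ) (L : ℕ) (u : G × ℕ) : ℝ :=
  sInf {r : ℝ | ∃ (n : ℕ) (p : ℕ → G × ℕ), p 0 = u ∧ (p n).2 = 0 ∧
    (∀ j ≤ n, (p j).2 ≤ L) ∧ (∀ j < n, adjU S (p j) (p (j + 1))) ∧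
    r = wtU W p n}

/-- The `n`-th level set `T̄ⁿ(x) = T̄_{Λ_n}(x) ∩ Gₙ` of the undirected model:
vertices `(y, n)` whose lightest path to the base among paths inside the slab
`Λ_n` ends at `(x, 0)`. -/
def TUn {G : Type*} [Group G] (S : Finset G)
    (W : Sym2 (G × ℕ) → ℝ) (n : ℕ) (x : G) : Set G :=
  {y : G | ∃ (k : ℕ) (p : ℕ → G × ℕ), p 0 = (y, n) ∧ p k = (x, 0) ∧
    (∀ j ≤ k, (p j).2 ≤ n) ∧ (∀ j < k, adjU S (p j) (p (j + 1))) ∧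
    wtU W p k = dUslab S W n (y, n)}

/-- The `n`-th level set `T̂ⁿ(x) = T̂(x) ∩ Gₙ` of the directed model. -/
def TDn {G : Type*} [Group G] (S : Finset G)
    (W : (G × ℕ) × (G × ℕ) → ℝ) (n : ℕ) (x : G) : Set G :=
  {y : G | (y, n) ∈ TD S W x}

namespace EdenAux

section Det
variable {G : Type*} [Group G] {S : Finset G} {W : Sym2 (G × ℕ) → ℝ}

lemma adjU_symm (hSsym : ∀ s ∈ S, s⁻¹ ∈ S) {u v : G × ℕ} (h : adjU S u v) : adjU S v u := by
  rcases h with ⟨h1, h2, h3⟩ | ⟨h1, h2⟩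
  · refine Or.inl ⟨h1.symm, h1 ▸ h2, ?_⟩
    have := hSsym _ h3
    simpa [mul_inv_rev] using this
  · exact Or.inr ⟨h1.symm, h2.symm⟩

lemma adjU_level {u v : G × ℕ} (h : adjU S u v) : v.2 ≤ u.2 + 1 ∧ u.2 ≤ v.2 + 1 := by
  rcases h with ⟨h1, _, _⟩ | ⟨_, h2 | h2⟩ <;> omega

/-- The set of weights of paths from `u` to the base staying in `V`. -/
def psetU (S : Finset G) (W : Sym2 (G × ℕ) → ℝ) (V : Set (G × ℕ)) (u : G × ℕ) : Set ℝ :=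
  {r : ℝ | ∃ (k : ℕ) (p : ℕ → G × ℕ), p 0 = u ∧ (p k).2 = 0 ∧
    (∀ j ≤ k, p j ∈ V) ∧ (∀ j < k, adjU S (p j) (p (j + 1))) ∧ r = wtU W p k}

noncomputable def dV (S : Finset G) (W : Sym2 (G × ℕ) → ℝ) (V : Set (G × ℕ)) (u : G × ℕ) : ℝ :=
  sInf (psetU S W V u)

lemma wtU_nonneg (hpos : ∀ u v : G × ℕ, adjU S u v → 0 ≤ W s(u, v)) {p : ℕ → G × ℕ} {k : ℕ}
    (hp : ∀ j < k, adjU S (p j) (p (j + 1))) : 0 ≤ wtU W p k :=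
  Finset.sum_nonneg fun j hj => hpos _ _ (hp j (Finset.mem_range.mp hj))

lemma bddBelow_psetU (hpos : ∀ u v : G × ℕ, adjU S u v → 0 ≤ W s(u, v)) {V : Set (G × ℕ)}
    {u : G × ℕ} : BddBelow (psetU S W V u) := by
  refine ⟨0, fun r hr => ?_⟩
  obtain ⟨k, p, -, -, -, hadj, rfl⟩ := hr
  exact wtU_nonneg hpos hadj

lemma dV_le (hpos : ∀ u v : G × ℕ, adjU S u v → 0 ≤ W s(u, v)) {V : Set (G × ℕ)} {u : G × ℕ}
    {r : ℝ} (hr : r ∈ psetU S W V u) : dV S W V u ≤ r :=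
  csInf_le (bddBelow_psetU hpos) hr

lemma psetU_nonempty {V : Set (G × ℕ)} {u : G × ℕ} (hV : ∀ j ≤ u.2, (u.1, j) ∈ V) :
    (psetU S W V u).Nonempty := by
  refine ⟨wtU W (fun t => (u.1, u.2 - t)) u.2, u.2, fun t => (u.1, u.2 - t), by simp, by simp,
    fun j _ => hV _ (by omega), fun j hj => ?_, rfl⟩
  show adjU S (u.1, u.2 - j) (u.1, u.2 - (j + 1))
  exact Or.inr ⟨rfl, Or.inr (by omega)⟩

lemma dV_mono (hpos : ∀ u v : G × ℕ, adjU S u v → 0 ≤ W s(u, v)) {V V' : Set (G × ℕ)}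
    {u : G × ℕ} (hVV' : V ⊆ V') (hne : (psetU S W V u).Nonempty) :
    dV S W V' u ≤ dV S W V u := by
  refine csInf_le_csInf (bddBelow_psetU hpos) hne ?_
  rintro r ⟨k, p, h0, hk, hV, hadj, rfl⟩
  exact ⟨k, p, h0, hk, fun j hj => hVV' (hV j hj), hadj, rfl⟩

/-- Concatenation of a path from `u` to `p j` with a path from `p j` to the base. -/
lemma concat_mem {V : Set (G × ℕ)} {u : G × ℕ} {p q : ℕ → G × ℕ} {j l : ℕ}
    (hp0 : p 0 = u) (hpadj : ∀ t < j, adjU S (p t) (p (t + 1))) (hpV : ∀ t ≤ j, p t ∈ V)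
    (hq0 : q 0 = p j) (hql : (q l).2 = 0) (hqV : ∀ t ≤ l, q t ∈ V)
    (hqadj : ∀ t < l, adjU S (q t) (q (t + 1))) :
    wtU W p j + wtU W q l ∈ psetU S W V u := by
  set c : ℕ → G × ℕ := fun t => if t < j then p t else q (t - j) with hc
  have hc1 : ∀ t ≤ j, c t = p t := by
    intro t ht
    rcases lt_or_eq_of_le ht with h | h
    · simp [hc, h]
    · subst h; simp [hc, hq0]
  have hc2 : ∀ t, j ≤ t → c t = q (t - j) := by
    intro t ht; simp [hc, Nat.not_lt.mpr ht]
  have hwt : wtU W c (j + l) = wtU W p j + wtU W q l := by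
    rw [wtU, Finset.sum_range_add]
    congr 1
    · refine Finset.sum_congr rfl fun t ht => ?_
      rw [Finset.mem_range] at ht
      rw [hc1 t (by omega), hc1 (t + 1) (by omega)]
    · refine Finset.sum_congr rfl fun t ht => ?_
      rw [Finset.mem_range] at ht
      rw [hc2 (j + t) (by omega), hc2 (j + t + 1) (by omega)]
      have e1 : j + t - j = t := by omega
      have e2 : j + t + 1 - j = t + 1 := by omega
      rw [e1, e2]
  refine ⟨j + l, c, ?_, ?_, ?_, ?_, hwt.symm⟩
  · rw [hc1 0 (by omega), hp0]
  · rw [hc2 (j + l) (by omega)]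
    simpa using hql
  · intro t ht
    rcases le_or_gt t j with h | h
    · rw [hc1 t h]; exact hpV t h
    · rw [hc2 t h.le]; exact hqV _ (by omega)
  · intro t ht
    rcases lt_or_ge t j with h | h
    · rw [hc1 t h.le, hc1 (t + 1) (by omega)]
      exact hpadj t h
    · rw [hc2 t h, hc2 (t + 1) (by omega)]
      have h2 : t + 1 - j = (t - j) + 1 := by omega
      rw [h2]
      exact hqadj (t - j) (by omega)

/-- The tail of a `V`-geodesic is a `V`-geodesic. -/
lemma tail_geodesic (hpos : ∀ u v : G × ℕ, adjU S u v → 0 ≤ W s(u, v)) {V : Set (G × ℕ)}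
    {u : G × ℕ} {p : ℕ → G × ℕ} {k : ℕ}
    (hp0 : p 0 = u) (hpk : (p k).2 = 0) (hpV : ∀ t ≤ k, p t ∈ V)
    (hadj : ∀ t < k, adjU S (p t) (p (t + 1)))
    (hw : wtU W p k = dV S W V u) {j : ℕ} (hj : j ≤ k) :
    wtU W (fun t => p (j + t)) (k - j) = dV S W V (p j) := by
  set q : ℕ → G × ℕ := fun t => p (j + t) with hq
  have hq0 : q 0 = p j := by simp [hq]
  have hqend : (q (k - j)).2 = 0 := by
    have : j + (k - j) = k := by omega
    simp only [hq, this, hpk]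
  have hqV : ∀ t ≤ k - j, q t ∈ V := fun t ht => hpV _ (by omega)
  have hqadj : ∀ t < k - j, adjU S (q t) (q (t + 1)) := fun t ht => hadj (j + t) (by omega)
  have hsplit : wtU W p k = wtU W p j + wtU W q (k - j) := by
    have hk' : j + (k - j) = k := by omega
    have := Finset.sum_range_add (fun t => W s(p t, p (t + 1))) j (k - j)
    rw [hk'] at this
    exact this
  have hmem0 : wtU W q (k - j) ∈ psetU S W V (p j) := ⟨k - j, q, hq0, hqend, hqV, hqadj, rfl⟩
  have hle : dV S W V (p j) ≤ wtU W q (k - j) := dV_le hpos hmem0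
  refine le_antisymm ?_ hle
  by_contra hlt
  push_neg at hlt
  obtain ⟨r, hrmem, hrlt⟩ := exists_lt_of_csInf_lt ⟨_, hmem0⟩ hlt
  obtain ⟨l, q', hq'0, hq'l, hq'V, hq'adj, rfl⟩ := hrmem
  have hmem := concat_mem (W := W) hp0 (fun t ht => hadj t (by omega)) (fun t ht => hpV t (by omega))
    (hq'0.trans rfl) hq'l hq'V hq'adj
  have := dV_le hpos hmem
  rw [← hw] at this
  rw [hsplit] at this
  linarith


/-- A geodesic with strictly positive edge weights is self-avoiding. -/
lemma geodesic_inj (hpos : ∀ u v : G × ℕ, adjU S u v → 0 < W s(u, v)) {V : Set (G × ℕ)}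
    {u : G × ℕ} {p : ℕ → G × ℕ} {k : ℕ}
    (hp0 : p 0 = u) (hpk : (p k).2 = 0) (hpV : ∀ t ≤ k, p t ∈ V)
    (hadj : ∀ t < k, adjU S (p t) (p (t + 1)))
    (hw : wtU W p k = dV S W V u) :
    ∀ i ≤ k, ∀ j ≤ k, i < j → p i ≠ p j := by
  intro i hi j hj hij heq
  have hpos' : ∀ u v : G × ℕ, adjU S u v → 0 ≤ W s(u, v) := fun u v h => (hpos u v h).le
  set d := j - i with hd
  set k' := k - d with hk'
  have hik' : i ≤ k' := by omega
  set c : ℕ → G × ℕ := fun t => if t < i then p t else p (t + d) with hc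
  have hc2 : ∀ t, i ≤ t → c t = p (t + d) := fun t ht => by simp [hc, Nat.not_lt.mpr ht]
  have hc1 : ∀ t ≤ i, c t = p t := by
    intro t ht
    rcases lt_or_eq_of_le ht with h | h
    · simp [hc, h]
    · subst h
      have h2 : t + d = j := by omega
      rw [hc2 t le_rfl, h2, ← heq]
  have hC0 : c 0 = u := by rw [hc1 0 (Nat.zero_le _), hp0]
  have hCend : (c k').2 = 0 := by
    have h2 : k' + d = k := by omega
    rw [hc2 k' hik', h2, hpk]
  have hCV : ∀ t ≤ k', c t ∈ V := by
    intro t ht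
    rcases lt_or_ge t i with h | h
    · rw [hc1 t h.le]; exact hpV t (by omega)
    · rw [hc2 t h]; exact hpV _ (by omega)
  have hCadj : ∀ t < k', adjU S (c t) (c (t + 1)) := by
    intro t ht
    rcases le_or_gt (t + 1) i with h | h
    · rw [hc1 t (by omega), hc1 (t + 1) h]
      exact hadj t (by omega)
    · have h' : i ≤ t := by omega
      rw [hc2 t h', hc2 (t + 1) (by omega)]
      have h2 : t + 1 + d = (t + d) + 1 := by omega
      rw [h2]
      exact hadj (t + d) (by omega)
  set f : ℕ → ℝ := fun t => W s(p t, p (t + 1)) with hf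
  have hsum1 : wtU W p k = ∑ t ∈ Finset.range i, f t + (∑ t ∈ Finset.range d, f (i + t)
      + ∑ t ∈ Finset.range (k - j), f (i + (d + t))) := by
    have hk2 : i + (d + (k - j)) = k := by omega
    have := Finset.sum_range_add f i (d + (k - j))
    have h2 := Finset.sum_range_add (fun t => f (i + t)) d (k - j)
    rw [hk2] at this
    rw [wtU, this, h2]
  have hsum2 : wtU W c k' = ∑ t ∈ Finset.range i, f t + ∑ t ∈ Finset.range (k - j), f (i + (d + t)) := by
    have hk2 : i + (k - j) = k' := by omega
    have := Finset.sum_range_add (fun t => W s(c t, c (t + 1))) i (k - j)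
    rw [hk2] at this
    rw [wtU, this]
    congr 1
    · refine Finset.sum_congr rfl fun t ht => ?_
      rw [Finset.mem_range] at ht
      rw [hc1 t ht.le, hc1 (t + 1) (by omega)]
    · refine Finset.sum_congr rfl fun t ht => ?_
      rw [Finset.mem_range] at ht
      rw [hc2 (i + t) (by omega), hc2 (i + t + 1) (by omega)]
      have e1 : i + t + d = i + (d + t) := by omega
      have e2 : i + t + 1 + d = i + (d + t) + 1 := by omega
      rw [e1, e2]
  have hLpos : 0 < ∑ t ∈ Finset.range d, f (i + t) := by
    refine Finset.sum_pos (fun t ht => ?_) ?_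
    · rw [Finset.mem_range] at ht
      exact hpos _ _ (hadj (i + t) (by omega))
    · exact ⟨0, Finset.mem_range.mpr (by omega)⟩
  have hmem : wtU W c k' ∈ psetU S W V u := ⟨k', c, hC0, hCend, hCV, hCadj, rfl⟩
  have := dV_le hpos' hmem
  rw [← hw] at this
  rw [hsum1, hsum2] at this
  linarith

lemma level_ge_sub {p : ℕ → G × ℕ} {k : ℕ} (hadj : ∀ t < k, adjU S (p t) (p (t + 1))) :
    ∀ t ≤ k, (p 0).2 ≤ (p t).2 + t := by
  intro t ht
  induction t with
  | zero => simp
  | succ n ih =>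
    have h1 := ih (by omega)
    have h2 := (adjU_level (hadj n (by omega))).2
    omega

lemma exists_level {p : ℕ → G × ℕ} {k : ℕ} (hadj : ∀ t < k, adjU S (p t) (p (t + 1)))
    {a b n : ℕ} (hab : a ≤ b) (hbk : b ≤ k) (ha : n ≤ (p a).2) (hb : (p b).2 ≤ n) :
    ∃ c, a ≤ c ∧ c ≤ b ∧ (p c).2 = n := by
  classical
  set F := (Finset.range (b + 1)).filter (fun t => a ≤ t ∧ n ≤ (p t).2) with hF
  have haF : a ∈ F := by
    rw [hF, Finset.mem_filter, Finset.mem_range]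
    exact ⟨by omega, le_rfl, ha⟩
  have hne : F.Nonempty := ⟨a, haF⟩
  have hcF := F.max'_mem hne
  obtain ⟨hcb', hac, hnc⟩ := Finset.mem_filter.mp hcF
  have hcb : F.max' hne < b + 1 := Finset.mem_range.mp hcb'
  refine ⟨F.max' hne, hac, by omega, ?_⟩
  by_contra hne2
  have hlt : n < (p (F.max' hne)).2 := lt_of_le_of_ne hnc (Ne.symm hne2)
  have hcb' : F.max' hne < b := by
    rcases lt_or_eq_of_le (show F.max' hne ≤ b by omega) with h | h
    · exact h
    · rw [h] at hlt; omega
  have hstep := (adjU_level (hadj (F.max' hne) (by omega))).2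
  have hmem : F.max' hne + 1 ∈ F :=
    Finset.mem_filter.mpr ⟨Finset.mem_range.mpr (by omega), by omega, by omega⟩
  have := F.le_max' _ hmem
  omega

lemma last_visit {p : ℕ → G × ℕ} {k n t0 : ℕ} (hadj : ∀ t < k, adjU S (p t) (p (t + 1)))
    (ht0k : t0 ≤ k) (ht0 : (p t0).2 = n) (hk : (p k).2 = 0) :
    ∃ j ≤ k, (p j).2 = n ∧ ∀ t, j ≤ t → t ≤ k → (p t).2 ≤ n := by
  classical
  set F := (Finset.range (k + 1)).filter (fun t => (p t).2 = n) with hF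
  have ht0F : t0 ∈ F := by
    rw [hF, Finset.mem_filter, Finset.mem_range]
    exact ⟨by omega, ht0⟩
  have hne : F.Nonempty := ⟨t0, ht0F⟩
  have hjF := F.max'_mem hne
  obtain ⟨hjk', hj2⟩ := Finset.mem_filter.mp hjF
  have hjk : F.max' hne < k + 1 := Finset.mem_range.mp hjk'
  refine ⟨F.max' hne, by omega, hj2, ?_⟩
  intro t hjt htk
  by_contra h
  push_neg at h
  obtain ⟨c, hc1, hc2, hc3⟩ := exists_level (n := n) hadj htk le_rfl (by omega) (by omega)
  have hcF : c ∈ F := Finset.mem_filter.mpr ⟨Finset.mem_range.mpr (by omega), hc3⟩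
  have hcj := F.le_max' c hcF
  have htj : t ≠ F.max' hne := by
    intro e
    rw [e] at h
    omega
  omega

lemma adjU_finite (S : Finset G) (u : G × ℕ) : {v : G × ℕ | adjU S u v}.Finite := by
  have hsub : {v : G × ℕ | adjU S u v} ⊆
      ((fun s => (u.1 * s, u.2)) '' (S : Set G)) ∪ {(u.1, u.2 + 1), (u.1, u.2 - 1)} := by
    rintro v (⟨h1, h2, h3⟩ | ⟨h1, h2 | h2⟩)
    · left
      refine ⟨u.1⁻¹ * v.1, h3, ?_⟩
      show (u.1 * (u.1⁻¹ * v.1), u.2) = v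
      rw [Prod.ext_iff]
      exact ⟨by group, h1⟩
    · right
      have hv : v = (u.1, u.2 + 1) := by
        rw [Prod.ext_iff]
        exact ⟨h1.symm, h2.symm⟩
      simp [hv]
    · right
      have hv : v = (u.1, u.2 - 1) := by
        rw [Prod.ext_iff]
        refine ⟨h1.symm, by simp; omega⟩
      simp [hv]
  exact Set.Finite.subset ((((S : Set G).toFinite.image _)).union
    ((Set.finite_singleton _).insert _)) hsub

lemma infinite_nat_exists_ge {s : Set ℕ} (hs : s.Infinite) (a : ℕ) : ∃ n ∈ s, a ≤ n := by
  by_contra h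
  push_neg at h
  exact hs (Set.Finite.subset (Set.finite_Iio a) (fun n hn => h n hn))


lemma dUslab_eq (S : Finset G) (W : Sym2 (G × ℕ) → ℝ) (L : ℕ) (u : G × ℕ) :
    dUslab S W L u = dV S W {w : G × ℕ | w.2 ≤ L} u := rfl

lemma dU_eq (S : Finset G) (W : Sym2 (G × ℕ) → ℝ) (u : G × ℕ) :
    dU S W u = dV S W Set.univ u := by
  unfold dU dV psetU
  congr 1
  ext r
  constructor
  · rintro ⟨n, p, h0, hk, hadj, hw⟩
    exact ⟨n, p, h0, hk, fun _ _ => trivial, hadj, hw⟩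
  · rintro ⟨n, p, h0, hk, -, hadj, hw⟩
    exact ⟨n, p, h0, hk, hadj, hw⟩

theorem undirected_mono (hpos : ∀ u v : G × ℕ, adjU S u v → 0 < W s(u, v)) (x : G) :
    ∀ n m : ℕ, 1 ≤ m → m ≤ n →
      (TUn S W n x).Nonempty → (TUn S W m x).Nonempty := by
  have hpos' : ∀ u v : G × ℕ, adjU S u v → 0 ≤ W s(u, v) := fun u v h => (hpos u v h).le
  rintro n m h1m hmn ⟨y, k, p, h0, hk, hslab, hadj, hwt⟩
  rw [dUslab_eq, ← h0] at hwt
  have h0lev : (p 0).2 = n := by rw [h0]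
  have hklev : (p k).2 = 0 := by rw [hk]
  obtain ⟨c, -, hck, hclev⟩ :=
    exists_level (n := m) hadj (Nat.zero_le k) le_rfl (by omega) (by omega)
  obtain ⟨j, hjk, hjlev, hjall⟩ := last_visit hadj hck hclev hklev
  have htail := tail_geodesic hpos' rfl hklev (fun t ht => hslab t ht) hadj hwt hjk
  set q : ℕ → G × ℕ := fun t => p (j + t) with hq
  have hqend : q (k - j) = (x, 0) := by
    have e : j + (k - j) = k := by omega
    show p (j + (k - j)) = (x, 0)
    rw [e, hk]
  have hqslab : ∀ t ≤ k - j, (q t).2 ≤ m := fun t ht => hjall (j + t) (by omega) (by omega)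
  have hqadj : ∀ t < k - j, adjU S (q t) (q (t + 1)) := fun t ht => hadj (j + t) (by omega)
  have hqmem : wtU W q (k - j) ∈ psetU S W {w : G × ℕ | w.2 ≤ m} (p j) :=
    ⟨k - j, q, rfl, by rw [hqend], hqslab, hqadj, rfl⟩
  have hge : dV S W Set.univ (p j) ≤ dV S W {w : G × ℕ | w.2 ≤ m} (p j) := by
    exact dV_mono hpos' (fun w _ => trivial) (psetU_nonempty (fun i hi => by
      show i ≤ m
      omega))
  have hmono : dV S W {w : G × ℕ | w.2 ≤ n} (p j) ≤ dV S W {w : G × ℕ | w.2 ≤ m} (p j) := by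
    refine dV_mono hpos' (fun w hw => ?_) (psetU_nonempty (fun i hi => by show i ≤ m; omega))
    show w.2 ≤ n
    have : w.2 ≤ m := hw
    omega
  have hle : dV S W {w : G × ℕ | w.2 ≤ m} (p j) ≤ wtU W q (k - j) := dV_le hpos' hqmem
  have weq : wtU W q (k - j) = dV S W {w : G × ℕ | w.2 ≤ m} (p j) := by
    refine le_antisymm ?_ hle
    rw [htail]
    exact hmono
  have hpj : p j = ((p j).1, m) := by
    rw [Prod.ext_iff]
    exact ⟨rfl, hjlev⟩
  refine ⟨(p j).1, k - j, q, ?_, hqend, hqslab, hqadj, ?_⟩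
  · show p (j + 0) = ((p j).1, m)
    rw [← hpj]
    rfl
  · rw [dUslab_eq, ← hpj, weq]

theorem undirected_onlyIf (hpos : ∀ u v : G × ℕ, adjU S u v → 0 < W s(u, v)) (x : G)
    (hfin : ∀ m : ℕ, {y : G | (y, m) ∈ TU S W x}.Finite) (hinf : (TU S W x).Infinite) :
    ∀ n, 1 ≤ n → (TUn S W n x).Nonempty := by
  have hpos' : ∀ u v : G × ℕ, adjU S u v → 0 ≤ W s(u, v) := fun u v h => (hpos u v h).le
  intro n h1n
  by_contra hne
  have hlev : ∀ u ∈ TU S W x, u.2 < n := by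
    rintro u ⟨k, p, h0, hk, hadj, hwt⟩
    rw [dU_eq, ← h0] at hwt
    by_contra hun
    push_neg at hun
    have h0lev : n ≤ (p 0).2 := by rw [h0]; exact hun
    have hklev : (p k).2 = 0 := by rw [hk]
    obtain ⟨c, -, hck, hclev⟩ :=
      exists_level (n := n) hadj (Nat.zero_le k) le_rfl h0lev (by omega)
    obtain ⟨j, hjk, hjlev, hjall⟩ := last_visit hadj hck hclev hklev
    have htail := tail_geodesic (V := Set.univ) hpos' rfl hklev (fun t _ => trivial) hadj hwt hjk
    set q : ℕ → G × ℕ := fun t => p (j + t) with hq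
    have hqend : q (k - j) = (x, 0) := by
      have e : j + (k - j) = k := by omega
      show p (j + (k - j)) = (x, 0)
      rw [e, hk]
    have hqslab : ∀ t ≤ k - j, (q t).2 ≤ n := fun t ht => hjall (j + t) (by omega) (by omega)
    have hqadj : ∀ t < k - j, adjU S (q t) (q (t + 1)) := fun t ht => hadj (j + t) (by omega)
    have hqmem : wtU W q (k - j) ∈ psetU S W {w : G × ℕ | w.2 ≤ n} (p j) :=
      ⟨k - j, q, rfl, by rw [hqend], hqslab, hqadj, rfl⟩
    have hge : dV S W Set.univ (p j) ≤ dV S W {w : G × ℕ | w.2 ≤ n} (p j) :=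
      dV_mono hpos' (fun w _ => trivial) (psetU_nonempty (fun i hi => by show i ≤ n; omega))
    have hle : dV S W {w : G × ℕ | w.2 ≤ n} (p j) ≤ wtU W q (k - j) := dV_le hpos' hqmem
    have weq : wtU W q (k - j) = dV S W {w : G × ℕ | w.2 ≤ n} (p j) := by
      refine le_antisymm ?_ hle
      rw [htail]
      exact hge
    have hpj : p j = ((p j).1, n) := by
      rw [Prod.ext_iff]
      exact ⟨rfl, hjlev⟩
    refine hne ⟨(p j).1, k - j, q, ?_, hqend, hqslab, hqadj, ?_⟩
    · show p (j + 0) = ((p j).1, n)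
      rw [← hpj]
      rfl
    · rw [dUslab_eq, ← hpj, weq]
  have hsub : TU S W x ⊆ ⋃ m ∈ Finset.range n, (fun y : G => (y, m)) '' {y : G | (y, m) ∈ TU S W x} := by
    intro u hu
    rw [Set.mem_iUnion]
    refine ⟨u.2, ?_⟩
    rw [Set.mem_iUnion]
    refine ⟨by simpa using hlev u hu, ⟨u.1, ?_, ?_⟩⟩
    · show (u.1, u.2) ∈ TU S W x
      simpa using hu
    · simp
  exact hinf (Set.Finite.subset (Set.Finite.biUnion (Finset.range n).finite_toSet
    (fun m _ => (hfin m).image _)) hsub)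

theorem undirected_if (hSsym : ∀ s ∈ S, s⁻¹ ∈ S)
    (hpos : ∀ u v : G × ℕ, adjU S u v → 0 < W s(u, v)) (x : G)
    (h : ∀ n, 1 ≤ n → (TUn S W n x).Nonempty) : (TU S W x).Infinite := by
  classical
  have hpos' : ∀ u v : G × ℕ, adjU S u v → 0 ≤ W s(u, v) := fun u v h => (hpos u v h).le
  have H : ∀ n : ℕ, ∃ y, y ∈ TUn S W (n + 1) x := fun n => h (n + 1) (by omega)
  choose y hy using H
  have hy' : ∀ n, ∃ (k : ℕ) (p : ℕ → G × ℕ), p 0 = (y n, n + 1) ∧ p k = (x, 0) ∧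
      (∀ j ≤ k, (p j).2 ≤ n + 1) ∧ (∀ j < k, adjU S (p j) (p (j + 1))) ∧
      wtU W p k = dUslab S W (n + 1) (y n, n + 1) := hy
  choose k γ h0 hend hslab hadj hwt using hy'
  have hwt' : ∀ n, wtU W (γ n) (k n) = dV S W {w : G × ℕ | w.2 ≤ n + 1} (γ n 0) := by
    intro n
    rw [h0 n, hwt n, dUslab_eq]
  have hlev0 : ∀ n, (γ n 0).2 = n + 1 := fun n => by rw [h0 n]
  have hlevk : ∀ n, (γ n (k n)).2 = 0 := fun n => by rw [hend n]
  have hkn : ∀ n, n + 1 ≤ k n := by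
    intro n
    have h1 := level_ge_sub (hadj n) (k n) le_rfl
    have h2 := hlev0 n
    have h3 := hlevk n
    omega
  have hinj : ∀ n, ∀ i ≤ k n, ∀ j ≤ k n, i < j → γ n i ≠ γ n j := fun n =>
    geodesic_inj hpos rfl (hlevk n) (fun t ht => hslab n t ht) (hadj n) (hwt' n)
  set ρ : ℕ → ℕ → G × ℕ := fun n t => γ n (k n - t) with hρ
  have hρ0 : ∀ n, ρ n 0 = (x, 0) := fun n => by
    show γ n (k n - 0) = (x, 0)
    rw [Nat.sub_zero, hend n]
  have hρadj : ∀ n t, t < k n → adjU S (ρ n (t + 1)) (ρ n t) := by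
    intro n t ht
    have e1 : k n - t = (k n - (t + 1)) + 1 := by omega
    show adjU S (γ n (k n - (t + 1))) (γ n (k n - t))
    rw [e1]
    exact hadj n (k n - (t + 1)) (by omega)
  set Pers : ∀ m : ℕ, (Fin (m + 1) → G × ℕ) → Prop :=
    fun m w => {n : ℕ | m ≤ k n ∧ ∀ t : Fin (m + 1), ρ n (t : ℕ) = w t}.Infinite with hPers
  have hbase : Pers 0 (fun _ => (x, 0)) := by
    refine Set.infinite_of_injective_forall_mem (f := fun n : ℕ => n) (fun a b hab => hab) ?_
    intro n
    refine ⟨Nat.zero_le _, fun t => ?_⟩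
    have ht : (t : ℕ) = 0 := by omega
    rw [ht, hρ0 n]
  have hstep : ∀ (m : ℕ) (w : Fin (m + 1) → G × ℕ), Pers m w →
      ∃ w' : Fin (m + 2) → G × ℕ, Pers (m + 1) w' ∧
        ∀ t : Fin (m + 1), w' t.castSucc = w t := by
    intro m w hw
    set N' : Set ℕ := {n | (m ≤ k n ∧ ∀ t : Fin (m + 1), ρ n (t : ℕ) = w t) ∧ m + 1 ≤ n}
      with hN'
    have hN'inf : N'.Infinite := by
      refine Set.Infinite.mono ?_ (hw.diff (Set.finite_Iio (m + 1)))
      rintro nn ⟨hn1, hn2⟩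
      exact ⟨hn1, by simpa using hn2⟩
    have hN'k : ∀ n ∈ N', m + 1 ≤ k n := by
      intro n hn
      have := hkn n
      have := hn.2
      omega
    have hfin : {v : G × ℕ | adjU S (w (Fin.last m)) v}.Finite := adjU_finite S _
    haveI : Finite ↥{v : G × ℕ | adjU S (w (Fin.last m)) v} := hfin.to_subtype
    haveI : Infinite ↥N' := hN'inf.to_subtype
    have hmap : ∀ n : ↥N', adjU S (w (Fin.last m)) (ρ (n : ℕ) (m + 1)) := by
      rintro ⟨n, hn⟩
      have h1 : ρ n m = w (Fin.last m) := by
        have := hn.1.2 (Fin.last m)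
        simpa using this
      have h2 := hρadj n m (by have := hN'k n hn; omega)
      rw [← h1]
      exact adjU_symm hSsym h2
    set Φ : ↥N' → ↥{v : G × ℕ | adjU S (w (Fin.last m)) v} :=
      fun n => ⟨ρ (n : ℕ) (m + 1), hmap n⟩ with hΦ
    obtain ⟨b, hb⟩ := Finite.exists_infinite_fiber Φ
    haveI := hb
    have hMinf : {n : ℕ | n ∈ N' ∧ ρ n (m + 1) = (b : G × ℕ)}.Infinite := by
      refine Set.infinite_of_injective_forall_mem
        (f := fun q : ↥(Φ ⁻¹' {b}) => ((q : ↥N') : ℕ)) ?_ ?_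
      · intro a b2 hab
        exact Subtype.ext (Subtype.ext hab)
      · rintro ⟨⟨n, hn⟩, hq⟩
        refine ⟨hn, ?_⟩
        have : Φ ⟨n, hn⟩ = b := hq
        exact congrArg Subtype.val this
    refine ⟨Fin.snoc w (b : G × ℕ), ?_, fun t => by simp⟩
    refine Set.Infinite.mono ?_ hMinf
    rintro n ⟨hn, hρb⟩
    refine ⟨hN'k n hn, fun t => ?_⟩
    rcases Nat.lt_or_ge (t : ℕ) (m + 1) with hlt | hge
    · have e : t = (⟨(t : ℕ), hlt⟩ : Fin (m + 1)).castSucc := by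
        apply Fin.ext
        simp
      rw [e, Fin.snoc_castSucc]
      have := hn.1.2 ⟨(t : ℕ), hlt⟩
      simpa using this
    · have e : t = Fin.last (m + 1) := by
        apply Fin.ext
        simp
        omega
      rw [e, Fin.snoc_last]
      simpa using hρb
  let F : ∀ m : ℕ, {w : Fin (m + 1) → G × ℕ // Pers m w} := fun m => Nat.rec
    ⟨fun _ => (x, 0), hbase⟩
    (fun m ih => ⟨Classical.choose (hstep m ih.val ih.prop),
      (Classical.choose_spec (hstep m ih.val ih.prop)).1⟩) m
  have hFsucc : ∀ m (t : Fin (m + 1)), (F (m + 1)).val t.castSucc = (F m).val t :=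
    fun m t => (Classical.choose_spec (hstep m (F m).val (F m).prop)).2 t
  set v : ℕ → G × ℕ := fun m => (F m).val (Fin.last m) with hv
  have hv0 : v 0 = (x, 0) := rfl
  have hcoh : ∀ m t (ht : t ≤ m), (F m).val ⟨t, by omega⟩ = v t := by
    intro m
    induction m with
    | zero =>
      intro t ht
      have h0' : t = 0 := by omega
      subst h0'
      rfl
    | succ m ih =>
      intro t ht
      rcases Nat.lt_or_ge t (m + 1) with hlt | hge
      · have e : (⟨t, by omega⟩ : Fin (m + 2)) = (⟨t, hlt⟩ : Fin (m + 1)).castSucc := by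
          apply Fin.ext
          simp
        rw [e, hFsucc m ⟨t, hlt⟩]
        exact ih t (by omega)
      · have e : t = m + 1 := by omega
        subst e
        exact congrArg (F (m + 1)).val (Fin.ext rfl)
  have hNm : ∀ m, {n : ℕ | m ≤ k n ∧ ∀ t ≤ m, ρ n t = v t}.Infinite := by
    intro m
    refine Set.Infinite.mono ?_ ((F m).prop)
    intro n hn
    refine ⟨hn.1, fun t ht => ?_⟩
    have := hn.2 ⟨t, by omega⟩
    rw [← hcoh m t ht]
    simpa using this
  have hvinj : Function.Injective v := by
    have key : ∀ a b : ℕ, a < b → v a ≠ v b := by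
      intro a b hab heq
      obtain ⟨n, hn⟩ := (hNm b).nonempty
      have hbk : b ≤ k n := hn.1
      have h1 : ρ n a = v a := hn.2 a (by omega)
      have h2 : ρ n b = v b := hn.2 b le_rfl
      refine hinj n (k n - b) (by omega) (k n - a) (by omega) (by omega) ?_
      show ρ n b = ρ n a
      rw [h1, h2, heq]
    intro a b hab
    rcases Nat.lt_trichotomy a b with hl | he | hg
    · exact absurd hab (key a b hl)
    · exact he
    · exact absurd hab.symm (key b a hg)
  have hvmem : ∀ m, v m ∈ TU S W x := by
    intro m
    set τ : ℕ → G × ℕ := fun t => v (m - t) with hτ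
    have hτ0 : τ 0 = v m := by
      show v (m - 0) = v m
      rw [Nat.sub_zero]
    have hτm : τ m = (x, 0) := by
      show v (m - m) = (x, 0)
      rw [Nat.sub_self, hv0]
    have hvadj : ∀ a, adjU S (v (a + 1)) (v a) := by
      intro a
      obtain ⟨n, hn⟩ := (hNm (a + 1)).nonempty
      have hak : a + 1 ≤ k n := hn.1
      have h1 : ρ n a = v a := hn.2 a (by omega)
      have h2 : ρ n (a + 1) = v (a + 1) := hn.2 (a + 1) le_rfl
      rw [← h1, ← h2]
      exact hρadj n a (by omega)
    have hτadj : ∀ t < m, adjU S (τ t) (τ (t + 1)) := by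
      intro t ht
      have e : m - t = (m - (t + 1)) + 1 := by omega
      show adjU S (v (m - t)) (v (m - (t + 1)))
      rw [e]
      exact hvadj (m - (t + 1))
    have hτend : (τ m).2 = 0 := by rw [hτm]
    have hτmem : wtU W τ m ∈ psetU S W Set.univ (v m) :=
      ⟨m, τ, hτ0, hτend, fun _ _ => trivial, hτadj, rfl⟩
    have hle : dV S W Set.univ (v m) ≤ wtU W τ m := dV_le hpos' hτmem
    have hge : ∀ r ∈ psetU S W Set.univ (v m), wtU W τ m ≤ r := by
      rintro r ⟨l, q, hq0, hql, -, hqadj, rfl⟩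
      set L := (Finset.range (l + 1)).sup (fun t => (q t).2) with hL
      obtain ⟨n, hnmem, hnL⟩ := infinite_nat_exists_ge (hNm m) (L + m)
      have hmk : m ≤ k n := hnmem.1
      have htail := tail_geodesic hpos' rfl (hlevk n) (fun t ht => hslab n t ht)
        (hadj n) (hwt' n) (j := k n - m) (by omega)
      have hkk : k n - (k n - m) = m := by omega
      have hagree : ∀ t ≤ m, γ n ((k n - m) + t) = τ t := by
        intro t ht
        have e : (k n - m) + t = k n - (m - t) := by omega
        rw [e]
        show ρ n (m - t) = τ t
        rw [hnmem.2 (m - t) (by omega)]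
      have hwteq : wtU W (fun t => γ n ((k n - m) + t)) m = wtU W τ m := by
        refine Finset.sum_congr rfl fun t ht => ?_
        rw [Finset.mem_range] at ht
        show W s(γ n (k n - m + t), γ n (k n - m + (t + 1))) = W s(τ t, τ (t + 1))
        rw [hagree t (by omega), hagree (t + 1) (by omega)]
      have hstart : γ n ((k n - m) + 0) = v m := by
        have := hagree 0 (by omega)
        rw [this, hτ0]
      rw [hkk, hwteq] at htail
      rw [Nat.add_zero] at hstart
      rw [hstart] at htail
      have hqmem : wtU W q l ∈ psetU S W {w : G × ℕ | w.2 ≤ n + 1} (v m) := by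
        refine ⟨l, q, hq0, hql, fun t ht => ?_, hqadj, rfl⟩
        have hqL : (q t).2 ≤ L := Finset.le_sup (f := fun t => (q t).2)
          (Finset.mem_range.mpr (by omega))
        show (q t).2 ≤ n + 1
        omega
      rw [htail]
      exact dV_le hpos' hqmem
    have heq : wtU W τ m = dV S W Set.univ (v m) :=
      le_antisymm (le_csInf ⟨_, hτmem⟩ hge) hle
    exact ⟨m, τ, hτ0, hτm, hτadj, by rw [dU_eq]; exact heq⟩
  exact Set.infinite_of_injective_forall_mem hvinj hvmem

end Det

section Dir
variable {G : Type*} [Group G] {S : Finset G} {W : (G × ℕ) × (G × ℕ) → ℝ}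

def psetD (S : Finset G) (W : (G × ℕ) × (G × ℕ) → ℝ) (u : G × ℕ) : Set ℝ :=
  {r : ℝ | ∃ (k : ℕ) (p : ℕ → G × ℕ), p 0 = u ∧ (p k).2 = 0 ∧
    (∀ j < k, adjD S (p j) (p (j + 1))) ∧ r = wtD W p k}

lemma dD_eq (S : Finset G) (W : (G × ℕ) × (G × ℕ) → ℝ) (u : G × ℕ) :
    dD S W u = sInf (psetD S W u) := rfl

lemma wtD_nonneg (hpos : ∀ u v : G × ℕ, adjD S u v → 0 ≤ W (u, v)) {p : ℕ → G × ℕ} {k : ℕ}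
    (hp : ∀ j < k, adjD S (p j) (p (j + 1))) : 0 ≤ wtD W p k :=
  Finset.sum_nonneg fun j hj => hpos _ _ (hp j (Finset.mem_range.mp hj))

lemma bddBelow_psetD (hpos : ∀ u v : G × ℕ, adjD S u v → 0 ≤ W (u, v)) {u : G × ℕ} :
    BddBelow (psetD S W u) := by
  refine ⟨0, fun r hr => ?_⟩
  obtain ⟨k, p, -, -, hadj, rfl⟩ := hr
  exact wtD_nonneg hpos hadj

lemma dD_le (hpos : ∀ u v : G × ℕ, adjD S u v → 0 ≤ W (u, v)) {u : G × ℕ}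
    {r : ℝ} (hr : r ∈ psetD S W u) : dD S W u ≤ r :=
  csInf_le (bddBelow_psetD hpos) hr

lemma levelD {p : ℕ → G × ℕ} {k : ℕ} (hadj : ∀ t < k, adjD S (p t) (p (t + 1))) :
    ∀ t ≤ k, (p t).2 + t = (p 0).2 := by
  intro t ht
  induction t with
  | zero => simp
  | succ n ih =>
    have h1 := ih (by omega)
    have h2 := (hadj n (by omega)).1
    omega

lemma concatD_mem {u : G × ℕ} {p q : ℕ → G × ℕ} {j l : ℕ}
    (hp0 : p 0 = u) (hpadj : ∀ t < j, adjD S (p t) (p (t + 1)))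
    (hq0 : q 0 = p j) (hql : (q l).2 = 0)
    (hqadj : ∀ t < l, adjD S (q t) (q (t + 1))) :
    wtD W p j + wtD W q l ∈ psetD S W u := by
  set c : ℕ → G × ℕ := fun t => if t < j then p t else q (t - j) with hc
  have hc1 : ∀ t ≤ j, c t = p t := by
    intro t ht
    rcases lt_or_eq_of_le ht with h | h
    · simp [hc, h]
    · subst h; simp [hc, hq0]
  have hc2 : ∀ t, j ≤ t → c t = q (t - j) := by
    intro t ht; simp [hc, Nat.not_lt.mpr ht]
  have hwt : wtD W c (j + l) = wtD W p j + wtD W q l := by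
    rw [wtD, Finset.sum_range_add]
    congr 1
    · refine Finset.sum_congr rfl fun t ht => ?_
      rw [Finset.mem_range] at ht
      rw [hc1 t (by omega), hc1 (t + 1) (by omega)]
    · refine Finset.sum_congr rfl fun t ht => ?_
      rw [Finset.mem_range] at ht
      rw [hc2 (j + t) (by omega), hc2 (j + t + 1) (by omega)]
      have e1 : j + t - j = t := by omega
      have e2 : j + t + 1 - j = t + 1 := by omega
      rw [e1, e2]
  refine ⟨j + l, c, ?_, ?_, ?_, hwt.symm⟩
  · rw [hc1 0 (by omega), hp0]
  · rw [hc2 (j + l) (by omega)]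
    simpa using hql
  · intro t ht
    rcases lt_or_ge t j with h | h
    · rw [hc1 t h.le, hc1 (t + 1) (by omega)]
      exact hpadj t h
    · rw [hc2 t h, hc2 (t + 1) (by omega)]
      have h2 : t + 1 - j = (t - j) + 1 := by omega
      rw [h2]
      exact hqadj (t - j) (by omega)

lemma tailD_geodesic (hpos : ∀ u v : G × ℕ, adjD S u v → 0 ≤ W (u, v))
    {u : G × ℕ} {p : ℕ → G × ℕ} {k : ℕ}
    (hp0 : p 0 = u) (hpk : (p k).2 = 0)
    (hadj : ∀ t < k, adjD S (p t) (p (t + 1)))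
    (hw : wtD W p k = dD S W u) {j : ℕ} (hj : j ≤ k) :
    wtD W (fun t => p (j + t)) (k - j) = dD S W (p j) := by
  set q : ℕ → G × ℕ := fun t => p (j + t) with hq
  have hq0 : q 0 = p j := by simp [hq]
  have hqend : (q (k - j)).2 = 0 := by
    have e : j + (k - j) = k := by omega
    show (p (j + (k - j))).2 = 0
    rw [e, hpk]
  have hqadj : ∀ t < k - j, adjD S (q t) (q (t + 1)) := fun t ht => hadj (j + t) (by omega)
  have hsplit : wtD W p k = wtD W p j + wtD W q (k - j) := by
    have hk' : j + (k - j) = k := by omega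
    have := Finset.sum_range_add (fun t => W (p t, p (t + 1))) j (k - j)
    rw [hk'] at this
    exact this
  have hmem0 : wtD W q (k - j) ∈ psetD S W (p j) := ⟨k - j, q, hq0, hqend, hqadj, rfl⟩
  have hle : dD S W (p j) ≤ wtD W q (k - j) := dD_le hpos hmem0
  refine le_antisymm ?_ hle
  by_contra hlt
  push_neg at hlt
  obtain ⟨r, hrmem, hrlt⟩ := exists_lt_of_csInf_lt ⟨_, hmem0⟩ hlt
  obtain ⟨l, q', hq'0, hq'l, hq'adj, rfl⟩ := hrmem
  have hmem := concatD_mem (W := W) hp0 (fun t ht => hadj t (by omega)) hq'0 hq'l hq'adj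
  have := dD_le hpos hmem
  rw [← hw] at this
  rw [hsplit] at this
  linarith

def SballSet (S : Finset G) : ℕ → Set G
  | 0 => {1}
  | (n + 1) => (fun p : G × G => p.1 * p.2) '' ((S : Set G) ×ˢ SballSet S n)

lemma SballSet_finite (S : Finset G) : ∀ n, (SballSet S n).Finite
  | 0 => Set.finite_singleton 1
  | (n + 1) => (((S : Set G).toFinite.prod (SballSet_finite S n)).image _)

lemma mem_SballSet {p : ℕ → G × ℕ} :
    ∀ (l : ℕ) (_ : ∀ t < l, adjD S (p t) (p (t + 1))), (p 0).1⁻¹ * (p l).1 ∈ SballSet S l := by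
  intro l
  induction l generalizing p with
  | zero => intro _; simp [SballSet]
  | succ n ih =>
    intro hadj
    have h1 : (p 0).1⁻¹ * (p 1).1 ∈ S := (hadj 0 (by omega)).2
    have h2 := ih (p := fun t => p (t + 1)) (fun t ht => hadj (t + 1) (by omega))
    refine ⟨((p 0).1⁻¹ * (p 1).1, (p 1).1⁻¹ * (p (n + 1)).1), ⟨h1, h2⟩, ?_⟩
    show (p 0).1⁻¹ * (p 1).1 * ((p 1).1⁻¹ * (p (n + 1)).1) = (p 0).1⁻¹ * (p (n + 1)).1
    group

theorem directed_main (hpos : ∀ u v : G × ℕ, adjD S u v → 0 < W (u, v)) (x : G) :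
    (∀ n m : ℕ, 1 ≤ m → m ≤ n →
      (TDn S W n x).Nonempty → (TDn S W m x).Nonempty) ∧
    ((TD S W x).Infinite ↔ ∀ n : ℕ, 1 ≤ n → (TDn S W n x).Nonempty) := by
  have hpos' : ∀ u v : G × ℕ, adjD S u v → 0 ≤ W (u, v) := fun u v h => (hpos u v h).le
  -- tails of geodesics lie in the tree, with the right level
  have htail : ∀ u ∈ TD S W x, ∀ m : ℕ, m ≤ u.2 → ∃ z ∈ TD S W x, z.2 = m := by
    rintro u ⟨l, p, h0, hl, hadj, hwt⟩ m hm
    have hlev := levelD hadj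
    have hl2 : (p l).2 = 0 := by rw [hl]
    have hlu : l = u.2 := by
      have := hlev l le_rfl
      rw [h0] at this
      omega
    set j := l - m with hj
    have hjl : j ≤ l := by omega
    have hpj : (p j).2 = m := by
      have := hlev j hjl
      rw [h0] at this
      omega
    rw [← h0] at hwt
    have := tailD_geodesic hpos' rfl hl2 hadj hwt hjl
    refine ⟨p j, ⟨l - j, fun t => p (j + t), rfl, ?_, fun t ht => hadj (j + t) (by omega), this⟩, hpj⟩
    have e : j + (l - j) = l := by omega
    show p (j + (l - j)) = (x, 0)
    rw [e, hl]
  constructor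
  · rintro n m h1m hmn ⟨y, hy⟩
    obtain ⟨z, hz, hzlev⟩ := htail (y, n) hy m (by simpa using hmn)
    refine ⟨z.1, ?_⟩
    show (z.1, m) ∈ TD S W x
    have : z = (z.1, m) := by
      rw [Prod.ext_iff]
      exact ⟨rfl, hzlev⟩
    rw [← this]
    exact hz
  constructor
  · intro hinf n h1n
    by_contra hne
    have hlev : ∀ u ∈ TD S W x, u.2 < n := by
      intro u hu
      by_contra hun
      push_neg at hun
      obtain ⟨z, hz, hzlev⟩ := htail u hu n hun
      refine hne ⟨z.1, ?_⟩
      show (z.1, n) ∈ TD S W x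
      have : z = (z.1, n) := by
        rw [Prod.ext_iff]
        exact ⟨rfl, hzlev⟩
      rw [← this]
      exact hz
    have hball : ∀ m : ℕ, {y : G | (y, m) ∈ TD S W x} ⊆ (fun z => x * z⁻¹) '' SballSet S m := by
      rintro m yy ⟨l, p, h0, hl, hadj, -⟩
      have hlev2 := levelD hadj
      have hlm : l = m := by
        have := hlev2 l le_rfl
        rw [h0, hl] at this
        simpa using this
      subst hlm
      have := mem_SballSet l hadj
      rw [h0, hl] at this
      refine ⟨yy⁻¹ * x, this, ?_⟩
      group
    have hsub : TD S W x ⊆ ⋃ m ∈ Finset.range n,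
        (fun y : G => (y, m)) '' {y : G | (y, m) ∈ TD S W x} := by
      intro u hu
      rw [Set.mem_iUnion]
      refine ⟨u.2, ?_⟩
      rw [Set.mem_iUnion]
      refine ⟨by simpa using hlev u hu, ⟨u.1, ?_, ?_⟩⟩
      · show (u.1, u.2) ∈ TD S W x
        simpa using hu
      · simp
    refine hinf (Set.Finite.subset (Set.Finite.biUnion (Finset.range n).finite_toSet
      (fun m _ => ?_)) hsub)
    exact (((SballSet_finite S m).image _).subset (hball m)).image _
  · intro h
    have H : ∀ n : ℕ, ∃ yy, yy ∈ TDn S W (n + 1) x := fun n => h (n + 1) (by omega)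
    choose yy hyy using H
    refine Set.infinite_of_injective_forall_mem (f := fun n : ℕ => ((yy n, n + 1) : G × ℕ)) ?_ hyy
    intro a b hab
    have := congrArg Prod.snd hab
    simpa using this

end Dir

section Idx
variable {G : Type*} [Group G] {S : Finset G}

/-- Index type for finite paths. -/
def PathIdx (G : Type*) := Σ k : ℕ, (Fin (k + 1) → G × ℕ)

instance [Countable G] : Countable (PathIdx G) := by
  unfold PathIdx
  infer_instance

def toPath (j : PathIdx G) : ℕ → G × ℕ := fun t => j.2 ⟨min t j.1, by omega⟩

lemma toPath_eq (j : PathIdx G) {t : ℕ} (h : t ≤ j.1) : toPath j t = j.2 ⟨t, by omega⟩ :=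
  congrArg j.2 (Fin.ext (min_eq_left h))

def GoodB (S : Finset G) (u : G × ℕ) (j : PathIdx G) : Prop :=
  toPath j 0 = u ∧ (toPath j j.1).2 = 0 ∧ ∀ t < j.1, adjU S (toPath j t) (toPath j (t + 1))

def GoodT (S : Finset G) (u v : G × ℕ) (j : PathIdx G) : Prop :=
  toPath j 0 = u ∧ toPath j j.1 = v ∧ ∀ t < j.1, adjU S (toPath j t) (toPath j (t + 1))

lemma idx_toPath {p : ℕ → G × ℕ} {k : ℕ} :
    ∀ t ≤ k, toPath (⟨k, fun i => p i⟩ : PathIdx G) t = p t := by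
  intro t ht
  exact toPath_eq _ ht

lemma wt_idx (W : Sym2 (G × ℕ) → ℝ) {p : ℕ → G × ℕ} {k : ℕ} :
    wtU W (toPath (⟨k, fun i => p i⟩ : PathIdx G)) k = wtU W p k := by
  refine Finset.sum_congr rfl fun t ht => ?_
  rw [Finset.mem_range] at ht
  rw [idx_toPath t (by omega), idx_toPath (t + 1) (by omega)]

lemma psetB_eq_range (W : Sym2 (G × ℕ) → ℝ) (u : G × ℕ) :
    {r : ℝ | ∃ (n : ℕ) (p : ℕ → G × ℕ), p 0 = u ∧ (p n).2 = 0 ∧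
      (∀ j < n, adjU S (p j) (p (j + 1))) ∧ r = wtU W p n} =
    Set.range (fun i : {j : PathIdx G // GoodB S u j} => wtU W (toPath i.1) i.1.1) := by
  ext r
  constructor
  · rintro ⟨n, p, h0, hn, hadj, rfl⟩
    have hG : GoodB S u (⟨n, fun i => p i⟩ : PathIdx G) := by
      refine ⟨?_, ?_, fun t ht => ?_⟩
      · rw [idx_toPath 0 (by omega)]; exact h0
      · show (toPath (⟨n, fun i => p i⟩ : PathIdx G) n).2 = 0
        rw [idx_toPath n le_rfl]; exact hn
      · have ht' : t < n := ht
        rw [idx_toPath t (by omega), idx_toPath (t + 1) (by omega)]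
        exact hadj t ht'
    exact ⟨⟨_, hG⟩, wt_idx W⟩
  · rintro ⟨i, rfl⟩
    exact ⟨i.1.1, toPath i.1, i.2.1, i.2.2.1, i.2.2.2, rfl⟩

lemma dU_eq_iInf (W : Sym2 (G × ℕ) → ℝ) (u : G × ℕ) :
    dU S W u = ⨅ i : {j : PathIdx G // GoodB S u j}, wtU W (toPath i.1) i.1.1 := by
  rw [iInf]
  exact congrArg sInf (psetB_eq_range W u)

lemma mem_TU_iff (W : Sym2 (G × ℕ) → ℝ) (x : G) (u : G × ℕ) :
    u ∈ TU S W x ↔ ∃ i : {j : PathIdx G // GoodT S u (x, 0) j},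
      wtU W (toPath i.1) i.1.1 = dU S W u := by
  constructor
  · rintro ⟨n, p, h0, hn, hadj, hw⟩
    have hG : GoodT S u (x, 0) (⟨n, fun i => p i⟩ : PathIdx G) := by
      refine ⟨?_, ?_, fun t ht => ?_⟩
      · rw [idx_toPath 0 (by omega)]; exact h0
      · show toPath (⟨n, fun i => p i⟩ : PathIdx G) n = (x, 0)
        rw [idx_toPath n le_rfl]; exact hn
      · have ht' : t < n := ht
        rw [idx_toPath t (by omega), idx_toPath (t + 1) (by omega)]
        exact hadj t ht'
    exact ⟨⟨_, hG⟩, (wt_idx W).trans hw⟩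
  · rintro ⟨i, hw⟩
    exact ⟨i.1.1, toPath i.1, i.2.1, i.2.2.1, i.2.2.2, hw⟩

variable {α : Type*} [MeasurableSpace α]

lemma measurable_wt' {Wf : Sym2 (G × ℕ) → α → ℝ}
    (hWf : ∀ e, IsEdgeU S e → Measurable (Wf e)) {p : ℕ → G × ℕ} {k : ℕ}
    (hadj : ∀ t < k, adjU S (p t) (p (t + 1))) :
    Measurable (fun a => wtU (fun e => Wf e a) p k) := by
  have : (fun a => wtU (fun e => Wf e a) p k) =
      fun a => ∑ t ∈ Finset.range k, Wf s(p t, p (t + 1)) a := rfl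
  rw [this]
  refine Finset.measurable_sum _ fun t ht => ?_
  exact hWf _ ⟨_, _, rfl, hadj t (Finset.mem_range.mp ht)⟩

lemma measurable_dU [Countable G] {Wf : Sym2 (G × ℕ) → α → ℝ}
    (hWf : ∀ e, IsEdgeU S e → Measurable (Wf e)) (u : G × ℕ) :
    Measurable (fun a => dU S (fun e => Wf e a) u) := by
  have h : (fun a => dU S (fun e => Wf e a) u) =
      fun a => ⨅ i : {j : PathIdx G // GoodB S u j}, wtU (fun e => Wf e a) (toPath i.1) i.1.1 :=
    funext fun a => dU_eq_iInf _ u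
  rw [h]
  exact Measurable.iInf fun i => measurable_wt' hWf i.2.2.2

lemma measurableSet_TUmem [Countable G] {Wf : Sym2 (G × ℕ) → α → ℝ}
    (hWf : ∀ e, IsEdgeU S e → Measurable (Wf e)) (x : G) (u : G × ℕ) :
    MeasurableSet {a | u ∈ TU S (fun e => Wf e a) x} := by
  have h : {a | u ∈ TU S (fun e => Wf e a) x} = ⋃ i : {j : PathIdx G // GoodT S u (x, 0) j},
      {a | wtU (fun e => Wf e a) (toPath i.1) i.1.1 = dU S (fun e => Wf e a) u} := by
    ext a
    rw [Set.mem_setOf_eq, mem_TU_iff]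
    simp only [Set.mem_iUnion, Set.mem_setOf_eq]
  rw [h]
  exact MeasurableSet.iUnion fun i =>
    measurableSet_eq_fun (measurable_wt' hWf i.2.2.2) (measurable_dU hWf u)

/-- Congruence: the tree only depends on the weights of actual edges. -/
lemma wt_congr {W W' : Sym2 (G × ℕ) → ℝ} (h : ∀ e, IsEdgeU S e → W e = W' e)
    {p : ℕ → G × ℕ} {k : ℕ} (hadj : ∀ t < k, adjU S (p t) (p (t + 1))) :
    wtU W p k = wtU W' p k := by
  refine Finset.sum_congr rfl fun t ht => ?_
  exact h _ ⟨_, _, rfl, hadj t (Finset.mem_range.mp ht)⟩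

lemma dU_congr {W W' : Sym2 (G × ℕ) → ℝ} (h : ∀ e, IsEdgeU S e → W e = W' e) (u : G × ℕ) :
    dU S W u = dU S W' u := by
  refine congrArg sInf (Set.ext fun r => ?_)
  constructor
  · rintro ⟨n, p, h0, hn, hadj, rfl⟩
    exact ⟨n, p, h0, hn, hadj, wt_congr h hadj⟩
  · rintro ⟨n, p, h0, hn, hadj, rfl⟩
    exact ⟨n, p, h0, hn, hadj, (wt_congr h hadj).symm⟩

lemma TU_congr {W W' : Sym2 (G × ℕ) → ℝ} (h : ∀ e, IsEdgeU S e → W e = W' e) (x : G) :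
    TU S W x = TU S W' x := by
  ext u
  constructor
  · rintro ⟨n, p, h0, hn, hadj, hw⟩
    exact ⟨n, p, h0, hn, hadj, by rw [← wt_congr h hadj, ← dU_congr h u]; exact hw⟩
  · rintro ⟨n, p, h0, hn, hadj, hw⟩
    exact ⟨n, p, h0, hn, hadj, by rw [wt_congr h hadj, dU_congr h u]; exact hw⟩

/-- The shift map on `G × ℕ`. -/
def φm (g : G) : G × ℕ → G × ℕ := fun u => (g * u.1, u.2)

lemma φm_comp_inv (g : G) (u : G × ℕ) : φm g⁻¹ (φm g u) = u := by
  unfold φm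
  simp

lemma adjU_map (g : G) {u v : G × ℕ} : adjU S (φm g u) (φm g v) ↔ adjU S u v := by
  have h1 : (g * u.1)⁻¹ * (g * v.1) = u.1⁻¹ * v.1 := by group
  constructor
  · rintro (⟨a, b, c⟩ | ⟨a, b⟩)
    · refine Or.inl ⟨a, b, ?_⟩
      have c' : (g * u.1)⁻¹ * (g * v.1) ∈ S := c
      rwa [h1] at c'
    · refine Or.inr ⟨?_, b⟩
      have a' : g * u.1 = g * v.1 := a
      exact mul_left_cancel a'
  · rintro (⟨a, b, c⟩ | ⟨a, b⟩)
    · refine Or.inl ⟨a, b, ?_⟩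
      show (g * u.1)⁻¹ * (g * v.1) ∈ S
      rwa [h1]
    · refine Or.inr ⟨?_, b⟩
      show g * u.1 = g * v.1
      rw [a]

lemma isEdgeU_map (g : G) (e : Sym2 (G × ℕ)) :
    IsEdgeU S (Sym2.map (φm g) e) ↔ IsEdgeU S e := by
  constructor
  · rintro ⟨u', v', he, hadj⟩
    refine ⟨φm g⁻¹ u', φm g⁻¹ v', ?_, (adjU_map g⁻¹).mpr hadj⟩
    have h2 : Sym2.map (φm g⁻¹) (Sym2.map (φm g) e) = e := by
      rw [Sym2.map_map]
      have : φm g⁻¹ ∘ φm g = id := funext fun u => φm_comp_inv g u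
      rw [this, Sym2.map_id, id_eq]
    rw [← h2, he]
    rfl
  · rintro ⟨u, v, he, hadj⟩
    refine ⟨φm g u, φm g v, ?_, (adjU_map g).mpr hadj⟩
    rw [he]
    rfl

lemma dU_map (g : G) (W : Sym2 (G × ℕ) → ℝ) (u : G × ℕ) :
    dU S (fun e => W (Sym2.map (φm g) e)) u = dU S W (φm g u) := by
  refine congrArg sInf (Set.ext fun r => ?_)
  constructor
  · rintro ⟨n, p, h0, hn, hadj, rfl⟩
    refine ⟨n, fun t => φm g (p t), by show φm g (p 0) = φm g u; rw [h0], hn,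
      fun t ht => (adjU_map g).mpr (hadj t ht), ?_⟩
    refine Finset.sum_congr rfl fun t ht => ?_
    show W (Sym2.map (φm g) s(p t, p (t + 1))) = W s(φm g (p t), φm g (p (t + 1)))
    rw [Sym2.map_pair_eq]
  · rintro ⟨n, q, h0, hn, hadj, rfl⟩
    refine ⟨n, fun t => φm g⁻¹ (q t), by show φm g⁻¹ (q 0) = u; rw [h0, φm_comp_inv], hn,
      fun t ht => (adjU_map g⁻¹).mpr (hadj t ht), ?_⟩
    refine Finset.sum_congr rfl fun t ht => ?_
    show W s(q t, q (t + 1)) = W (Sym2.map (φm g) s(φm g⁻¹ (q t), φm g⁻¹ (q (t + 1))))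
    rw [Sym2.map_pair_eq]
    have h1 : φm g (φm g⁻¹ (q t)) = q t := by simpa using φm_comp_inv g⁻¹ (q t)
    have h2 : φm g (φm g⁻¹ (q (t + 1))) = q (t + 1) := by simpa using φm_comp_inv g⁻¹ (q (t + 1))
    rw [h1, h2]

lemma TU_map_mem (g : G) (W : Sym2 (G × ℕ) → ℝ) {x y : G} {m : ℕ}
    (h : (y, m) ∈ TU S (fun e => W (Sym2.map (φm g) e)) x) :
    (g * y, m) ∈ TU S W (g * x) := by
  obtain ⟨n, p, h0, hn, hadj, hw⟩ := h
  refine ⟨n, fun t => φm g (p t), by show φm g (p 0) = (g * y, m); rw [h0]; rfl,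
    by show φm g (p n) = (g * x, 0); rw [hn]; rfl,
    fun t ht => (adjU_map g).mpr (hadj t ht), ?_⟩
  have h1 : wtU W (fun t => φm g (p t)) n = wtU (fun e => W (Sym2.map (φm g) e)) p n := by
    refine Finset.sum_congr rfl fun t ht => ?_
    show W s(φm g (p t), φm g (p (t + 1))) = W (Sym2.map (φm g) s(p t, p (t + 1)))
    rw [Sym2.map_pair_eq]
  have h2 : dU S W (φm g (y, m)) = dU S (fun e => W (Sym2.map (φm g) e)) (y, m) :=
    (dU_map g W _).symm
  rw [h1, hw]
  exact h2.symm

lemma TU_map_iff (g : G) (W : Sym2 (G × ℕ) → ℝ) (x y : G) (m : ℕ) :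
    (g * y, m) ∈ TU S W (g * x) ↔ (y, m) ∈ TU S (fun e => W (Sym2.map (φm g) e)) x := by
  constructor
  · intro h
    have hfun : (fun e => W (Sym2.map (φm g) (Sym2.map (φm g⁻¹) e))) = W := by
      funext e
      rw [Sym2.map_map]
      have hc : φm g ∘ φm g⁻¹ = id := funext fun u => by simpa using φm_comp_inv g⁻¹ u
      rw [hc, Sym2.map_id, id_eq]
    have harg : (g * y, m) ∈ TU S
        (fun e => W (Sym2.map (φm g) (Sym2.map (φm g⁻¹) e))) (g * x) := by
      rw [hfun]
      exact h
    have h2 := TU_map_mem (S := S) g⁻¹ (fun e => W (Sym2.map (φm g) e))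
      (x := g * x) (y := g * y) (m := m) harg
    have e1 : g⁻¹ * (g * y) = y := by group
    have e2 : g⁻¹ * (g * x) = x := by group
    rwa [e1, e2] at h2
  · exact TU_map_mem g W

end Idx

section Law
variable {Ω : Type*} [MeasurableSpace Ω] {P : Measure Ω} [IsProbabilityMeasure P]
variable {ι : Type*} [Countable ι] {μ : Measure ℝ} [IsProbabilityMeasure μ]

lemma map_restrict_pi {f : ι → Ω → ℝ} (hf : ∀ i, Measurable (f i))
    (hindep : iIndepFun f P) (hdist : ∀ i, P.map (f i) = μ)
    (T : Finset ι) :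
    P.map (fun ω => (fun i : ↥T => f i ω)) = Measure.pi (fun _ : ↥T => μ) := by
  classical
  refine (Measure.pi_eq fun s hs => ?_).symm
  set sets : ι → Set ℝ := fun j => if h : j ∈ T then s ⟨j, h⟩ else Set.univ with hsets
  have hmeas : ∀ j ∈ T, MeasurableSet (sets j) := by
    intro j hj
    simp only [hsets]
    rw [dif_pos hj]
    exact hs _
  have hpre : (fun ω => (fun i : ↥T => f i ω)) ⁻¹' (Set.pi Set.univ s) = ⋂ j ∈ T, f j ⁻¹' sets j := by
    ext ω
    simp only [Set.mem_preimage, Set.mem_pi, Set.mem_univ, forall_true_left, Set.mem_iInter]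
    constructor
    · intro h j hj
      simp only [hsets]
      rw [dif_pos hj]
      exact h ⟨j, hj⟩
    · intro h i
      have h2 := h i.1 i.2
      simp only [hsets] at h2
      rw [dif_pos i.2] at h2
      exact h2
  have hXmeas : Measurable (fun ω => (fun i : ↥T => f i ω)) :=
    measurable_pi_lambda _ fun i => hf i
  rw [Measure.map_apply hXmeas (MeasurableSet.univ_pi fun i => hs i), hpre,
    hindep.measure_inter_preimage_eq_mul T hmeas]
  have h3 : ∀ j ∈ T, P (f j ⁻¹' sets j) = μ (sets j) := by
    intro j hj
    rw [← hdist j, Measure.map_apply (hf j) ((hmeas j hj))]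
  rw [Finset.prod_congr rfl h3]
  rw [← Finset.prod_coe_sort T (fun j => μ (sets j))]
  refine Finset.prod_congr rfl fun i _ => ?_
  simp only [hsets]
  rw [dif_pos i.2]

lemma law_eq {f f' : ι → Ω → ℝ} (hf : ∀ i, Measurable (f i)) (hf' : ∀ i, Measurable (f' i))
    (hindep : iIndepFun f P)
    (hindep' : iIndepFun f' P)
    (hdist : ∀ i, P.map (f i) = μ) (hdist' : ∀ i, P.map (f' i) = μ) :
    P.map (fun ω (i : ι) => f i ω) = P.map (fun ω (i : ι) => f' i ω) := by
  have hX : Measurable (fun ω (i : ι) => f i ω) := measurable_pi_lambda _ hf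
  have hX' : Measurable (fun ω (i : ι) => f' i ω) := measurable_pi_lambda _ hf'
  haveI : IsProbabilityMeasure (P.map (fun ω (i : ι) => f i ω)) :=
    Measure.isProbabilityMeasure_map hX.aemeasurable
  haveI : IsProbabilityMeasure (P.map (fun ω (i : ι) => f' i ω)) :=
    Measure.isProbabilityMeasure_map hX'.aemeasurable
  refine MeasureTheory.ext_of_generate_finite (measurableCylinders (fun _ : ι => ℝ))
    generateFrom_measurableCylinders.symm isPiSystem_measurableCylinders (fun t ht => ?_) ?_
  · obtain ⟨T, SS, hSS, rfl⟩ := (mem_measurableCylinders t).mp ht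
    have hXT : Measurable (fun ω => (fun i : ↥T => f i ω)) :=
      measurable_pi_lambda _ fun i => hf i
    have hXT' : Measurable (fun ω => (fun i : ↥T => f' i ω)) :=
      measurable_pi_lambda _ fun i => hf' i
    have h1 : P.map (fun ω (i : ι) => f i ω) (cylinder T SS)
        = P.map (fun ω => (fun i : ↥T => f i ω)) SS := by
      rw [Measure.map_apply hX (MeasurableSet.cylinder T hSS), Measure.map_apply hXT hSS]
      rfl
    have h1' : P.map (fun ω (i : ι) => f' i ω) (cylinder T SS)
        = P.map (fun ω => (fun i : ↥T => f' i ω)) SS := by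
      rw [Measure.map_apply hX' (MeasurableSet.cylinder T hSS), Measure.map_apply hXT' hSS]
      rfl
    rw [h1, h1', map_restrict_pi hf hindep hdist T, map_restrict_pi hf' hindep' hdist' T]
  · simp only [measure_univ]

lemma iIndepFun_reindex {ι' : Type*} (σ : ι' ≃ ι) {f : ι → Ω → ℝ}
    (hindep : iIndepFun f P) :
    iIndepFun (fun i => f (σ i)) P := by
  classical
  rw [iIndepFun_iff_measure_inter_preimage_eq_mul]
  intro T sets hsets
  have h1 : (⋂ i ∈ T, f (σ i) ⁻¹' sets i) = ⋂ j ∈ T.image σ, f j ⁻¹' sets (σ.symm j) := by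
    ext ω
    simp only [Set.mem_iInter, Finset.mem_image]
    constructor
    · rintro h j ⟨i, hi, rfl⟩
      simpa only [Equiv.symm_apply_apply] using h i hi
    · intro h i hi
      have h4 := h (σ i) ⟨i, hi, rfl⟩
      simpa only [Equiv.symm_apply_apply] using h4
  have h2 := hindep.measure_inter_preimage_eq_mul (T.image σ)
    (sets := fun j => sets (σ.symm j)) (fun j hj => by
      obtain ⟨i, hi, rfl⟩ := Finset.mem_image.mp hj
      simpa only [Equiv.symm_apply_apply] using hsets i hi)
  rw [h1, h2, Finset.prod_image (fun i _ j _ hij => σ.injective hij)]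
  refine Finset.prod_congr rfl fun i _ => ?_
  simp only [Equiv.symm_apply_apply]

end Law

section Distinct
variable {Ω : Type*} [MeasurableSpace Ω] {P : Measure Ω} [IsProbabilityMeasure P]
variable {μ : Measure ℝ} [IsProbabilityMeasure μ]

lemma ae_sum_ne_aux {ι : Type*} {f : ι → Ω → ℝ} (hf : ∀ i, Measurable (f i))
    (hindep : iIndepFun f P)
    (hdist : ∀ i, P.map (f i) = μ) (hatom : ∀ a : ℝ, μ {a} = 0)
    {A B : Finset ι} {e₀ : ι} (he₀A : e₀ ∈ A) (he₀B : e₀ ∉ B) :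
    ∀ᵐ ω ∂P, (∑ e ∈ A, f e ω) ≠ ∑ e ∈ B, f e ω := by
  classical
  set T : Finset ι := (A ∪ B).erase e₀ with hT
  have he₀T : e₀ ∉ T := Finset.notMem_erase _ _
  have hdisj : Disjoint ({e₀} : Finset ι) T := by
    simp [Finset.disjoint_singleton_left, he₀T]
  have hIF := hindep.indepFun_finset {e₀} T hdisj hf
  set ψ : (↥T → ℝ) → ℝ := fun v => (∑ i : ↥T, if (i : ι) ∈ B then v i else 0)
      - ∑ i : ↥T, if (i : ι) ∈ A then v i else 0 with hψdef
  have hφ : Measurable (fun v : (↥({e₀} : Finset ι) → ℝ) =>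
      v ⟨e₀, Finset.mem_singleton_self e₀⟩) := measurable_pi_apply _
  have hψ : Measurable ψ := by
    refine Measurable.sub ?_ ?_
    · refine Finset.measurable_sum _ fun i _ => ?_
      by_cases h : (i : ι) ∈ B
      · simpa [h] using measurable_pi_apply (X := fun _ : ↥T => ℝ) i
      · simp [h]
    · refine Finset.measurable_sum _ fun i _ => ?_
      by_cases h : (i : ι) ∈ A
      · simpa [h] using measurable_pi_apply (X := fun _ : ↥T => ℝ) i
      · simp [h]
  set Z : Ω → ℝ := fun ω => ψ (fun i : ↥T => f i ω) with hZdef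
  have hXZ : IndepFun (f e₀) Z P := hIF.comp hφ hψ
  have hTB : T ∩ B = B := by
    ext e
    simp only [hT, Finset.mem_inter, Finset.mem_erase, Finset.mem_union]
    constructor
    · tauto
    · intro he
      exact ⟨⟨fun h => he₀B (h ▸ he), Or.inr he⟩, he⟩
  have hTA : T ∩ A = A.erase e₀ := by
    ext e
    simp only [hT, Finset.mem_inter, Finset.mem_erase, Finset.mem_union]
    constructor
    · tauto
    · intro he
      exact ⟨⟨he.1, Or.inl he.2⟩, he.2⟩
  have hZval : ∀ ω, Z ω = (∑ e ∈ B, f e ω) - ∑ e ∈ A.erase e₀, f e ω := by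
    intro ω
    have h1 : (∑ i : ↥T, if (i : ι) ∈ B then f i ω else 0) = ∑ e ∈ B, f e ω := by
      rw [Finset.sum_coe_sort T (fun e => if e ∈ B then f e ω else 0), Finset.sum_ite_mem, hTB]
    have h2 : (∑ i : ↥T, if (i : ι) ∈ A then f i ω else 0) = ∑ e ∈ A.erase e₀, f e ω := by
      rw [Finset.sum_coe_sort T (fun e => if e ∈ A then f e ω else 0), Finset.sum_ite_mem, hTA]
    show (∑ i : ↥T, if (i : ι) ∈ B then f i ω else 0)
        - (∑ i : ↥T, if (i : ι) ∈ A then f i ω else 0)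
        = (∑ e ∈ B, f e ω) - ∑ e ∈ A.erase e₀, f e ω
    rw [h1, h2]
  have hZm : Measurable Z := hψ.comp (measurable_pi_lambda _ fun i => hf i)
  have hmap : P.map (fun ω => (Z ω, f e₀ ω)) = (P.map Z).prod (P.map (f e₀)) :=
    (indepFun_iff_map_prod_eq_prod_map_map hZm.aemeasurable (hf e₀).aemeasurable).mp hXZ.symm
  have hD : MeasurableSet {p : ℝ × ℝ | p.2 = p.1} :=
    measurableSet_eq_fun measurable_snd measurable_fst
  have h0 : P {ω | f e₀ ω = Z ω} = 0 := by
    have hpre : {ω | f e₀ ω = Z ω}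
        = (fun ω => (Z ω, f e₀ ω)) ⁻¹' {p : ℝ × ℝ | p.2 = p.1} := rfl
    have hsl : ∀ z : ℝ, (Prod.mk z ⁻¹' {p : ℝ × ℝ | p.2 = p.1}) = {z} := by
      intro z
      ext w
      simp [eq_comm]
    have hz : ∀ z : ℝ, P.map (f e₀) {z} = 0 := fun z => by rw [hdist e₀]; exact hatom z
    rw [hpre, ← Measure.map_apply (hZm.prodMk (hf e₀)) hD, hmap, Measure.prod_apply hD]
    simp only [hsl, hz, lintegral_zero]
  have hsub : {ω | (∑ e ∈ A, f e ω) = ∑ e ∈ B, f e ω} ⊆ {ω | f e₀ ω = Z ω} := by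
    intro ω hω
    have h3 : f e₀ ω + ∑ e ∈ A.erase e₀, f e ω = ∑ e ∈ A, f e ω :=
      Finset.add_sum_erase A (fun e => f e ω) he₀A
    have h4 : (∑ e ∈ A, f e ω) = ∑ e ∈ B, f e ω := hω
    rw [Set.mem_setOf_eq, hZval ω]
    linarith
  have h5 : P {ω | (∑ e ∈ A, f e ω) = ∑ e ∈ B, f e ω} = 0 := measure_mono_null hsub h0
  rw [ae_iff]
  convert h5 using 2
  simp [not_not]

lemma ae_sum_ne {ι : Type*} {f : ι → Ω → ℝ} (hf : ∀ i, Measurable (f i))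
    (hindep : iIndepFun f P)
    (hdist : ∀ i, P.map (f i) = μ) (hatom : ∀ a : ℝ, μ {a} = 0)
    {A B : Finset ι} (hAB : A ≠ B) :
    ∀ᵐ ω ∂P, (∑ e ∈ A, f e ω) ≠ ∑ e ∈ B, f e ω := by
  classical
  by_cases hex : ∃ e₀, e₀ ∈ A ∧ e₀ ∉ B
  · obtain ⟨e₀, h1, h2⟩ := hex
    exact ae_sum_ne_aux hf hindep hdist hatom h1 h2
  · push_neg at hex
    have hex2 : ∃ e₀, e₀ ∈ B ∧ e₀ ∉ A := by
      by_contra h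
      push_neg at h
      exact hAB (Finset.ext fun e => ⟨fun he => hex e he, fun he => h e he⟩)
    obtain ⟨e₀, h1, h2⟩ := hex2
    filter_upwards [ae_sum_ne_aux hf hindep hdist hatom h1 h2] with ω hω
    exact fun heq => hω heq.symm

end Distinct

section Unique
variable {G : Type*} [Group G] {S : Finset G}
open scoped Classical

lemma edges_inj {p : ℕ → G × ℕ} {k : ℕ}
    (hinj : ∀ i ≤ k, ∀ j ≤ k, i < j → p i ≠ p j) :
    ∀ i < k, ∀ j < k, s(p i, p (i + 1)) = s(p j, p (j + 1)) → i = j := by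
  have key : ∀ i j, i < j → j < k → s(p i, p (i + 1)) = s(p j, p (j + 1)) → False := by
    intro i j hij hjk he
    rw [Sym2.eq_iff] at he
    rcases he with ⟨h1, h2⟩ | ⟨h1, h2⟩
    · exact hinj i (by omega) j (by omega) hij h1
    · exact hinj i (by omega) (j + 1) (by omega) (by omega) h1
  intro i hi j hj he
  by_contra hne
  rcases Nat.lt_trichotomy i j with h | h | h
  · exact key i j h hj he
  · exact hne h
  · exact key j i h hi he.symm

lemma erase_first_edge {p : ℕ → G × ℕ} {n : ℕ}
    (hinj : ∀ i ≤ n + 1, ∀ j ≤ n + 1, i < j → p i ≠ p j) :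
    ((Finset.range (n + 1)).image (fun t => s(p t, p (t + 1)))).erase (s(p 0, p 1))
      = (Finset.range n).image (fun t => s(p (t + 1), p (t + 2))) := by
  classical
  have hedge := edges_inj hinj
  ext e
  simp only [Finset.mem_erase, Finset.mem_image, Finset.mem_range]
  constructor
  · rintro ⟨hne, t, ht, rfl⟩
    have ht0 : t ≠ 0 := by
      intro h
      subst h
      exact hne rfl
    refine ⟨t - 1, by omega, ?_⟩
    have e1 : t - 1 + 1 = t := by omega
    have e2 : t - 1 + 2 = t + 1 := by omega
    rw [e1, e2]
  · rintro ⟨t, ht, rfl⟩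
    refine ⟨?_, t + 1, by omega, rfl⟩
    intro he
    have := hedge (t + 1) (by omega) 0 (by omega) he
    omega

lemma same_endpoint : ∀ (n : ℕ) (p q : ℕ → G × ℕ) (l : ℕ),
    (∀ i ≤ n, ∀ j ≤ n, i < j → p i ≠ p j) → (∀ i ≤ l, ∀ j ≤ l, i < j → q i ≠ q j) →
    p 0 = q 0 →
    (Finset.range n).image (fun t => s(p t, p (t + 1)))
      = (Finset.range l).image (fun t => s(q t, q (t + 1))) →
    p n = q l := by
  classical
  intro n
  induction n with
  | zero =>
    intro p q l hip hiq h0 hE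
    have hempty : (Finset.range l).image (fun t => s(q t, q (t + 1))) = ∅ := by
      rw [← hE]
      simp
    have hl : l = 0 := by
      by_contra h
      have h1 : s(q 0, q 1) ∈ (Finset.range l).image (fun t => s(q t, q (t + 1))) :=
        Finset.mem_image_of_mem _ (Finset.mem_range.mpr (by omega))
      rw [hempty] at h1
      simp at h1
    subst hl
    exact h0
  | succ n ih =>
    intro p q l hip hiq h0 hE
    rcases Nat.eq_zero_or_pos l with hl | hl
    · subst hl
      exfalso
      have h1 : s(p 0, p 1) ∈ (Finset.range (n + 1)).image (fun t => s(p t, p (t + 1))) :=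
        Finset.mem_image_of_mem _ (Finset.mem_range.mpr (by omega))
      rw [hE] at h1
      simp at h1
    obtain ⟨l', rfl⟩ : ∃ l', l = l' + 1 := ⟨l - 1, by omega⟩
    have h1 : s(p 0, p 1) ∈ (Finset.range (l' + 1)).image (fun t => s(q t, q (t + 1))) := by
      rw [← hE]
      exact Finset.mem_image_of_mem _ (Finset.mem_range.mpr (by omega))
    obtain ⟨t, ht, hte⟩ := Finset.mem_image.mp h1
    rw [Finset.mem_range] at ht
    rw [Sym2.eq_iff] at hte
    have hq1 : q 1 = p 1 := by
      rcases hte with ⟨ha, hb⟩ | ⟨ha, hb⟩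
      · have ht0 : t = 0 := by
          by_contra htne
          exact hiq 0 (by omega) t (by omega) (by omega) (h0 ▸ ha.symm)
        rw [ht0] at hb
        exact hb
      · exfalso
        exact hiq 0 (by omega) (t + 1) (by omega) (by omega) (h0 ▸ hb.symm)
    have hfe : s(q 0, q 1) = s(p 0, p 1) := by
      rw [← h0, hq1]
    have hE' := congrArg (fun s0 => Finset.erase s0 (s(p 0, p 1))) hE
    rw [erase_first_edge hip, ← hfe, erase_first_edge hiq] at hE'
    have := ih (fun s0 => p (s0 + 1)) (fun s0 => q (s0 + 1)) l'
      (fun i hi j hj hij => hip (i + 1) (by omega) (j + 1) (by omega) (by omega))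
      (fun i hi j hj hij => hiq (i + 1) (by omega) (j + 1) (by omega) (by omega))
      hq1.symm hE'
    exact this

lemma attach_image_eq {β γ : Type*} [DecidableEq γ] {s : Finset β} {F : β → γ} :
    s.attach.image (fun t => F t.1) = s.image F := by
  ext e
  simp only [Finset.mem_image, Finset.mem_attach, true_and, Subtype.exists]
  constructor
  · rintro ⟨a, ha, rfl⟩
    exact ⟨a, ha, rfl⟩
  · rintro ⟨a, ha, rfl⟩
    exact ⟨a, ha, rfl⟩

lemma TU_endpoint_unique {W : Sym2 (G × ℕ) → ℝ}
    (hpos : ∀ u v : G × ℕ, adjU S u v → 0 < W s(u, v))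
    (hdist : ∀ A B : Finset {e : Sym2 (G × ℕ) // IsEdgeU S e}, A ≠ B →
      (∑ e ∈ A, W e.val) ≠ ∑ e ∈ B, W e.val)
    {u : G × ℕ} {y₁ y₂ : G} (h1 : u ∈ TU S W y₁) (h2 : u ∈ TU S W y₂) : y₁ = y₂ := by
  classical
  by_contra hne
  obtain ⟨n, p, hp0, hpn, hpadj, hpw⟩ := h1
  obtain ⟨l, q, hq0, hql, hqadj, hqw⟩ := h2
  rw [dU_eq S W u] at hpw hqw
  have hinjp : ∀ i ≤ n, ∀ j ≤ n, i < j → p i ≠ p j :=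
    geodesic_inj (V := Set.univ) hpos hp0 (by rw [hpn]) (fun _ _ => trivial) hpadj hpw
  have hinjq : ∀ i ≤ l, ∀ j ≤ l, i < j → q i ≠ q j :=
    geodesic_inj (V := Set.univ) hpos hq0 (by rw [hql]) (fun _ _ => trivial) hqadj hqw
  have hend : p n ≠ q l := by
    rw [hpn, hql]
    intro h
    exact hne (congrArg Prod.fst h)
  have hSym2ne : (Finset.range n).image (fun t => s(p t, p (t + 1)))
      ≠ (Finset.range l).image (fun t => s(q t, q (t + 1))) := by
    intro hEq
    exact hend (same_endpoint n p q l hinjp hinjq (hp0.trans hq0.symm) hEq)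
  set EA : Finset {e : Sym2 (G × ℕ) // IsEdgeU S e} :=
    (Finset.range n).attach.image (fun t => ⟨s(p t.1, p (t.1 + 1)),
      ⟨_, _, rfl, hpadj t.1 (Finset.mem_range.mp t.2)⟩⟩) with hEA
  set EB : Finset {e : Sym2 (G × ℕ) // IsEdgeU S e} :=
    (Finset.range l).attach.image (fun t => ⟨s(q t.1, q (t.1 + 1)),
      ⟨_, _, rfl, hqadj t.1 (Finset.mem_range.mp t.2)⟩⟩) with hEB
  have hinjFA : ∀ a ∈ (Finset.range n).attach, ∀ b ∈ (Finset.range n).attach,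
      (⟨s(p a.1, p (a.1 + 1)), ⟨_, _, rfl, hpadj a.1 (Finset.mem_range.mp a.2)⟩⟩
        : {e : Sym2 (G × ℕ) // IsEdgeU S e})
      = ⟨s(p b.1, p (b.1 + 1)), ⟨_, _, rfl, hpadj b.1 (Finset.mem_range.mp b.2)⟩⟩ → a = b := by
    intro a _ b _ hab
    have h3 : s(p a.1, p (a.1 + 1)) = s(p b.1, p (b.1 + 1)) := congrArg Subtype.val hab
    exact Subtype.ext (edges_inj hinjp a.1 (Finset.mem_range.mp a.2) b.1
      (Finset.mem_range.mp b.2) h3)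
  have hinjFB : ∀ a ∈ (Finset.range l).attach, ∀ b ∈ (Finset.range l).attach,
      (⟨s(q a.1, q (a.1 + 1)), ⟨_, _, rfl, hqadj a.1 (Finset.mem_range.mp a.2)⟩⟩
        : {e : Sym2 (G × ℕ) // IsEdgeU S e})
      = ⟨s(q b.1, q (b.1 + 1)), ⟨_, _, rfl, hqadj b.1 (Finset.mem_range.mp b.2)⟩⟩ → a = b := by
    intro a _ b _ hab
    have h3 : s(q a.1, q (a.1 + 1)) = s(q b.1, q (b.1 + 1)) := congrArg Subtype.val hab
    exact Subtype.ext (edges_inj hinjq a.1 (Finset.mem_range.mp a.2) b.1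
      (Finset.mem_range.mp b.2) h3)
  have hsumA : ∑ e ∈ EA, W e.val = wtU W p n := by
    rw [hEA, Finset.sum_image hinjFA]
    exact Finset.sum_attach (Finset.range n) (fun t => W s(p t, p (t + 1)))
  have hsumB : ∑ e ∈ EB, W e.val = wtU W q l := by
    rw [hEB, Finset.sum_image hinjFB]
    exact Finset.sum_attach (Finset.range l) (fun t => W s(q t, q (t + 1)))
  have hEAne : EA ≠ EB := by
    intro hEq
    apply hSym2ne
    have hiA : EA.image Subtype.val = (Finset.range n).image (fun t => s(p t, p (t + 1))) := by
      rw [hEA, Finset.image_image]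
      exact attach_image_eq (F := fun t => s(p t, p (t + 1)))
    have hiB : EB.image Subtype.val = (Finset.range l).image (fun t => s(q t, q (t + 1))) := by
      rw [hEB, Finset.image_image]
      exact attach_image_eq (F := fun t => s(q t, q (t + 1)))
    rw [← hiA, ← hiB, hEq]
  exact hdist EA EB hEAne (by rw [hsumA, hsumB, hpw, hqw])

end Unique

section MTP
open scoped Classical
variable {G : Type*} [Group G] [Countable G] {S : Finset G}
variable {Ω : Type*} [MeasureSpace Ω] [IsProbabilityMeasure (ℙ : Measure Ω)]
variable {μ : Measure ℝ} [IsProbabilityMeasure μ]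

/-- Extend an edge configuration by zero. -/
noncomputable def extW (S : Finset G) (c : {e : Sym2 (G × ℕ) // IsEdgeU S e} → ℝ) :
    Sym2 (G × ℕ) → ℝ := fun e => if h : IsEdgeU S e then c ⟨e, h⟩ else 0

lemma extW_meas : ∀ e, IsEdgeU S e → Measurable (fun c : {e : Sym2 (G × ℕ) // IsEdgeU S e} → ℝ
    => extW S c e) := by
  intro e he
  have : (fun c : {e : Sym2 (G × ℕ) // IsEdgeU S e} → ℝ => extW S c e)
      = fun c => c ⟨e, he⟩ := by
    funext c
    simp only [extW, dif_pos he]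
  rw [this]
  exact measurable_pi_apply _

lemma extW_edge (c : {e : Sym2 (G × ℕ) // IsEdgeU S e} → ℝ) {e : Sym2 (G × ℕ)}
    (he : IsEdgeU S e) : extW S c e = c ⟨e, he⟩ := by
  unfold extW
  rw [dif_pos he]

/-- The group-shift bijection on edges. -/
def σE (S : Finset G) (g : G) :
    {e : Sym2 (G × ℕ) // IsEdgeU S e} ≃ {e : Sym2 (G × ℕ) // IsEdgeU S e} where
  toFun e := ⟨Sym2.map (φm g) e.1, (isEdgeU_map g e.1).mpr e.2⟩
  invFun e := ⟨Sym2.map (φm g⁻¹) e.1, (isEdgeU_map g⁻¹ e.1).mpr e.2⟩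
  left_inv e := by
    apply Subtype.ext
    show Sym2.map (φm g⁻¹) (Sym2.map (φm g) e.1) = e.1
    rw [Sym2.map_map]
    have hc : φm g⁻¹ ∘ φm g = id := funext fun u => φm_comp_inv g u
    rw [hc, Sym2.map_id, id_eq]
  right_inv e := by
    apply Subtype.ext
    show Sym2.map (φm g) (Sym2.map (φm g⁻¹) e.1) = e.1
    rw [Sym2.map_map]
    have hc : φm g ∘ φm g⁻¹ = id := funext fun u => by simpa using φm_comp_inv g⁻¹ u
    rw [hc, Sym2.map_id, id_eq]

def Bset (S : Finset G) (m : ℕ) (a b : G) : Set ({e : Sym2 (G × ℕ) // IsEdgeU S e} → ℝ) :=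
  {c | (b, m) ∈ TU S (extW S c) a}

lemma Bset_meas (m : ℕ) (a b : G) : MeasurableSet (Bset S m a b) :=
  measurableSet_TUmem (Wf := fun e c => extW S c e) extW_meas a (b, m)

lemma Bset_equiv (g : G) (m : ℕ) (a b : G) :
    Bset S m (g * a) (g * b) = (fun c e => c (σE S g e)) ⁻¹' Bset S m a b := by
  ext c
  show (g * b, m) ∈ TU S (extW S c) (g * a) ↔ (b, m) ∈ TU S (extW S fun e => c (σE S g e)) a
  rw [TU_map_iff g (extW S c) a b m]
  have hcong : ∀ e, IsEdgeU S e →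
      extW S c (Sym2.map (φm g) e) = extW S (fun e' => c (σE S g e')) e := by
    intro e he
    rw [extW_edge c ((isEdgeU_map g e).mpr he), extW_edge _ he]
    rfl
  constructor
  · intro h
    have := TU_congr (W := fun e => extW S c (Sym2.map (φm g) e))
      (W' := extW S fun e' => c (σE S g e')) hcong a
    rw [← this]
    exact h
  · intro h
    have := TU_congr (W := fun e => extW S c (Sym2.map (φm g) e))
      (W' := extW S fun e' => c (σE S g e')) hcong a
    rw [this]
    exact h

lemma ae_posU (hatom : ∀ a : ℝ, μ {a} = 0) (hsupp : μ (Set.Iio 0) = 0)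
    (WU : Sym2 (G × ℕ) → Ω → ℝ) (hWUmeas : ∀ e, Measurable (WU e))
    (hWUdist : ∀ e : {e : Sym2 (G × ℕ) // IsEdgeU S e}, Measure.map (WU e.val) ℙ = μ) :
    ∀ᵐ ω ∂ℙ, ∀ u v : G × ℕ, adjU S u v → 0 < WU s(u, v) ω := by
  have h1 : ∀ᵐ ω ∂ℙ, ∀ e : {e : Sym2 (G × ℕ) // IsEdgeU S e}, 0 < WU e.val ω := by
    rw [ae_all_iff]
    intro e
    rw [ae_iff]
    have h2 : {ω | ¬ 0 < WU e.val ω} = WU e.val ⁻¹' (Set.Iic 0) := by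
      ext ω
      simp [not_lt]
    rw [h2, ← Measure.map_apply (hWUmeas e.val) measurableSet_Iic, hWUdist e,
      ← Set.Iio_union_right]
    exact measure_union_null hsupp (hatom 0)
  filter_upwards [h1] with ω hω u v hadj
  exact hω ⟨s(u, v), ⟨u, v, rfl, hadj⟩⟩

lemma ae_distinctU (hatom : ∀ a : ℝ, μ {a} = 0)
    (WU : Sym2 (G × ℕ) → Ω → ℝ) (hWUmeas : ∀ e, Measurable (WU e))
    (hWUindep : iIndepFun (fun e : {e : Sym2 (G × ℕ) // IsEdgeU S e} => WU e.val) ℙ)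
    (hWUdist : ∀ e : {e : Sym2 (G × ℕ) // IsEdgeU S e}, Measure.map (WU e.val) ℙ = μ) :
    ∀ᵐ ω ∂ℙ, ∀ A B : Finset {e : Sym2 (G × ℕ) // IsEdgeU S e}, A ≠ B →
      (∑ e ∈ A, WU e.val ω) ≠ ∑ e ∈ B, WU e.val ω := by
  rw [ae_all_iff]
  intro A
  rw [ae_all_iff]
  intro B
  by_cases hAB : A = B
  · exact Filter.Eventually.of_forall fun ω h => absurd hAB h
  · filter_upwards [ae_sum_ne (P := ℙ) (μ := μ) (fun e => hWUmeas e.val) hWUindep hWUdist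
      hatom hAB] with ω hω
    exact fun _ => hω

lemma tsum_indicator_infinite {β : Type*} {s : Set β} (hs : s.Infinite) :
    ∑' b, s.indicator (fun _ => (1 : ℝ≥0∞)) b = ⊤ := by
  rw [← tsum_subtype]
  haveI := hs.to_subtype
  exact ENNReal.tsum_const_eq_top_of_ne_zero one_ne_zero

lemma ae_level_finite (hatom : ∀ a : ℝ, μ {a} = 0) (hsupp : μ (Set.Iio 0) = 0)
    (WU : Sym2 (G × ℕ) → Ω → ℝ) (hWUmeas : ∀ e, Measurable (WU e))
    (hWUindep : iIndepFun (fun e : {e : Sym2 (G × ℕ) // IsEdgeU S e} => WU e.val) ℙ)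
    (hWUdist : ∀ e : {e : Sym2 (G × ℕ) // IsEdgeU S e}, Measure.map (WU e.val) ℙ = μ)
    (x : G) :
    ∀ᵐ ω ∂ℙ, ∀ m : ℕ, {y : G | (y, m) ∈ TU S (fun e => WU e ω) x}.Finite := by
  rw [ae_all_iff]
  intro m
  set X : Ω → ({e : Sym2 (G × ℕ) // IsEdgeU S e} → ℝ) := fun ω e => WU e.val ω with hXdef
  have hX : Measurable X := measurable_pi_lambda _ fun e => hWUmeas e.val
  have hXB : ∀ a b : G, X ⁻¹' Bset S m a b = {ω | (b, m) ∈ TU S (fun e => WU e ω) a} := by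
    intro a b
    ext ω
    show (b, m) ∈ TU S (extW S (X ω)) a ↔ (b, m) ∈ TU S (fun e => WU e ω) a
    rw [TU_congr (W := extW S (X ω)) (W' := fun e => WU e ω)
      (fun e he => extW_edge (X ω) he) a]
  set F : G → G → ℝ≥0∞ := fun a b => ℙ (X ⁻¹' Bset S m a b) with hFdef
  have hmeasAB : ∀ a b : G, MeasurableSet (X ⁻¹' Bset S m a b) :=
    fun a b => hX (Bset_meas m a b)
  have hinv : ∀ g a b : G, F (g * a) (g * b) = F a b := by
    intro g a b
    have h1 : X ⁻¹' Bset S m (g * a) (g * b)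
        = (fun ω => (fun e => WU ((σE S g e)).val ω)) ⁻¹' Bset S m a b := by
      rw [Bset_equiv g m a b]
      rfl
    have hX' : Measurable (fun ω => (fun e => WU ((σE S g e)).val ω)) :=
      measurable_pi_lambda _ fun e => hWUmeas _
    have hlaw : Measure.map (fun ω => (fun e => WU ((σE S g e)).val ω)) ℙ = Measure.map X ℙ :=
      law_eq (μ := μ) (fun e => hWUmeas _) (fun e => hWUmeas e.val)
        (iIndepFun_reindex (σE S g) hWUindep) hWUindep
        (fun e => hWUdist _) hWUdist
    show ℙ (X ⁻¹' Bset S m (g * a) (g * b)) = ℙ (X ⁻¹' Bset S m a b)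
    rw [h1, ← Measure.map_apply hX' (Bset_meas m a b), hlaw,
      Measure.map_apply hX (Bset_meas m a b)]
  have hsum1 : ∑' b, F x b = ∑' z, F 1 z := by
    have h1 : ∀ b, F x b = F 1 (x⁻¹ * b) := by
      intro b
      have := hinv x⁻¹ x b
      rw [inv_mul_cancel] at this
      exact this.symm
    rw [tsum_congr h1]
    exact Equiv.tsum_eq (Equiv.mulLeft x⁻¹) (fun z => F 1 z)
  have hsum2 : ∑' b, F b x = ∑' z, F 1 z := by
    have h1 : ∀ b, F b x = F 1 (b⁻¹ * x) := by
      intro b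
      have := hinv b⁻¹ b x
      rw [inv_mul_cancel] at this
      exact this.symm
    rw [tsum_congr h1]
    exact Equiv.tsum_eq ((Equiv.inv G).trans (Equiv.mulRight x)) (fun z => F 1 z)
  have hbound : ∑' b, F b x ≤ 1 := by
    have hrw : ∀ b : G, F b x
        = ∫⁻ ω, (X ⁻¹' Bset S m b x).indicator (fun _ => (1 : ℝ≥0∞)) ω ∂ℙ :=
      fun b => (lintegral_indicator_one (hmeasAB b x)).symm
    rw [tsum_congr hrw, ← lintegral_tsum (fun b =>
      ((measurable_const.indicator (hmeasAB b x)).aemeasurable))]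
    have hae : ∀ᵐ ω ∂ℙ,
        (∑' b, (X ⁻¹' Bset S m b x).indicator (fun _ => (1 : ℝ≥0∞)) ω) ≤ 1 := by
      filter_upwards [ae_posU hatom hsupp WU hWUmeas hWUdist,
        ae_distinctU hatom WU hWUmeas hWUindep hWUdist] with ω hpos hdist
      have huniq : ∀ b₁ b₂ : G, ω ∈ X ⁻¹' Bset S m b₁ x → ω ∈ X ⁻¹' Bset S m b₂ x →
          b₁ = b₂ := by
        intro b₁ b₂ hb₁ hb₂
        rw [hXB b₁ x] at hb₁
        rw [hXB b₂ x] at hb₂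
        exact TU_endpoint_unique (fun u v h => hpos u v h) (fun A B hAB => hdist A B hAB)
          hb₁ hb₂
      by_cases hex : ∃ b₀, ω ∈ X ⁻¹' Bset S m b₀ x
      · obtain ⟨b₀, hb₀⟩ := hex
        have hle : ∀ b, (X ⁻¹' Bset S m b x).indicator (fun _ => (1 : ℝ≥0∞)) ω
            ≤ if b = b₀ then 1 else 0 := by
          intro b
          rw [Set.indicator_apply]
          by_cases hb : ω ∈ X ⁻¹' Bset S m b x
          · rw [if_pos hb, if_pos (huniq b b₀ hb hb₀)]
          · rw [if_neg hb]
            exact zero_le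
        calc ∑' b, (X ⁻¹' Bset S m b x).indicator (fun _ => (1 : ℝ≥0∞)) ω
            ≤ ∑' b, if b = b₀ then (1 : ℝ≥0∞) else 0 := ENNReal.tsum_le_tsum hle
          _ = 1 := tsum_ite_eq b₀ 1
      · push_neg at hex
        have : ∀ b, (X ⁻¹' Bset S m b x).indicator (fun _ => (1 : ℝ≥0∞)) ω = 0 := by
          intro b
          rw [Set.indicator_apply, if_neg (hex b)]
        rw [tsum_congr this]
        simp
    calc ∫⁻ ω, (∑' b, (X ⁻¹' Bset S m b x).indicator (fun _ => (1 : ℝ≥0∞)) ω) ∂ℙ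
        ≤ ∫⁻ _, 1 ∂ℙ := lintegral_mono_ae hae
      _ = 1 := by simp
  have hfin : (∑' b, F x b) ≠ ⊤ := by
    rw [hsum1, ← hsum2]
    exact (lt_of_le_of_lt hbound ENNReal.one_lt_top).ne
  have hint : (∫⁻ ω, ∑' b, (X ⁻¹' Bset S m x b).indicator (fun _ => (1 : ℝ≥0∞)) ω ∂ℙ) ≠ ⊤ := by
    rw [lintegral_tsum (fun b => ((measurable_const.indicator (hmeasAB x b)).aemeasurable))]
    have : ∀ b : G, (∫⁻ ω, (X ⁻¹' Bset S m x b).indicator (fun _ => (1 : ℝ≥0∞)) ω ∂ℙ) = F x b :=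
      fun b => lintegral_indicator_one (hmeasAB x b)
    rw [tsum_congr this]
    exact hfin
  have hmeas2 : Measurable fun ω => ∑' b, (X ⁻¹' Bset S m x b).indicator
      (fun _ => (1 : ℝ≥0∞)) ω :=
    Measurable.ennreal_tsum fun b => measurable_const.indicator (hmeasAB x b)
  filter_upwards [ae_lt_top hmeas2 hint] with ω hω
  by_contra hinf
  have h1 : ∀ b : G, (X ⁻¹' Bset S m x b).indicator (fun _ => (1 : ℝ≥0∞)) ω
      = {y : G | (y, m) ∈ TU S (fun e => WU e ω) x}.indicator (fun _ => (1 : ℝ≥0∞)) b := by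
    intro b
    rw [Set.indicator_apply, Set.indicator_apply]
    have : ω ∈ X ⁻¹' Bset S m x b ↔ b ∈ {y : G | (y, m) ∈ TU S (fun e => WU e ω) x} := by
      rw [hXB x b]
      rfl
    by_cases hb : ω ∈ X ⁻¹' Bset S m x b
    · rw [if_pos hb, if_pos (this.mp hb)]
    · rw [if_neg hb, if_neg (fun hc => hb (this.mpr hc))]
  rw [tsum_congr h1, tsum_indicator_infinite hinf] at hω
  exact absurd hω (lt_irrefl ⊤)

end MTP


section Final
variable {G : Type*} [Group G] [Countable G] {S : Finset G}
variable {Ω : Type*} [MeasureSpace Ω] [IsProbabilityMeasure (ℙ : Measure Ω)]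
variable {μ : Measure ℝ} [IsProbabilityMeasure μ]

lemma ae_posD (hatom : ∀ a : ℝ, μ {a} = 0) (hsupp : μ (Set.Iio 0) = 0)
    (WD : (G × ℕ) × (G × ℕ) → Ω → ℝ) (hWDmeas : ∀ e, Measurable (WD e))
    (hWDdist : ∀ e : {e : (G × ℕ) × (G × ℕ) // adjD S e.1 e.2},
      Measure.map (WD e.val) ℙ = μ) :
    ∀ᵐ ω ∂ℙ, ∀ u v : G × ℕ, adjD S u v → 0 < WD (u, v) ω := by
  have h1 : ∀ᵐ ω ∂ℙ, ∀ e : {e : (G × ℕ) × (G × ℕ) // adjD S e.1 e.2}, 0 < WD e.val ω := by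
    rw [ae_all_iff]
    intro e
    rw [ae_iff]
    have h2 : {ω | ¬ 0 < WD e.val ω} = WD e.val ⁻¹' (Set.Iic 0) := by
      ext ω
      simp [not_lt]
    rw [h2, ← Measure.map_apply (hWDmeas e.val) measurableSet_Iic, hWDdist e,
      ← Set.Iio_union_right]
    exact measure_union_null hsupp (hatom 0)
  filter_upwards [h1] with ω hω u v hadj
  exact hω ⟨(u, v), hadj⟩

end Final
end EdenAux

/-- Lemma 2.5 of "Stationary Eden Model on groups": in both the directed and
the undirected model, almost surely, if the `n`-th level set `Tⁿ(x)` is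
nonempty then `Tᵐ(x)` is nonempty for all `1 ≤ m ≤ n`; moreover, almost surely
the tree `T(x)` is infinite if and only if `Tⁿ(x) ≠ ∅` for all `n ≥ 1`. -/
theorem stationary_eden_tree_levels
    {G : Type*} [Group G] [Countable G] (S : Finset G)
    (hSsym : ∀ s ∈ S, s⁻¹ ∈ S) (hS1 : (1 : G) ∉ S)
    (hSgen : Subgroup.closure (S : Set G) = ⊤)
    {Ω : Type*} [MeasureSpace Ω] [IsProbabilityMeasure (ℙ : Measure Ω)]
    (μ : Measure ℝ) [IsProbabilityMeasure μ]
    (hatom : ∀ a : ℝ, μ {a} = 0) (hsupp : μ (Set.Iio 0) = 0)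
    (hmean : Integrable id μ)
    (WD : (G × ℕ) × (G × ℕ) → Ω → ℝ) (hWDmeas : ∀ e, Measurable (WD e))
    (hWDindep : iIndepFun (fun e : {e : (G × ℕ) × (G × ℕ) // adjD S e.1 e.2} => WD e.val) ℙ)
    (hWDdist : ∀ e : {e : (G × ℕ) × (G × ℕ) // adjD S e.1 e.2},
      Measure.map (WD e.val) ℙ = μ)
    (WU : Sym2 (G × ℕ) → Ω → ℝ) (hWUmeas : ∀ e, Measurable (WU e))
    (hWUindep : iIndepFun (fun e : {e : Sym2 (G × ℕ) // IsEdgeU S e} => WU e.val) ℙ)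
    (hWUdist : ∀ e : {e : Sym2 (G × ℕ) // IsEdgeU S e},
      Measure.map (WU e.val) ℙ = μ)
    (x : G) :
    (∀ᵐ ω ∂ℙ,
      (∀ n m : ℕ, 1 ≤ m → m ≤ n →
        (TDn S (fun e => WD e ω) n x).Nonempty →
        (TDn S (fun e => WD e ω) m x).Nonempty) ∧
      ((TD S (fun e => WD e ω) x).Infinite ↔
        ∀ n : ℕ, 1 ≤ n → (TDn S (fun e => WD e ω) n x).Nonempty)) ∧
    (∀ᵐ ω ∂ℙ,
      (∀ n m : ℕ, 1 ≤ m → m ≤ n →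
        (TUn S (fun e => WU e ω) n x).Nonempty →
        (TUn S (fun e => WU e ω) m x).Nonempty) ∧
      ((TU S (fun e => WU e ω) x).Infinite ↔
        ∀ n : ℕ, 1 ≤ n → (TUn S (fun e => WU e ω) n x).Nonempty)) := by
  constructor
  · filter_upwards [EdenAux.ae_posD (μ := μ) hatom hsupp WD hWDmeas hWDdist] with ω hpos
    exact EdenAux.directed_main (fun u v h => hpos u v h) x
  · filter_upwards [EdenAux.ae_posU (μ := μ) hatom hsupp WU hWUmeas hWUdist,
      EdenAux.ae_level_finite (μ := μ) hatom hsupp WU hWUmeas hWUindep hWUdist x]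
      with ω hpos hfin
    refine ⟨EdenAux.undirected_mono (fun u v h => hpos u v h) x, ?_, ?_⟩
    · exact fun hinf => EdenAux.undirected_onlyIf (fun u v h => hpos u v h) x
        (fun m => hfin m) hinf
    · exact fun h => EdenAux.undirected_if hSsym (fun u v h => hpos u v h) x h
end
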